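/- arXiv:2004.05145 — 9 statements merged into one kernel-verified Lean document; each statement's English description precedes it below -/
import Mathlib

section
/- Every u ∈ [0,1] is the average of two real numbers each belonging to the middle-thirds Cantor set 𝒞; that is, for every u ∈ [0,1] there exist a, b ∈ 𝒞 with u = (a + b)/2. -/
/-- The middle-thirds Cantor set: all reals of the form `∑ tᵢ / 3^i` (`i ≥ 1`)
with each `tᵢ ∈ {0, 2}`. -/
def middleThirdsCantor : Set ℝ :=
  {x : ℝ | ∃ t : ℕ → ℝ, (∀ i, t i = 0 ∨ t i = 2) ∧ x = ∑' i : ℕ, t i / 3 ^ (i + 1)}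

noncomputable def cdig (y : ℝ) : ℝ := if y ≤ 2/3 then 0 else if y ≤ 4/3 then 2 else 4

noncomputable def crem (x : ℝ) : ℕ → ℝ
  | 0 => x
  | n+1 => 3 * crem x n - cdig (crem x n)

lemma cdig_mem (y : ℝ) : cdig y = 0 ∨ cdig y = 2 ∨ cdig y = 4 := by
  unfold cdig; split_ifs <;> simp

lemma crem_bounds {x : ℝ} (hx : x ∈ Set.Icc (0:ℝ) 2) (n : ℕ) :
    crem x n ∈ Set.Icc (0:ℝ) 2 := by
  induction n with
  | zero => exact hx
  | succ n ih =>
    obtain ⟨h0, h2⟩ := ih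
    simp only [crem, cdig, Set.mem_Icc]
    split_ifs with h1 h2' <;> constructor <;> nlinarith

lemma crem_eq (x : ℝ) (n : ℕ) :
    x = (∑ i ∈ Finset.range n, cdig (crem x i) / 3 ^ (i+1)) + crem x n / 3 ^ n := by
  induction n with
  | zero => simp [crem]
  | succ n ih =>
    rw [Finset.sum_range_succ]
    have h : crem x (n+1) = 3 * crem x n - cdig (crem x n) := rfl
    rw [h]
    nth_rewrite 1 [ih]
    have h3 : (3:ℝ)^(n+1) = 3 * 3^n := by ring
    field_simp
    ring

lemma summable_digits (c : ℕ → ℝ) (hc : ∀ i, |c i| ≤ 4) :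
    Summable (fun i => c i / 3 ^ (i+1)) := by
  apply Summable.of_norm
  have hs : Summable (fun i : ℕ => 4 * (1/3:ℝ) ^ i) :=
    (summable_geometric_of_lt_one (by norm_num) (by norm_num)).mul_left 4
  apply Summable.of_nonneg_of_le (fun i => norm_nonneg _) _ hs
  intro i
  rw [Real.norm_eq_abs, abs_div, abs_of_nonneg (by positivity : (0:ℝ) ≤ 3 ^ (i+1))]
  rw [div_le_iff₀ (by positivity)]
  calc |c i| ≤ 4 := hc i
    _ ≤ 4 * (1/3)^i * 3^(i+1) := by
        rw [pow_succ]
        have : (1/3:ℝ)^i * (3^i * 3) = 3 := by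
          rw [div_pow, one_pow]
          field_simp
        nlinarith [this]

lemma hasSum_digits {x : ℝ} (hx : x ∈ Set.Icc (0:ℝ) 2) :
    HasSum (fun i => cdig (crem x i) / 3 ^ (i+1)) x := by
  have hsum : Summable (fun i => cdig (crem x i) / 3 ^ (i+1)) := by
    apply summable_digits
    intro i
    rcases cdig_mem (crem x i) with h | h | h <;> rw [h] <;> norm_num
  rw [hsum.hasSum_iff_tendsto_nat]
  have heq : ∀ n, ∑ i ∈ Finset.range n, cdig (crem x i) / 3 ^ (i+1)
      = x - crem x n / 3 ^ n := by
    intro n; have := crem_eq x n; linarith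
  simp only [heq]
  have h0 : Filter.Tendsto (fun n : ℕ => crem x n / 3 ^ n) Filter.atTop (nhds 0) := by
    have hub : Filter.Tendsto (fun n : ℕ => 2 * (1/3:ℝ)^n) Filter.atTop (nhds 0) := by
      have := tendsto_pow_atTop_nhds_zero_of_lt_one (by norm_num : (0:ℝ) ≤ 1/3)
        (by norm_num : (1/3:ℝ) < 1)
      simpa using this.const_mul 2
    apply squeeze_zero (fun n => by
      have := (crem_bounds hx n).1; positivity) _ hub
    intro n
    have h2 := (crem_bounds hx n).2
    rw [div_le_iff₀ (by positivity : (0:ℝ) < 3^n)]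
    have : (1/3:ℝ)^n * 3^n = 1 := by
      rw [div_pow, one_pow]; field_simp
    nlinarith
  have := (tendsto_const_nhds (x := x) (f := Filter.atTop (α := ℕ))).sub h0
  simpa using this

theorem average_of_two_cantor_elements :
    ∀ u ∈ Set.Icc (0 : ℝ) 1,
      ∃ a ∈ middleThirdsCantor, ∃ b ∈ middleThirdsCantor, u = (a + b) / 2 := by
  intro u hu
  set x := 2 * u with hxdef
  have hx : x ∈ Set.Icc (0:ℝ) 2 := ⟨by linarith [hu.1], by linarith [hu.2]⟩
  set t : ℕ → ℝ := fun i => if cdig (crem x i) = 0 then 0 else 2 with ht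
  set s : ℕ → ℝ := fun i => if cdig (crem x i) = 4 then 2 else 0 with hs
  have htmem : ∀ i, t i = 0 ∨ t i = 2 := by
    intro i; simp only [ht]; split_ifs <;> simp
  have hsmem : ∀ i, s i = 0 ∨ s i = 2 := by
    intro i; simp only [hs]; split_ifs <;> simp
  have hts : ∀ i, t i + s i = cdig (crem x i) := by
    intro i
    rcases cdig_mem (crem x i) with h | h | h <;>
      simp [ht, hs, h] <;> norm_num
  have hsumt : Summable (fun i => t i / 3 ^ (i+1)) := by
    apply summable_digits; intro i
    rcases htmem i with h | h <;> rw [h] <;> norm_num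
  have hsums : Summable (fun i => s i / 3 ^ (i+1)) := by
    apply summable_digits; intro i
    rcases hsmem i with h | h <;> rw [h] <;> norm_num
  refine ⟨∑' i, t i / 3 ^ (i+1), ⟨t, htmem, rfl⟩, ∑' i, s i / 3 ^ (i+1), ⟨s, hsmem, rfl⟩, ?_⟩
  have hadd : (∑' i, t i / 3 ^ (i+1)) + (∑' i, s i / 3 ^ (i+1))
      = ∑' i, (t i / 3 ^ (i+1) + s i / 3 ^ (i+1)) := (Summable.tsum_add hsumt hsums).symm
  have heq : (fun i => t i / 3 ^ (i+1) + s i / 3 ^ (i+1))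
      = fun i => cdig (crem x i) / 3 ^ (i+1) := by
    funext i; rw [← hts i]; ring
  have hx2 : (∑' i, (t i / 3 ^ (i+1) + s i / 3 ^ (i+1))) = x := by
    rw [heq]; exact (hasSum_digits hx).tsum_eq
  rw [hadd, hx2]
  linarith
end

section
/- The sumset of the middle-thirds Cantor set with itself is the full interval: 𝒞 + 𝒞 = [0,2], where 𝒞 + 𝒞 = {a + b : a, b ∈ 𝒞}. -/
open Finset Filter

noncomputable def ternDigit (y : ℝ) : ℕ := min 2 (⌊3 * y⌋).toNat

noncomputable def ternRest (y : ℝ) : ℝ := 3 * y - ternDigit y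

lemma ternDigit_le (y : ℝ) : ternDigit y ≤ 2 := min_le_left _ _

lemma ternRest_mem {y : ℝ} (hy : y ∈ Set.Icc (0:ℝ) 1) :
    ternRest y ∈ Set.Icc (0:ℝ) 1 := by
  obtain ⟨h0, h1⟩ := hy
  have h3 : (0:ℝ) ≤ 3 * y := by linarith
  have h3' : 3 * y ≤ 3 := by linarith
  have hfl : (0:ℤ) ≤ ⌊3*y⌋ := Int.floor_nonneg.mpr h3
  unfold ternRest ternDigit
  rcases le_or_gt (⌊3*y⌋) 2 with h | h
  · have hmin : min 2 (⌊3*y⌋).toNat = (⌊3*y⌋).toNat := by omega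
    rw [hmin]
    have hcast : (((⌊3*y⌋).toNat : ℕ) : ℝ) = (⌊3*y⌋ : ℝ) := by
      exact_mod_cast Int.toNat_of_nonneg hfl
    rw [hcast]
    constructor
    · linarith [Int.floor_le (3*y)]
    · linarith [Int.lt_floor_add_one (3*y)]
  · have h3y : (3:ℝ) ≤ 3*y := by
      have h1' : ((3:ℤ):ℝ) ≤ (⌊3*y⌋ : ℝ) := by exact_mod_cast h
      have h2' := Int.floor_le (3*y)
      push_cast at h1'
      linarith
    have hy3 : 3*y = 3 := le_antisymm h3' h3y
    have hmin : min 2 (⌊3*y⌋).toNat = 2 := by omega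
    rw [hmin, hy3]
    norm_num

noncomputable def ternSeq (y : ℝ) (n : ℕ) : ℝ := (ternRest)^[n] y

noncomputable def ternD (y : ℝ) (n : ℕ) : ℕ := ternDigit (ternSeq y n)

lemma ternSeq_mem {y : ℝ} (hy : y ∈ Set.Icc (0:ℝ) 1) (n : ℕ) :
    ternSeq y n ∈ Set.Icc (0:ℝ) 1 := by
  induction n with
  | zero => simpa [ternSeq] using hy
  | succ n ih =>
      have : ternSeq y (n+1) = ternRest (ternSeq y n) := by
        simp [ternSeq, Function.iterate_succ_apply']
      rw [this]
      exact ternRest_mem ih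

lemma ternSeq_partial (y : ℝ) (n : ℕ) :
    y = (∑ i ∈ range n, (ternD y i : ℝ) / 3 ^ (i+1)) + ternSeq y n / 3 ^ n := by
  induction n with
  | zero => simp [ternSeq]
  | succ n ih =>
      have hstep : ternSeq y (n+1) = 3 * ternSeq y n - (ternD y n : ℝ) := by
        simp only [ternSeq, Function.iterate_succ_apply']
        rfl
      rw [Finset.sum_range_succ, hstep]
      conv_lhs => rw [ih]
      have h1 : (3:ℝ)^n ≠ 0 := by positivity
      have h2 : (3:ℝ)^(n+1) ≠ 0 := by positivity
      field_simp
      ring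

lemma summable_aux {t : ℕ → ℝ} (ht : ∀ i, 0 ≤ t i ∧ t i ≤ 2) :
    Summable (fun i => t i / 3 ^ (i + 1)) := by
  have hg : Summable (fun i : ℕ => (2/3 : ℝ) * (1/3)^i) :=
    (summable_geometric_of_lt_one (by norm_num) (by norm_num)).mul_left _
  apply Summable.of_nonneg_of_le
    (fun i => div_nonneg (ht i).1 (by positivity)) _ hg
  intro i
  have hpos : (0:ℝ) < 3 ^ (i+1) := by positivity
  have : (2/3 : ℝ) * (1/3)^i = 2 / 3^(i+1) := by
    rw [div_pow, one_pow, pow_succ]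
    ring
  rw [this]
  gcongr
  exact (ht i).2

lemma tsum_two_thirds : ∑' i : ℕ, (2:ℝ) / 3 ^ (i + 1) = 1 := by
  have h : ∀ i : ℕ, (2:ℝ) / 3 ^ (i+1) = (2/3 : ℝ) * (1/3)^i := by
    intro i
    rw [div_pow, one_pow, pow_succ]
    ring
  rw [tsum_congr h, tsum_mul_left, tsum_geometric_of_lt_one (by norm_num) (by norm_num)]
  norm_num

lemma cantor_mem_Icc {a : ℝ} (ha : a ∈ middleThirdsCantor) : a ∈ Set.Icc (0:ℝ) 1 := by
  obtain ⟨t, ht, rfl⟩ := ha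
  have hb : ∀ i, 0 ≤ t i ∧ t i ≤ 2 := by
    intro i; rcases ht i with h | h <;> rw [h] <;> norm_num
  have hs := summable_aux hb
  have hs2 : Summable (fun i : ℕ => (2:ℝ) / 3 ^ (i+1)) := summable_aux (by norm_num)
  constructor
  · exact tsum_nonneg fun i => div_nonneg (hb i).1 (by positivity)
  · calc ∑' i : ℕ, t i / 3 ^ (i+1) ≤ ∑' i : ℕ, (2:ℝ) / 3 ^ (i+1) := by
          apply Summable.tsum_le_tsum _ hs hs2
          intro i
          gcongr
          exact (hb i).2
      _ = 1 := tsum_two_thirds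

lemma ternary_expansion {y : ℝ} (hy : y ∈ Set.Icc (0:ℝ) 1) :
    y = ∑' i : ℕ, (ternD y i : ℝ) / 3 ^ (i + 1) := by
  have hd : ∀ i, 0 ≤ ((ternD y i : ℕ) : ℝ) ∧ ((ternD y i : ℕ) : ℝ) ≤ 2 := by
    intro i
    constructor
    · positivity
    · exact_mod_cast ternDigit_le (ternSeq y i)
  have hs := summable_aux hd
  have hnn : ∀ i, 0 ≤ (ternD y i : ℝ) / 3 ^ (i+1) :=
    fun i => div_nonneg (hd i).1 (by positivity)
  rw [eq_comm, ← Summable.hasSum_iff hs]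
  rw [hasSum_iff_tendsto_nat_of_nonneg hnn]
  have key : ∀ n, (∑ i ∈ range n, (ternD y i : ℝ) / 3 ^ (i+1)) = y - ternSeq y n / 3 ^ n := by
    intro n
    have := ternSeq_partial y n
    linarith
  simp only [key]
  have hz : Tendsto (fun n : ℕ => ternSeq y n / 3 ^ n) atTop (nhds 0) := by
    have hb : ∀ n : ℕ, ternSeq y n / 3 ^ n ≤ (1/3:ℝ)^n := by
      intro n
      have h1 := (ternSeq_mem hy n).2
      have hpos : (0:ℝ) < 3 ^ n := by positivity
      rw [div_pow, one_pow]
      gcongr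
    have h0 : ∀ n : ℕ, (0:ℝ) ≤ ternSeq y n / 3 ^ n := by
      intro n
      exact div_nonneg (ternSeq_mem hy n).1 (by positivity)
    exact squeeze_zero h0 hb
      (tendsto_pow_atTop_nhds_zero_of_lt_one (by norm_num) (by norm_num))
  have := Tendsto.const_sub y hz
  simpa using this

theorem cantor_add_cantor :
    {x : ℝ | ∃ a ∈ middleThirdsCantor, ∃ b ∈ middleThirdsCantor, x = a + b} =
      Set.Icc (0 : ℝ) 2 := by
  ext x
  simp only [Set.mem_setOf_eq, Set.mem_Icc]
  constructor
  · rintro ⟨a, ha, b, hb, rfl⟩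
    have h1 := cantor_mem_Icc ha
    have h2 := cantor_mem_Icc hb
    obtain ⟨h1a, h1b⟩ := h1
    obtain ⟨h2a, h2b⟩ := h2
    constructor <;> linarith
  · rintro ⟨h0, h2⟩
    set y := x / 2 with hy
    have hyI : y ∈ Set.Icc (0:ℝ) 1 := ⟨by positivity, by rw [hy]; linarith⟩
    set d : ℕ → ℕ := ternD y with hd
    have hdle : ∀ i, d i ≤ 2 := fun i => ternDigit_le _
    set t : ℕ → ℝ := fun i => if d i = 0 then 0 else 2 with ht
    set t' : ℕ → ℝ := fun i => if d i = 2 then 2 else 0 with ht'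
    have htmem : ∀ i, t i = 0 ∨ t i = 2 := by
      intro i; by_cases h : d i = 0 <;> simp [ht, h]
    have ht'mem : ∀ i, t' i = 0 ∨ t' i = 2 := by
      intro i; by_cases h : d i = 2 <;> simp [ht', h]
    have hsum : ∀ i, t i + t' i = 2 * (d i : ℝ) := by
      intro i
      have := hdle i
      interval_cases h : d i <;> simp [ht, ht', h] <;> norm_num
    have htb : ∀ i, 0 ≤ t i ∧ t i ≤ 2 := by
      intro i; rcases htmem i with h | h <;> rw [h] <;> norm_num
    have ht'b : ∀ i, 0 ≤ t' i ∧ t' i ≤ 2 := by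
      intro i; rcases ht'mem i with h | h <;> rw [h] <;> norm_num
    refine ⟨∑' i : ℕ, t i / 3 ^ (i+1), ⟨t, htmem, rfl⟩,
            ∑' i : ℕ, t' i / 3 ^ (i+1), ⟨t', ht'mem, rfl⟩, ?_⟩
    rw [← Summable.tsum_add (summable_aux htb) (summable_aux ht'b)]
    have : ∀ i : ℕ, t i / 3 ^ (i+1) + t' i / 3 ^ (i+1) = 2 * ((d i : ℝ) / 3 ^ (i+1)) := by
      intro i
      rw [← add_div, hsum i]
      ring
    rw [tsum_congr this, tsum_mul_left, ← ternary_expansion hyI]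
    rw [hy]; ring
end

section
/- The closed interval [(8/9)^3, 8/9] is contained in the fourfold product set 𝒞 · 𝒞 · 𝒞 · 𝒞 = {a·b·c·d : a, b, c, d ∈ 𝒞}. -/
set_option linter.unusedVariables false

namespace CantorFour

/-- width at level n -/
noncomputable def w (n : ℕ) : ℝ := (1/3 : ℝ) ^ n

lemma w_pos (n : ℕ) : 0 < w n := by simp only [w]; positivity

lemma w_succ (n : ℕ) : w (n+1) = w n / 3 := by simp only [w, pow_succ]; ring

lemma w_le_one (n : ℕ) : w n ≤ 1 := by
  simpa [w] using pow_le_one₀ (by norm_num : (0:ℝ) ≤ 1/3) (by norm_num : (1/3:ℝ) ≤ 1)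

/-- The invariant maintained at level `n`. -/
def Inv3 (U : ℝ) (n : ℕ) (s : ℝ × ℝ × ℝ) : Prop :=
  0 ≤ s.1 ∧ 0 ≤ s.2.1 ∧ 0 ≤ s.2.2 ∧
  s.1 + w n ≤ 1 ∧ s.2.1 + w n ≤ 1 ∧ s.2.2 + w n ≤ 1 ∧
  (8 + s.1) * (8 + s.2.1) * (8 + s.2.2) ≤ U ∧
  U ≤ (8 + s.1 + w n) * (8 + s.2.1 + w n) * (8 + s.2.2 + w n)

lemma micro {u a v p q : ℝ} (hv : 0 < v) (ha : 0 ≤ a)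
    (hp : 0 < p) (hp81 : p ≤ 81) (hpq : p + (27/8) * v ≤ q)
    (h1 : (8 + a) * p ≤ u) (h2 : u ≤ (8 + a + v) * q) :
    ∃ e : ℝ, (e = 0 ∨ e = 2 * v / 3) ∧ (8 + (a + e)) * p ≤ u ∧
      u ≤ (8 + (a + e) + v / 3) * q := by
  by_cases h : (8 + a + 2 * v / 3) * p ≤ u
  · refine ⟨2 * v / 3, Or.inr rfl, ?_, ?_⟩
    · have e : (8 + (a + 2 * v / 3)) * p = (8 + a + 2 * v / 3) * p := by ring
      rw [e]; exact h
    · have e : (8 + (a + 2 * v / 3) + v / 3) * q = (8 + a + v) * q := by ring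
      rw [e]; exact h2
  · push_neg at h
    refine ⟨0, Or.inl rfl, ?_, ?_⟩
    · have e : (8 + (a + 0)) * p = (8 + a) * p := by ring
      rw [e]; exact h1
    · have e : (8 + (a + 0) + v / 3) * q = (8 + a + v / 3) * q := by ring
      rw [e]
      have step1 : (8 + a + v/3) * (p + 27/8 * v) ≤ (8 + a + v/3) * q :=
        mul_le_mul_of_nonneg_left hpq (by linarith)
      have step2 : (8 + a + 2*v/3) * p ≤ (8 + a + v/3) * (p + 27/8 * v) := by
        nlinarith [mul_nonneg ha hv.le, mul_self_nonneg v,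
          mul_le_mul_of_nonneg_left hp81 (show (0:ℝ) ≤ v/3 by positivity)]
      linarith

/-- auxiliary: `p ≤ 81` from factor bounds -/
lemma le81 {y z : ℝ} (hy0 : 0 ≤ y) (hy : y ≤ 1) (hz0 : 0 ≤ z) (hz : z ≤ 1) :
    (8 + y) * (8 + z) ≤ 81 := by nlinarith

lemma macroStep (U : ℝ) (n : ℕ) (s : ℝ × ℝ × ℝ) (h : Inv3 U n s) :
    ∃ s' : ℝ × ℝ × ℝ, Inv3 U (n+1) s' ∧
      (s'.1 = s.1 ∨ s'.1 = s.1 + 2 * w n / 3) ∧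
      (s'.2.1 = s.2.1 ∨ s'.2.1 = s.2.1 + 2 * w n / 3) ∧
      (s'.2.2 = s.2.2 ∨ s'.2.2 = s.2.2 + 2 * w n / 3) := by
  obtain ⟨ha, hb, hc, ha1, hb1, hc1, hlo, hhi⟩ := h
  set x := s.1 with hx; set y := s.2.1 with hy; set z := s.2.2 with hz
  clear_value x y z
  have hwp := w_pos n
  have hw1 := w_le_one n
  have hx1 : x ≤ 1 := by linarith
  have hy1 : y ≤ 1 := by linarith
  have hz1 : z ≤ 1 := by linarith
  -- coordinate 1
  have q1 : (8+y)*(8+z) + (27/8)*(w n) ≤ (8+y+w n)*(8+z+w n) := by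
    have e : (8+y+w n)*(8+z+w n) = (8+y)*(8+z) + (w n)*(16+y+z+w n) := by ring
    have h2 : (w n)*(27/8) ≤ (w n)*(16+y+z+w n) :=
      mul_le_mul_of_nonneg_left (by linarith) hwp.le
    rw [e]; linarith
  have m1lo : (8+x) * ((8+y)*(8+z)) ≤ U := by
    have e : (8+x)*((8+y)*(8+z)) = (8+x)*(8+y)*(8+z) := by ring
    rw [e]; exact hlo
  have m1hi : U ≤ (8+x+w n) * ((8+y+w n)*(8+z+w n)) := by
    have e : (8+x+w n)*((8+y+w n)*(8+z+w n)) = (8+x+w n)*(8+y+w n)*(8+z+w n) := by ring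
    rw [e]; exact hhi
  obtain ⟨e1, he1, h1lo, h1hi⟩ :=
    micro hwp ha (mul_pos (by linarith) (by linarith)) (le81 hb hy1 hc hz1) q1 m1lo m1hi
  have he1' : 0 ≤ e1 ∧ e1 ≤ 2 * w n / 3 := by
    rcases he1 with h | h <;> rw [h] <;> constructor <;> linarith [w_pos n]
  have he1a : 0 ≤ x + e1 := by linarith [he1'.1]
  have he1b : x + e1 + w n / 3 ≤ 1 := by linarith [he1'.2]
  have he1c : x + e1 ≤ 1 := by linarith
  -- coordinate 2
  have q2 : (8+(x+e1))*(8+z) + (27/8)*(w n) ≤ (8+(x+e1)+w n/3)*(8+z+w n) := by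
    have e : (8+(x+e1)+w n/3)*(8+z+w n) =
        (8+(x+e1))*(8+z) + (w n)*(8/3 + 8 + (x+e1) + z/3 + w n/3) := by ring
    have h2 : (w n)*(27/8) ≤ (w n)*(8/3 + 8 + (x+e1) + z/3 + w n/3) :=
      mul_le_mul_of_nonneg_left (by linarith) hwp.le
    rw [e]; linarith
  have m2lo : (8+y) * ((8+(x+e1))*(8+z)) ≤ U := by
    have e : (8+y)*((8+(x+e1))*(8+z)) = (8+(x+e1))*((8+y)*(8+z)) := by ring
    rw [e]; exact h1lo
  have m2hi : U ≤ (8+y+w n) * ((8+(x+e1)+w n/3)*(8+z+w n)) := by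
    have e : (8+y+w n)*((8+(x+e1)+w n/3)*(8+z+w n)) =
        (8+(x+e1)+w n/3)*((8+y+w n)*(8+z+w n)) := by ring
    rw [e]; exact h1hi
  obtain ⟨e2, he2, h2lo, h2hi⟩ :=
    micro hwp hb (mul_pos (by linarith) (by linarith)) (le81 he1a he1c hc hz1) q2 m2lo m2hi
  have he2' : 0 ≤ e2 ∧ e2 ≤ 2 * w n / 3 := by
    rcases he2 with h | h <;> rw [h] <;> constructor <;> linarith [w_pos n]
  have he2a : 0 ≤ y + e2 := by linarith [he2'.1]
  have he2b : y + e2 + w n / 3 ≤ 1 := by linarith [he2'.2]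
  have he2c : y + e2 ≤ 1 := by linarith
  -- coordinate 3
  have q3 : (8+(x+e1))*(8+(y+e2)) + (27/8)*(w n) ≤ (8+(x+e1)+w n/3)*(8+(y+e2)+w n/3) := by
    have e : (8+(x+e1)+w n/3)*(8+(y+e2)+w n/3) =
        (8+(x+e1))*(8+(y+e2)) + (w n)*(16/3 + (x+e1)/3 + (y+e2)/3 + w n/9) := by ring
    have h2 : (w n)*(27/8) ≤ (w n)*(16/3 + (x+e1)/3 + (y+e2)/3 + w n/9) :=
      mul_le_mul_of_nonneg_left (by linarith) hwp.le
    rw [e]; linarith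
  have m3lo : (8+z) * ((8+(x+e1))*(8+(y+e2))) ≤ U := by
    have e : (8+z)*((8+(x+e1))*(8+(y+e2))) = (8+(y+e2))*((8+(x+e1))*(8+z)) := by ring
    rw [e]; exact h2lo
  have m3hi : U ≤ (8+z+w n) * ((8+(x+e1)+w n/3)*(8+(y+e2)+w n/3)) := by
    have e : (8+z+w n)*((8+(x+e1)+w n/3)*(8+(y+e2)+w n/3)) =
        (8+(y+e2)+w n/3)*((8+(x+e1)+w n/3)*(8+z+w n)) := by ring
    rw [e]; exact h2hi
  obtain ⟨e3, he3, h3lo, h3hi⟩ :=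
    micro hwp hc (mul_pos (by linarith) (by linarith)) (le81 he1a he1c he2a he2c) q3 m3lo m3hi
  have he3' : 0 ≤ e3 ∧ e3 ≤ 2 * w n / 3 := by
    rcases he3 with h | h <;> rw [h] <;> constructor <;> linarith [w_pos n]
  have he3a : 0 ≤ z + e3 := by linarith [he3'.1]
  have he3b : z + e3 + w n / 3 ≤ 1 := by linarith [he3'.2]
  have hws : w (n+1) = w n / 3 := w_succ n
  have flo : (8+(x+e1)) * (8+(y+e2)) * (8+(z+e3)) ≤ U := by
    have e : (8+(x+e1))*(8+(y+e2))*(8+(z+e3)) = (8+(z+e3))*((8+(x+e1))*(8+(y+e2))) := by ring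
    rw [e]; exact h3lo
  have fhi : U ≤ (8+(x+e1)+w (n+1)) * (8+(y+e2)+w (n+1)) * (8+(z+e3)+w (n+1)) := by
    rw [hws]
    have e : (8+(x+e1)+w n/3)*(8+(y+e2)+w n/3)*(8+(z+e3)+w n/3) =
        (8+(z+e3)+w n/3)*((8+(x+e1)+w n/3)*(8+(y+e2)+w n/3)) := by ring
    rw [e]; exact h3hi
  refine ⟨(x + e1, y + e2, z + e3), ?_, ?_, ?_, ?_⟩
  · exact ⟨he1a, he2a, he3a, by rw [hws]; exact he1b, by rw [hws]; exact he2b,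
      by rw [hws]; exact he3b, flo, fhi⟩
  · rcases he1 with h | h <;> [left; right] <;> rw [h] <;> ring
  · rcases he2 with h | h <;> [left; right] <;> rw [h] <;> ring
  · rcases he3 with h | h <;> [left; right] <;> rw [h] <;> ring

/-- the recursively constructed chain of triples -/
noncomputable def chain (U : ℝ) (h0 : Inv3 U 0 ((0:ℝ), (0:ℝ), (0:ℝ))) :
    (n : ℕ) → {s : ℝ × ℝ × ℝ // Inv3 U n s}
  | 0 => ⟨((0:ℝ), (0:ℝ), (0:ℝ)), h0⟩
  | (n+1) => ⟨(macroStep U n (chain U h0 n).1 (chain U h0 n).2).choose,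
      (macroStep U n (chain U h0 n).1 (chain U h0 n).2).choose_spec.1⟩

lemma chain_rel (U : ℝ) (h0 : Inv3 U 0 ((0:ℝ), (0:ℝ), (0:ℝ))) (n : ℕ) :
    ((chain U h0 (n+1)).1.1 = (chain U h0 n).1.1 ∨
      (chain U h0 (n+1)).1.1 = (chain U h0 n).1.1 + 2 * w n / 3) ∧
    ((chain U h0 (n+1)).1.2.1 = (chain U h0 n).1.2.1 ∨
      (chain U h0 (n+1)).1.2.1 = (chain U h0 n).1.2.1 + 2 * w n / 3) ∧
    ((chain U h0 (n+1)).1.2.2 = (chain U h0 n).1.2.2 ∨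
      (chain U h0 (n+1)).1.2.2 = (chain U h0 n).1.2.2 + 2 * w n / 3) := by
  have h := (macroStep U n (chain U h0 n).1 (chain U h0 n).2).choose_spec
  exact ⟨h.2.1, h.2.2⟩

/-- summability of digit series -/
lemma summable_digits (t : ℕ → ℝ) (ht : ∀ i, t i = 0 ∨ t i = 2) :
    Summable (fun i : ℕ => t i / 3 ^ (i + 1)) := by
  have hg : Summable (fun i : ℕ => (2/3 : ℝ) * (1/3) ^ i) :=
    (summable_geometric_of_lt_one (by norm_num) (by norm_num)).mul_left _
  refine Summable.of_nonneg_of_le (fun i => ?_) (fun i => ?_) hg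
  · rcases ht i with h | h <;> rw [h] <;> positivity
  · have he : (2/3 : ℝ) * (1/3) ^ i = 2 / 3 ^ (i+1) := by
      rw [pow_succ]; field_simp; ring
      rw [← mul_pow]; norm_num
    rw [he]
    rcases ht i with h | h <;> rw [h]
    rw [zero_div]
    positivity

lemma one_mem_cantor : (1 : ℝ) ∈ middleThirdsCantor := by
  refine ⟨fun _ => 2, fun _ => Or.inr rfl, ?_⟩
  have h1 : ∀ i : ℕ, (2 : ℝ) / 3 ^ (i+1) = (2/3) * (1/3) ^ i := by
    intro i; rw [pow_succ]; field_simp; rw [← mul_pow]; norm_num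
  rw [tsum_congr h1, tsum_mul_left, tsum_geometric_of_lt_one (by norm_num) (by norm_num)]
  norm_num

lemma shift_mem_cantor {c : ℝ} (hc : c ∈ middleThirdsCantor) :
    (8 + c) / 9 ∈ middleThirdsCantor := by
  obtain ⟨t, ht, rfl⟩ := hc
  set t' : ℕ → ℝ := fun n => match n with
    | 0 => 2
    | 1 => 2
    | (k+2) => t k with ht'def
  have ht' : ∀ i, t' i = 0 ∨ t' i = 2 := by
    intro i; match i with
    | 0 => exact Or.inr rfl
    | 1 => exact Or.inr rfl
    | (k+2) => exact ht k
  refine ⟨t', ht', ?_⟩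
  have hsum' : Summable (fun i : ℕ => t' i / 3 ^ (i + 1)) := summable_digits t' ht'
  have key := Summable.sum_add_tsum_nat_add (f := fun i : ℕ => t' i / 3 ^ (i+1)) 2 hsum'
  have hshift : ∀ i : ℕ, t' (i + 2) / 3 ^ (i + 2 + 1) = (1/9) * (t i / 3 ^ (i + 1)) := by
    intro i
    have h1 : t' (i+2) = t i := rfl
    rw [h1]
    have h3 : (3:ℝ) ^ (i+2+1) = 9 * 3 ^ (i+1) := by ring
    rw [h3]
    have h9 : (3:ℝ) ^ (i+1) ≠ 0 := by positivity
    field_simp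
  rw [tsum_congr hshift, tsum_mul_left] at key
  have hfin : (∑ i ∈ Finset.range 2, t' i / 3 ^ (i+1)) = 8/9 := by
    rw [Finset.sum_range_succ, Finset.sum_range_one]
    norm_num [ht'def]
  rw [hfin] at key
  rw [← key]; ring

/-- the limit of a greedy digit sequence lies in the Cantor set, with bracket bounds -/
lemma mem_cantor_of_approx (a : ℕ → ℝ) (h0 : a 0 = 0)
    (hstep : ∀ n, a (n+1) = a n ∨ a (n+1) = a n + 2 * (1/3:ℝ) ^ n / 3) :
    ∃ c ∈ middleThirdsCantor, ∀ n, a n ≤ c ∧ c ≤ a n + (1/3:ℝ) ^ n := by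
  have hmono : Monotone a := by
    apply monotone_nat_of_le_succ
    intro n
    rcases hstep n with h | h <;> rw [h]
    have : (0:ℝ) < (1/3:ℝ) ^ n := by positivity
    linarith
  have hbound : ∀ n m, a (n + m) ≤ a n + (1/3:ℝ) ^ n - (1/3:ℝ) ^ (n + m) := by
    intro n m
    induction m with
    | zero => simp
    | succ m ih =>
      have hpow : (1/3:ℝ) ^ (n + m + 1) = (1/3:ℝ) ^ (n + m) / 3 := by
        rw [pow_succ]; ring
      have harr : n + (m + 1) = (n + m) + 1 := by ring
      rw [harr, hpow]
      rcases hstep (n+m) with h | h <;> rw [h]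
      · have : (0:ℝ) < (1/3:ℝ) ^ (n+m) := by positivity
        linarith
      · linarith
  have hbdd : BddAbove (Set.range a) := by
    refine ⟨a 0 + 1, ?_⟩
    rintro x ⟨k, rfl⟩
    have hb := hbound 0 k
    simp only [Nat.zero_add, pow_zero] at hb
    have hp : (0:ℝ) < (1/3:ℝ) ^ k := by positivity
    linarith
  set c := ⨆ n, a n with hc
  have hle : ∀ n, a n ≤ c := fun n => le_ciSup (f := a) hbdd n
  have hge : ∀ n, c ≤ a n + (1/3:ℝ) ^ n := by
    intro n
    apply ciSup_le
    intro k
    rcases le_or_gt k n with h | h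
    · have : (0:ℝ) < (1/3:ℝ) ^ n := by positivity
      linarith [hmono h]
    · obtain ⟨m, rfl⟩ := Nat.exists_eq_add_of_le h.le
      have hb := hbound n m
      have hp : (0:ℝ) < (1/3:ℝ) ^ (n+m) := by positivity
      linarith
  have htend : Filter.Tendsto a Filter.atTop (nhds c) := tendsto_atTop_ciSup hmono hbdd
  -- digits
  set t : ℕ → ℝ := fun n => (a (n+1) - a n) * 3 ^ (n+1) with htdef
  have hdig : ∀ i, t i = 0 ∨ t i = 2 := by
    intro i
    rcases hstep i with h | h
    · left; simp [htdef, h]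
    · right
      have h3 : (1/3:ℝ) ^ i * 3 ^ (i+1) = 3 := by
        rw [one_div, inv_pow, pow_succ]
        field_simp
      simp only [htdef, h]
      calc (a i + 2 * (1/3:ℝ) ^ i / 3 - a i) * 3 ^ (i+1)
          = (2/3) * ((1/3:ℝ) ^ i * 3 ^ (i+1)) := by ring
        _ = 2 := by rw [h3]; norm_num
  have hterm : ∀ n, t n / 3 ^ (n+1) = a (n+1) - a n := by
    intro n
    simp only [htdef]
    have h9 : (3:ℝ) ^ (n+1) ≠ 0 := by positivity
    field_simp
  have hsa : Summable (fun n => t n / 3 ^ (n+1)) := summable_digits t hdig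
  have hhs : (∑' n, t n / 3 ^ (n+1)) = c := by
    have htendpartial : Filter.Tendsto (fun n => ∑ i ∈ Finset.range n, (t i / 3 ^ (i+1)))
        Filter.atTop (nhds (∑' n, t n / 3 ^ (n+1))) := hsa.hasSum.tendsto_sum_nat
    have heq : ∀ n, (∑ i ∈ Finset.range n, (t i / 3 ^ (i+1))) = a n := by
      intro n
      rw [Finset.sum_congr rfl (fun i _ => hterm i), Finset.sum_range_sub a, h0, sub_zero]
    rw [Filter.tendsto_congr heq] at htendpartial
    exact tendsto_nhds_unique htendpartial htend
  exact ⟨c, ⟨t, hdig, hhs.symm⟩, fun n => ⟨hle n, hge n⟩⟩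

end CantorFour

theorem Icc_subset_fourfold_cantor_product :
    Set.Icc ((8 / 9 : ℝ) ^ 3) (8 / 9 : ℝ) ⊆
      {x : ℝ | ∃ a ∈ middleThirdsCantor, ∃ b ∈ middleThirdsCantor,
        ∃ c ∈ middleThirdsCantor, ∃ d ∈ middleThirdsCantor, x = a * b * c * d} := by
  rintro x ⟨hx1, hx2⟩
  have hx1' : (512 : ℝ) / 729 ≤ x := by nlinarith [hx1]
  have hw0 : CantorFour.w 0 = 1 := by norm_num [CantorFour.w]
  have h0 : CantorFour.Inv3 (729 * x) 0 ((0:ℝ), (0:ℝ), (0:ℝ)) := by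
    refine ⟨le_refl _, le_refl _, le_refl _, ?_, ?_, ?_, ?_, ?_⟩
    · rw [hw0]; norm_num
    · rw [hw0]; norm_num
    · rw [hw0]; norm_num
    · show (8 + 0 : ℝ) * (8 + 0) * (8 + 0) ≤ 729 * x
      norm_num; linarith
    · show (729 : ℝ) * x ≤ (8 + 0 + CantorFour.w 0) * (8 + 0 + CantorFour.w 0) *
        (8 + 0 + CantorFour.w 0)
      rw [hw0]; norm_num; linarith
  set s := CantorFour.chain (729 * x) h0 with hs
  set a1 : ℕ → ℝ := fun n => (s n).1.1 with ha1
  set a2 : ℕ → ℝ := fun n => (s n).1.2.1 with ha2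
  set a3 : ℕ → ℝ := fun n => (s n).1.2.2 with ha3
  have hrel := CantorFour.chain_rel (729 * x) h0
  have hInv : ∀ n, CantorFour.Inv3 (729 * x) n ((s n).1) := fun n => (s n).2
  have h10 : a1 0 = 0 := rfl
  have h20 : a2 0 = 0 := rfl
  have h30 : a3 0 = 0 := rfl
  obtain ⟨c1, hc1m, hc1b⟩ := CantorFour.mem_cantor_of_approx a1 h10 (fun n => (hrel n).1)
  obtain ⟨c2, hc2m, hc2b⟩ := CantorFour.mem_cantor_of_approx a2 h20 (fun n => (hrel n).2.1)
  obtain ⟨c3, hc3m, hc3b⟩ := CantorFour.mem_cantor_of_approx a3 h30 (fun n => (hrel n).2.2)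
  -- squeeze: (8+c1)(8+c2)(8+c3) = 729 x
  have hwt : Filter.Tendsto (fun n : ℕ => (1/3:ℝ) ^ n) Filter.atTop (nhds 0) :=
    tendsto_pow_atTop_nhds_zero_of_lt_one (by norm_num) (by norm_num)
  have htend1 : Filter.Tendsto a1 Filter.atTop (nhds c1) := by
    refine tendsto_of_tendsto_of_tendsto_of_le_of_le
      (g := fun n => c1 - (1/3:ℝ) ^ n) (h := fun _ => c1) ?_ tendsto_const_nhds
      (fun n => ?_) (fun n => (hc1b n).1)
    · simpa using tendsto_const_nhds.sub hwt
    · have := (hc1b n).2; simp only []; linarith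
  have htend2 : Filter.Tendsto a2 Filter.atTop (nhds c2) := by
    refine tendsto_of_tendsto_of_tendsto_of_le_of_le
      (g := fun n => c2 - (1/3:ℝ) ^ n) (h := fun _ => c2) ?_ tendsto_const_nhds
      (fun n => ?_) (fun n => (hc2b n).1)
    · simpa using tendsto_const_nhds.sub hwt
    · have := (hc2b n).2; simp only []; linarith
  have htend3 : Filter.Tendsto a3 Filter.atTop (nhds c3) := by
    refine tendsto_of_tendsto_of_tendsto_of_le_of_le
      (g := fun n => c3 - (1/3:ℝ) ^ n) (h := fun _ => c3) ?_ tendsto_const_nhds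
      (fun n => ?_) (fun n => (hc3b n).1)
    · simpa using tendsto_const_nhds.sub hwt
    · have := (hc3b n).2; simp only []; linarith
  have hPlo : Filter.Tendsto (fun n => (8 + a1 n) * (8 + a2 n) * (8 + a3 n))
      Filter.atTop (nhds ((8 + c1) * (8 + c2) * (8 + c3))) :=
    ((tendsto_const_nhds.add htend1).mul (tendsto_const_nhds.add htend2)).mul
      (tendsto_const_nhds.add htend3)
  have hwtend : Filter.Tendsto CantorFour.w Filter.atTop (nhds 0) := hwt
  have hPhi : Filter.Tendsto
      (fun n => (8 + a1 n + CantorFour.w n) * (8 + a2 n + CantorFour.w n) *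
        (8 + a3 n + CantorFour.w n))
      Filter.atTop (nhds ((8 + c1) * (8 + c2) * (8 + c3))) := by
    have h8 : Filter.Tendsto (fun _ : ℕ => (8:ℝ)) Filter.atTop (nhds 8) :=
      tendsto_const_nhds
    have e1 : Filter.Tendsto (fun n => 8 + a1 n + CantorFour.w n) Filter.atTop
        (nhds (8 + c1)) := by
      simpa using (h8.add htend1).add hwtend
    have e2 : Filter.Tendsto (fun n => 8 + a2 n + CantorFour.w n) Filter.atTop
        (nhds (8 + c2)) := by
      simpa using (h8.add htend2).add hwtend
    have e3 : Filter.Tendsto (fun n => 8 + a3 n + CantorFour.w n) Filter.atTop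
        (nhds (8 + c3)) := by
      simpa using (h8.add htend3).add hwtend
    exact (e1.mul e2).mul e3
  have hUeq : (8 + c1) * (8 + c2) * (8 + c3) = 729 * x := by
    have hle : (8 + c1) * (8 + c2) * (8 + c3) ≤ 729 * x :=
      le_of_tendsto_of_tendsto' hPlo tendsto_const_nhds (fun n => (hInv n).2.2.2.2.2.2.1)
    have hge : 729 * x ≤ (8 + c1) * (8 + c2) * (8 + c3) :=
      le_of_tendsto_of_tendsto' tendsto_const_nhds hPhi (fun n => (hInv n).2.2.2.2.2.2.2)
    linarith
  refine ⟨(8 + c1)/9, CantorFour.shift_mem_cantor hc1m, (8 + c2)/9,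
    CantorFour.shift_mem_cantor hc2m, (8 + c3)/9, CantorFour.shift_mem_cantor hc3m,
    1, CantorFour.one_mem_cantor, ?_⟩
  have h9 : (9:ℝ) ≠ 0 := by norm_num
  field_simp
  linarith [hUeq]
end

section
/- Let m ≥ 1 be an integer and set t_m = 2·⌈(3/2)^{m-1}⌉. Then the t_m-fold sumset 𝒞^(m) + 𝒞^(m) + … + 𝒞^(m) (with t_m summands), i.e. the set {x_1^m + x_2^m + … + x_{t_m}^m : x_1, …, x_{t_m} ∈ 𝒞}, contains the closed interval I = [(m+1)(2/3)^m + (m−1), (m−1)(2/3)^m + (m+1)], which has length 2(1 − (2/3)^m). -/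
open Finset
set_option maxHeartbeats 1000000


private lemma geom23 (k : ℕ) : ∑ i ∈ range k, (2:ℝ)/3^(i+1) = 1 - (1/3)^k := by
  induction k with
  | zero => simp
  | succ n ih =>
    rw [Finset.sum_range_succ, ih, pow_succ, pow_succ]
    have h : ((1:ℝ)/3)^n = 1/3^n := by rw [div_pow, one_pow]
    rw [h]
    have h3 : (3:ℝ)^n ≠ 0 := by positivity
    field_simp
    ring

private lemma pow_diff_le (m : ℕ) {x y : ℝ} (h0 : 0 ≤ y) (hyx : y ≤ x) (hx : x ≤ 1) :
    x^m - y^m ≤ m * (x - y) := by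
  rw [← geom_sum₂_mul x y m]
  have hxy : (0:ℝ) ≤ x - y := sub_nonneg.2 hyx
  have hb : ∑ i ∈ range m, x^i * y^(m-1-i) ≤ (m:ℝ) := by
    have hterm : ∀ i ∈ range m, x^i * y^(m-1-i) ≤ 1 := by
      intro i _
      have hx0 : (0:ℝ) ≤ x := h0.trans hyx
      have h1 : x^i ≤ 1 := pow_le_one₀ hx0 hx
      have h2 : y^(m-1-i) ≤ 1 := pow_le_one₀ h0 (hyx.trans hx)
      nlinarith [pow_nonneg h0 (m-1-i), pow_nonneg hx0 i]
    calc ∑ i ∈ range m, x^i*y^(m-1-i) ≤ ∑ _i ∈ range m, (1:ℝ) := Finset.sum_le_sum hterm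
      _ = m := by simp
  nlinarith

private lemma pow_diff_ge (m : ℕ) {x y : ℝ} (h0 : (2:ℝ)/3 ≤ y) (hyx : y ≤ x) :
    (m:ℝ) * (2/3)^(m-1) * (x - y) ≤ x^m - y^m := by
  rw [← geom_sum₂_mul x y m]
  have hxy : (0:ℝ) ≤ x - y := sub_nonneg.2 hyx
  have h23 : (0:ℝ) ≤ 2/3 := by norm_num
  have hb : (m:ℝ) * (2/3)^(m-1) ≤ ∑ i ∈ range m, x^i * y^(m-1-i) := by
    have hterm : ∀ i ∈ range m, ((2:ℝ)/3)^(m-1) ≤ x^i * y^(m-1-i) := by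
      intro i hi
      have hx23 : (2:ℝ)/3 ≤ x := h0.trans hyx
      have h1 : ((2:ℝ)/3)^i ≤ x^i := pow_le_pow_left₀ h23 hx23 i
      have h2 : ((2:ℝ)/3)^(m-1-i) ≤ y^(m-1-i) := pow_le_pow_left₀ h23 h0 _
      have hieq : i + (m-1-i) = m-1 := by have := Finset.mem_range.1 hi; omega
      calc ((2:ℝ)/3)^(m-1) = (2/3)^i * ((2:ℝ)/3)^(m-1-i) := by rw [← pow_add, hieq]
        _ ≤ x^i * y^(m-1-i) :=
          mul_le_mul h1 h2 (pow_nonneg h23 _) (pow_nonneg (h23.trans hx23) _)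
    calc (m:ℝ) * (2/3)^(m-1) = ∑ _i ∈ range m, ((2:ℝ)/3)^(m-1) := by
          rw [Finset.sum_const, card_range, nsmul_eq_mul]
      _ ≤ _ := Finset.sum_le_sum hterm
  nlinarith

private lemma a_lb {n : ℕ} {d : ℕ → ℝ} (hd : ∀ i, d i = 0 ∨ d i = 2) (hd0 : d 0 = 2) :
    (2:ℝ)/3 ≤ ∑ i ∈ range (n+1), d i / 3^(i+1) := by
  rw [Finset.sum_range_succ']
  have h1 : (0:ℝ) ≤ ∑ i ∈ range n, d (i+1)/3^(i+1+1) := by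
    apply Finset.sum_nonneg
    intro i _
    rcases hd (i+1) with h|h <;> rw [h] <;> positivity
  have h2 : d 0/(3:ℝ)^(0+1) = 2/3 := by rw [hd0]; norm_num
  linarith

private lemma a_ub {n : ℕ} {d : ℕ → ℝ} (hd : ∀ i, d i = 0 ∨ d i = 2) :
    ∑ i ∈ range (n+1), d i / 3^(i+1) ≤ 1 - (1/3:ℝ)^(n+1) := by
  rw [← geom23 (n+1)]
  apply Finset.sum_le_sum
  intro i _
  rcases hd i with h|h <;> rw [h]
  rw [zero_div]; positivity

private lemma nat_lt_pow (k : ℕ) : (k:ℝ) < (3/2)^k := by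
  induction k with
  | zero => norm_num
  | succ n ih =>
    rcases Nat.lt_or_ge n 2 with h | h
    · interval_cases n <;> norm_num
    · have h2 : (2:ℝ) ≤ n := by exact_mod_cast h
      push_cast
      rw [pow_succ]
      nlinarith


def CInv (m N : ℕ) (y : ℝ) (n : ℕ) (d : Fin N → ℕ → ℝ) : Prop :=
  (∀ j i, d j i = 0 ∨ d j i = 2) ∧ (∀ j, d j 0 = 2) ∧ (∀ j i, n < i → d j i = 0) ∧
  (∑ j, (∑ i ∈ range (n+1), d j i / 3^(i+1))^m ≤ y) ∧
  (y ≤ ∑ j, (∑ i ∈ range (n+1), d j i / 3^(i+1) + (1/3:ℝ)^(n+1))^m)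


private lemma step_lemma (m N : ℕ) (hN : 2*((3:ℝ)/2)^(m-1) ≤ N) (y : ℝ)
    (n : ℕ) (d : Fin N → ℕ → ℝ) (h : CInv m N y n d) :
    ∃ d' : Fin N → ℕ → ℝ, (∀ j i, i ≤ n → d' j i = d j i) ∧ CInv m N y (n+1) d' := by
  classical
  obtain ⟨hd, hd0, hdz, hσ, hτ⟩ := h
  set a : Fin N → ℝ := fun j => ∑ i ∈ range (n+1), d j i / 3^(i+1) with ha
  set ε : ℝ := (1/3:ℝ)^(n+2) with hεdef
  have hε0 : (0:ℝ) < ε := by positivity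
  have h3ε : (3:ℝ) * ε = (1/3)^(n+1) := by rw [hεdef, pow_succ]; ring
  have haL : ∀ j, (2:ℝ)/3 ≤ a j := fun j => a_lb (hd j) (hd0 j)
  have haU : ∀ j, a j ≤ 1 - 3*ε := by intro j; rw [h3ε]; exact a_ub (hd j)
  set c : ℕ → Fin N → ℝ := fun k j => a j + (if (j:ℕ) < k then 2*ε else 0) with hc
  set S : ℕ → ℝ := fun k => ∑ j, (c k j)^m with hSdef
  set P : ℕ → Prop := fun k => S k ≤ y with hPdef
  have hS0 : S 0 = ∑ j, (a j)^m := by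
    apply Finset.sum_congr rfl; intro j _; simp [hc]
  have hP0 : P 0 := by show S 0 ≤ y; rw [hS0]; exact hσ
  set K := Nat.findGreatest P N with hKdef
  have hKN : K ≤ N := Nat.findGreatest_le N
  have hPK : S K ≤ y := Nat.findGreatest_spec (Nat.zero_le N) hP0
  have hcL : ∀ k (j : Fin N), (2:ℝ)/3 ≤ c k j := by
    intro k j
    have h1 : (0:ℝ) ≤ (if (j:ℕ) < k then 2*ε else 0) := by
      split
      · positivity
      · exact le_refl 0
    have := haL j
    simp only [hc]
    linarith
  have hcU : ∀ k (j : Fin N), c k j + ε ≤ 1 := by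
    intro k j
    have h1 : (if (j:ℕ) < k then 2*ε else 0) ≤ 2*ε := by
      split
      · exact le_refl _
      · positivity
    have := haU j
    simp only [hc]
    linarith
  have hτ' : y ≤ ∑ j, (c K j + ε)^m := by
    rcases eq_or_lt_of_le hKN with hKeq | hKlt
    · have hce : ∀ j : Fin N, c K j + ε = a j + (1/3:ℝ)^(n+1) := by
        intro j
        have hj : (j:ℕ) < K := by rw [hKeq]; exact j.2
        simp only [hc, if_pos hj]
        linarith [h3ε]
      calc y ≤ ∑ j, (a j + (1/3:ℝ)^(n+1))^m := hτ
        _ = ∑ j, (c K j + ε)^m := by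
            apply Finset.sum_congr rfl; intro j _; rw [hce j]
    · have hnP : ¬ P (K+1) := Nat.findGreatest_is_greatest (Nat.lt_succ_self K) hKlt
      have hylt : y < S (K+1) := lt_of_not_ge hnP
      set J : Fin N := ⟨K, hKlt⟩ with hJ
      have hcKJ : c K J = a J := by simp [hc, hJ]
      have hcK1J : c (K+1) J = a J + 2*ε := by simp [hc, hJ]
      have hdiff : S (K+1) - S K = (a J + 2*ε)^m - (a J)^m := by
        show (∑ j, (c (K+1) j)^m) - ∑ j, (c K j)^m = _
        rw [← Finset.sum_sub_distrib]
        rw [Finset.sum_eq_single J]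
        · rw [hcKJ, hcK1J]
        · intro j _ hj
          have hjK : (j:ℕ) ≠ K := fun hcon => hj (Fin.ext hcon)
          have hiff : ((j:ℕ) < K+1) = ((j:ℕ) < K) := by
            apply propext; constructor <;> intro <;> omega
          simp only [hc, hiff, sub_self]
        · intro hJu; exact absurd (Finset.mem_univ J) hJu
      have hub : S (K+1) - S K ≤ (m:ℝ) * (2*ε) := by
        rw [hdiff]
        have ha0 : (0:ℝ) ≤ a J := le_trans (by norm_num) (haL J)
        have := pow_diff_le m ha0 (by linarith : a J ≤ a J + 2*ε)
          (by linarith [haU J] : a J + 2*ε ≤ 1)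
        linarith
      have hlb : S K + (m:ℝ)*(2*ε) ≤ ∑ j, (c K j + ε)^m := by
        have hterm : ∀ j ∈ (univ : Finset (Fin N)),
            (c K j)^m + (m:ℝ)*(2/3)^(m-1)*ε ≤ (c K j + ε)^m := by
          intro j _
          have h1 := pow_diff_ge m (hcL K j) (by linarith : c K j ≤ c K j + ε)
          have h2 : c K j + ε - c K j = ε := by ring
          rw [h2] at h1
          linarith
        have hsum := Finset.sum_le_sum hterm
        rw [Finset.sum_add_distrib, Finset.sum_const, card_univ, Fintype.card_fin,
          nsmul_eq_mul] at hsum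
        have hone : ((3:ℝ)/2)^(m-1) * ((2:ℝ)/3)^(m-1) = 1 := by
          rw [← mul_pow]; norm_num
        have hNpow : (2:ℝ) ≤ (N:ℝ) * (2/3)^(m-1) := by
          have hp : (0:ℝ) ≤ ((2:ℝ)/3)^(m-1) := by positivity
          nlinarith [mul_le_mul_of_nonneg_right hN hp]
        have hme : (0:ℝ) ≤ (m:ℝ)*ε := by positivity
        nlinarith [mul_le_mul_of_nonneg_right hNpow hme]
      linarith
  -- construct d'
  refine ⟨fun j i => if i = n+1 then (if (j:ℕ) < K then 2 else 0) else d j i,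
    ?_, ?_, ?_, ?_, ?_, ?_⟩
  · intro j i hi
    dsimp only
    rw [if_neg (by omega)]
  · intro j i
    dsimp only
    by_cases hi : i = n+1
    · rw [if_pos hi]; split
      · right; rfl
      · left; rfl
    · rw [if_neg hi]; exact hd j i
  · intro j
    dsimp only
    rw [if_neg (by omega)]; exact hd0 j
  · intro j i hi
    dsimp only
    rw [if_neg (by omega)]; exact hdz j i (by omega)
  · have ha' : ∀ j : Fin N,
        ∑ i ∈ range (n+2), (if i = n+1 then (if (j:ℕ) < K then (2:ℝ) else 0) else d j i)/3^(i+1)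
          = c K j := by
      intro j
      rw [Finset.sum_range_succ]
      have h1 : ∑ i ∈ range (n+1),
          (if i = n+1 then (if (j:ℕ) < K then (2:ℝ) else 0) else d j i)/3^(i+1) = a j := by
        apply Finset.sum_congr rfl
        intro i hi
        rw [if_neg (by have := Finset.mem_range.1 hi; omega)]
      rw [h1, if_pos rfl]
      have hεe : ε = 1/(3:ℝ)^(n+2) := by rw [hεdef, div_pow, one_pow]
      simp only [hc]
      split
      · rw [hεe]; ring
      · rw [zero_div, add_zero]
    have heq : ∑ j : Fin N, (∑ i ∈ range (n+1+1),
        (if i = n+1 then (if (j:ℕ) < K then (2:ℝ) else 0) else d j i)/3^(i+1))^m = S K := by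
      apply Finset.sum_congr rfl; intro j _; rw [ha' j]
    dsimp only
    rw [heq]; exact hPK
  · have ha' : ∀ j : Fin N,
        ∑ i ∈ range (n+2), (if i = n+1 then (if (j:ℕ) < K then (2:ℝ) else 0) else d j i)/3^(i+1)
          = c K j := by
      intro j
      rw [Finset.sum_range_succ]
      have h1 : ∑ i ∈ range (n+1),
          (if i = n+1 then (if (j:ℕ) < K then (2:ℝ) else 0) else d j i)/3^(i+1) = a j := by
        apply Finset.sum_congr rfl
        intro i hi
        rw [if_neg (by have := Finset.mem_range.1 hi; omega)]
      rw [h1, if_pos rfl]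
      have hεe : ε = 1/(3:ℝ)^(n+2) := by rw [hεdef, div_pow, one_pow]
      simp only [hc]
      split
      · rw [hεe]; ring
      · rw [zero_div, add_zero]
    have hq : ∑ j : Fin N, (∑ i ∈ range (n+1+1),
        (if i = n+1 then (if (j:ℕ) < K then (2:ℝ) else 0) else d j i)/3^(i+1) + (1/3:ℝ)^(n+1+1))^m
        = ∑ j : Fin N, (c K j + ε)^m := by
      apply Finset.sum_congr rfl; intro j _; rw [ha' j, ← hεdef]
    dsimp only
    rw [hq]; exact hτ'

private lemma base_lemma (m N : ℕ) (y : ℝ) (h1 : (N:ℝ)*(2/3)^m ≤ y) (h2 : y ≤ N) :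
    CInv m N y 0 (fun _ i => if i = 0 then 2 else 0) := by
  have hsum : ∀ j : Fin N, ∑ i ∈ range 1, (if i = 0 then (2:ℝ) else 0)/3^(i+1) = 2/3 := by
    intro j; rw [Finset.sum_range_one]; norm_num
  refine ⟨?_, ?_, ?_, ?_, ?_⟩
  · intro j i; dsimp only; split
    · right; rfl
    · left; rfl
  · intro j; dsimp only; rw [if_pos rfl]
  · intro j i hi; dsimp only; rw [if_neg (by omega)]
  · dsimp only
    have : ∑ j : Fin N, (∑ i ∈ range 1, (if i = 0 then (2:ℝ) else 0)/3^(i+1))^m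
        = (N:ℝ)*(2/3)^m := by
      rw [Finset.sum_congr rfl (fun j _ => by rw [hsum j]), Finset.sum_const, card_univ,
        Fintype.card_fin, nsmul_eq_mul]
    rw [this]; exact h1
  · dsimp only
    have : ∑ j : Fin N, (∑ i ∈ range 1, (if i = 0 then (2:ℝ) else 0)/3^(i+1) + (1/3:ℝ)^1)^m
        = (N:ℝ) := by
      have hj : ∀ j : Fin N, (∑ i ∈ range 1, (if i = 0 then (2:ℝ) else 0)/3^(i+1) + (1/3:ℝ)^1)^m
          = 1 := by
        intro j; rw [hsum j]; norm_num
      rw [Finset.sum_congr rfl (fun j _ => hj j), Finset.sum_const, card_univ,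
        Fintype.card_fin, nsmul_eq_mul, mul_one]
    rw [this]; exact h2

theorem Icc_subset_sumset_of_mth_powers (m : ℕ) (hm : 1 ≤ m) :
    Set.Icc (((m : ℝ) + 1) * (2 / 3) ^ m + ((m : ℝ) - 1))
        (((m : ℝ) - 1) * (2 / 3) ^ m + ((m : ℝ) + 1)) ⊆
      {x : ℝ | ∃ f : Fin (2 * ⌈((3 : ℝ) / 2) ^ (m - 1)⌉₊) → ℝ,
        (∀ j, f j ∈ middleThirdsCantor) ∧ x = ∑ j, f j ^ m} ∧
    (((m : ℝ) - 1) * (2 / 3) ^ m + ((m : ℝ) + 1)) -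
        (((m : ℝ) + 1) * (2 / 3) ^ m + ((m : ℝ) - 1)) = 2 * (1 - (2 / 3) ^ m) := by
  constructor
  · intro y hy
    obtain ⟨hyL, hyR⟩ := hy
    set Nn : ℕ := 2 * ⌈((3 : ℝ) / 2) ^ (m - 1)⌉₊ with hNn
    have hupos : (0:ℝ) < (2/3)^m := by positivity
    have hu1 : ((2:ℝ)/3)^m ≤ 1 := pow_le_one₀ (by norm_num) (by norm_num)
    have hceil_ge : ((3:ℝ)/2)^(m-1) ≤ (⌈((3:ℝ)/2)^(m-1)⌉₊ : ℝ) := Nat.le_ceil _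
    have hceil_lt : ((⌈((3:ℝ)/2)^(m-1)⌉₊ : ℝ)) < (3/2)^(m-1) + 1 :=
      Nat.ceil_lt_add_one (by positivity)
    have hNcast : (Nn:ℝ) = 2 * (⌈((3:ℝ)/2)^(m-1)⌉₊ : ℝ) := by rw [hNn]; push_cast; ring
    have hNR : 2*((3:ℝ)/2)^(m-1) ≤ (Nn:ℝ) := by rw [hNcast]; linarith
    have hmu : ((3:ℝ)/2)^(m-1) * ((2:ℝ)/3)^m = 2/3 := by
      have hmsub : m - 1 + 1 = m := by omega
      calc ((3:ℝ)/2)^(m-1) * (2/3)^m = (3/2)^(m-1) * ((2/3)^(m-1) * (2/3)) := by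
            rw [← pow_succ, hmsub]
        _ = ((3/2)*(2/3))^(m-1) * (2/3) := by rw [mul_pow]; ring
        _ = 2/3 := by norm_num
    have hceil_m : m ≤ ⌈((3:ℝ)/2)^(m-1)⌉₊ := by
      have h1 : m - 1 < ⌈((3:ℝ)/2)^(m-1)⌉₊ := Nat.lt_ceil.2 (nat_lt_pow (m-1))
      omega
    -- B2
    have hB2 : ((m:ℝ) - 1) * (2/3)^m + ((m:ℝ) + 1) ≤ (Nn:ℝ) := by
      have h2m : (2*m : ℝ) ≤ (Nn:ℝ) := by
        rw [hNcast]
        have : (m:ℝ) ≤ (⌈((3:ℝ)/2)^(m-1)⌉₊ : ℝ) := by exact_mod_cast hceil_m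
        linarith
      have hm1 : (1:ℝ) ≤ (m:ℝ) := by exact_mod_cast hm
      nlinarith
    -- B1
    have hB1 : (Nn:ℝ) * (2/3)^m ≤ ((m:ℝ) + 1) * (2/3)^m + ((m:ℝ) - 1) := by
      rcases Nat.lt_or_ge m 3 with hsm | hbig
      · interval_cases m
        · norm_num [hNn]
        · have he : ((3:ℝ)/2)^(2-1) = 3/2 := by norm_num
          have hc2 : (⌈(3:ℝ)/2⌉₊ : ℕ) = 2 := by
            rw [Nat.ceil_eq_iff (by norm_num)]; norm_num
          rw [hNcast, he, hc2]
          norm_num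
      · have hm3 : (3:ℝ) ≤ (m:ℝ) := by exact_mod_cast hbig
        have hkey : (Nn:ℝ) * (2/3)^m < 4/3 + 2*(2/3)^m := by
          rw [hNcast]
          have := mul_lt_mul_of_pos_right hceil_lt hupos
          nlinarith [hmu]
        nlinarith
    have hσ0 : (Nn:ℝ) * (2/3)^m ≤ y := le_trans hB1 hyL
    have hτ0 : y ≤ (Nn:ℝ) := le_trans hyR hB2
    -- build the digit matrices by recursion
    have hstep : ∀ n d, CInv m Nn y n d →
        ∃ d', (∀ j i, i ≤ n → d' j i = d j i) ∧ CInv m Nn y (n+1) d' :=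
      fun n d hd => step_lemma m Nn hNR y n d hd
    choose! F hF1 hF2 using hstep
    let D : ℕ → Fin Nn → ℕ → ℝ := fun n =>
      Nat.rec (fun _ i => if i = 0 then (2:ℝ) else 0) (fun k dk => F k dk) n
    have hD : ∀ n, CInv m Nn y n (D n) := by
      intro n
      induction n with
      | zero => exact base_lemma m Nn y hσ0 hτ0
      | succ k ih => exact hF2 k (D k) ih
    have hagree : ∀ n j i, i ≤ n → D (n+1) j i = D n j i := fun n => hF1 n (D n) (hD n)
    have hstab : ∀ n i j, i ≤ n → D n j i = D i j i := by
      intro n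
      induction n with
      | zero => intro i j h; have h0 : i = 0 := Nat.le_zero.1 h; subst h0; rfl
      | succ k ih =>
        intro i j h
        by_cases h' : i ≤ k
        · rw [hagree k j i h']; exact ih i j h'
        · have h'' : i = k+1 := by omega
          subst h''; rfl
    set x : Fin Nn → ℝ := (fun j => ∑' i : ℕ, (D i j i) / 3^(i+1)) with hxdef
    have hdig : ∀ j i, D i j i = 0 ∨ D i j i = 2 := fun j i => (hD i).1 j i
    have hub2 : ∀ (j : Fin Nn) i, 0 ≤ D i j i / 3^(i+1) ∧ D i j i / 3^(i+1) ≤ 2/3^(i+1) := by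
      intro j i
      have h02 : 0 ≤ D i j i ∧ D i j i ≤ 2 := by
        rcases hdig j i with h|h <;> rw [h] <;> norm_num
      constructor
      · have := h02.1; positivity
      · have h3 : (0:ℝ) < (3:ℝ)^(i+1) := by positivity
        exact (div_le_div_iff_of_pos_right h3).2 h02.2
    have hgeo : Summable (fun i : ℕ => (2:ℝ)/3^(i+1)) := by
      have he : (fun i : ℕ => (2:ℝ)/3^(i+1)) = fun i => (2/3) * (1/3)^i := by
        funext i
        rw [div_pow, one_pow, pow_succ]
        have h3 : (3:ℝ)^i ≠ 0 := by positivity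
        field_simp
      rw [he]
      exact (summable_geometric_of_lt_one (by norm_num) (by norm_num)).mul_left _
    have hsumm : ∀ j, Summable (fun i : ℕ => D i j i / 3^(i+1)) := fun j =>
      Summable.of_nonneg_of_le (fun i => (hub2 j i).1) (fun i => (hub2 j i).2) hgeo
    have hbracket : ∀ n (j : Fin Nn),
        (∑ i ∈ range (n+1), D n j i/3^(i+1)) ≤ x j ∧
        x j ≤ (∑ i ∈ range (n+1), D n j i/3^(i+1)) + (1/3:ℝ)^(n+1) := by
      intro n j
      have hpart : ∑ i ∈ range (n+1), D i j i/3^(i+1)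
          = ∑ i ∈ range (n+1), D n j i/3^(i+1) :=
        Finset.sum_congr rfl (fun i hi => by
          rw [hstab n i j (Nat.lt_succ_iff.1 (Finset.mem_range.1 hi))])
      have hsplit := Summable.sum_add_tsum_nat_add (f := fun i : ℕ => D i j i / 3^(i+1)) (n+1) (hsumm j)
      have htail0 : 0 ≤ ∑' i : ℕ, D (i+(n+1)) j (i+(n+1))/3^(i+(n+1)+1) :=
        tsum_nonneg (fun i => (hub2 j (i+(n+1))).1)
      have he : (fun i : ℕ => (2:ℝ)/3^(i+(n+1)+1)) = fun i => (2/3^(n+2)) * (1/3)^i := by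
        funext i
        rw [div_pow, one_pow, show i+(n+1)+1 = (n+2)+i by omega, pow_add, div_mul_div_comm,
          mul_one]
      have hgeo2 : Summable (fun i : ℕ => (2:ℝ)/3^(i+(n+1)+1)) := by
        rw [he]
        exact (summable_geometric_of_lt_one (by norm_num) (by norm_num)).mul_left _
      have htail1 : ∑' i : ℕ, D (i+(n+1)) j (i+(n+1))/3^(i+(n+1)+1) ≤ (1/3:ℝ)^(n+1) := by
        have hle := Summable.tsum_le_tsum (fun i => (hub2 j (i+(n+1))).2)
          ((summable_nat_add_iff (n+1)).2 (hsumm j)) hgeo2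
        have hval : ∑' i : ℕ, (2:ℝ)/3^(i+(n+1)+1) = (1/3:ℝ)^(n+1) := by
          rw [he, tsum_mul_left, tsum_geometric_of_lt_one (by norm_num) (by norm_num)]
          rw [div_pow, one_pow, show n+2 = (n+1)+1 by omega, pow_succ]
          have h3 : (3:ℝ)^(n+1) ≠ 0 := by positivity
          field_simp
          ring
        rw [hval] at hle; exact hle
      have hxj : ∑ i ∈ range (n+1), D i j i/3^(i+1)
          + ∑' i : ℕ, D (i+(n+1)) j (i+(n+1))/3^(i+(n+1)+1) = x j := hsplit
      rw [hpart] at hxj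
      constructor
      · linarith
      · linarith
    have hx0 : ∀ j, 0 ≤ x j := fun j => tsum_nonneg (fun i => (hub2 j i).1)
    set s := ∑ j : Fin Nn, (x j)^m with hs
    have hclose : ∀ n : ℕ, |s - y| ≤ (Nn:ℝ)*m*(1/3:ℝ)^(n+1) := by
      intro n
      obtain ⟨hdv, hd0, hdz, hσn, hτn⟩ := hD n
      have h1 : ∀ j : Fin Nn, (0:ℝ) ≤ ∑ i ∈ range (n+1), D n j i/3^(i+1) :=
        fun j => le_trans (by norm_num) (a_lb (n := n) (hdv j) (hd0 j))
      have h2 : ∀ j : Fin Nn, (∑ i ∈ range (n+1), D n j i/3^(i+1)) + (1/3:ℝ)^(n+1) ≤ 1 :=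
        fun j => by have := a_ub (n := n) (hdv j); linarith
      have hσs : ∑ j : Fin Nn, (∑ i ∈ range (n+1), D n j i/3^(i+1))^m ≤ s :=
        Finset.sum_le_sum fun j _ => pow_le_pow_left₀ (h1 j) (hbracket n j).1 m
      have hτs : s ≤ ∑ j : Fin Nn, ((∑ i ∈ range (n+1), D n j i/3^(i+1)) + (1/3:ℝ)^(n+1))^m :=
        Finset.sum_le_sum fun j _ => pow_le_pow_left₀ (hx0 j) (hbracket n j).2 m
      have hgap : ∑ j : Fin Nn, ((∑ i ∈ range (n+1), D n j i/3^(i+1)) + (1/3:ℝ)^(n+1))^m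
          - ∑ j : Fin Nn, (∑ i ∈ range (n+1), D n j i/3^(i+1))^m
          ≤ (Nn:ℝ)*m*(1/3:ℝ)^(n+1) := by
        rw [← Finset.sum_sub_distrib]
        have hterm : ∀ j ∈ (univ : Finset (Fin Nn)),
            ((∑ i ∈ range (n+1), D n j i/3^(i+1)) + (1/3:ℝ)^(n+1))^m
            - (∑ i ∈ range (n+1), D n j i/3^(i+1))^m ≤ (m:ℝ)*((1/3:ℝ)^(n+1)) := by
          intro j _
          have hxx : (∑ i ∈ range (n+1), D n j i/3^(i+1))
              ≤ (∑ i ∈ range (n+1), D n j i/3^(i+1)) + (1/3:ℝ)^(n+1) := by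
            have hq : (0:ℝ) ≤ (1/3:ℝ)^(n+1) := by positivity
            linarith
          have hstep2 := pow_diff_le m (h1 j) hxx (h2 j)
          calc ((∑ i ∈ range (n+1), D n j i/3^(i+1)) + (1/3:ℝ)^(n+1))^m
                - (∑ i ∈ range (n+1), D n j i/3^(i+1))^m
              ≤ (m:ℝ) * ((∑ i ∈ range (n+1), D n j i/3^(i+1)) + (1/3:ℝ)^(n+1)
                - (∑ i ∈ range (n+1), D n j i/3^(i+1))) := hstep2
            _ = (m:ℝ)*((1/3:ℝ)^(n+1)) := by ring
        calc ∑ j : Fin Nn, (((∑ i ∈ range (n+1), D n j i/3^(i+1)) + (1/3:ℝ)^(n+1))^m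
              - (∑ i ∈ range (n+1), D n j i/3^(i+1))^m)
            ≤ ∑ _j : Fin Nn, (m:ℝ)*((1/3:ℝ)^(n+1)) := Finset.sum_le_sum hterm
          _ = (Nn:ℝ)*m*(1/3:ℝ)^(n+1) := by
              rw [Finset.sum_const, card_univ, Fintype.card_fin, nsmul_eq_mul]; ring
      rw [abs_sub_le_iff]
      constructor
      · linarith
      · linarith
    have hsy : s = y := by
      by_contra hne
      have hpos : 0 < |s - y| := abs_pos.2 (sub_ne_zero.2 hne)
      have hc1 : (0:ℝ) < (Nn:ℝ)*m + 1 := by positivity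
      obtain ⟨n, hn⟩ := exists_pow_lt_of_lt_one
        (show (0:ℝ) < |s-y| / ((Nn:ℝ)*m + 1) by positivity)
        (by norm_num : (1/3:ℝ) < 1)
      have h := hclose n
      have hp : (0:ℝ) < (1/3:ℝ)^n := by positivity
      have hnn : (0:ℝ) ≤ (Nn:ℝ)*m := by positivity
      have h2 : |s - y| ≤ ((Nn:ℝ)*m + 1)*(1/3:ℝ)^n := by
        calc |s-y| ≤ (Nn:ℝ)*m*(1/3:ℝ)^(n+1) := h
          _ ≤ ((Nn:ℝ)*m+1)*(1/3:ℝ)^n := by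
            rw [pow_succ]
            nlinarith [hp, hnn]
      have h3 := (lt_div_iff₀ hc1).1 hn
      nlinarith [h2, h3]
    exact ⟨x, fun j => ⟨fun i => D i j i, fun i => hdig j i, by rw [hxdef]⟩,
      hsy.symm.trans hs⟩
  · ring
end

section
/- The set of sums of four squares of elements of the middle-thirds Cantor set is the full interval [0,4]; that is, {x_1^2 + x_2^2 + x_3^2 + x_4^2 : x_1, x_2, x_3, x_4 ∈ 𝒞} = [0,4]. -/
namespace CantorFourSq

structure St where
  m : Fin 4 → ℕ
  t : Fin 4 → ℕ → ℝ

noncomputable def pre (s : St) (i : Fin 4) : ℝ :=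
  ∑ j ∈ Finset.range (s.m i), s.t i (j + 1) / 3 ^ (j + 1)

noncomputable def G (s : St) (i : Fin 4) : ℝ := (1 / 3 : ℝ) ^ (s.m i)

noncomputable def w (s : St) (i : Fin 4) : ℝ := 2 * pre s i * G s i + G s i ^ 2

noncomputable def W (s : St) : ℝ := ∑ i, w s i

noncomputable def pick (s : St) : Fin 4 :=
  Classical.choose (Finset.exists_max_image Finset.univ (w s) ⟨0, Finset.mem_univ 0⟩)

lemma pick_spec (s : St) : ∀ j, w s j ≤ w s (pick s) := by
  have h := Classical.choose_spec
    (Finset.exists_max_image Finset.univ (w s) ⟨0, Finset.mem_univ 0⟩)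
  exact fun j => h.2 j (Finset.mem_univ j)

open scoped Classical in
/-- the digit chosen : 0 or 2 -/
noncomputable def dig (z : ℝ) (s : St) : ℝ :=
  if z - ∑ j, (pre s j) ^ 2
      ≤ W s - (4 / 3 * pre s (pick s) * G s (pick s) + 8 / 9 * G s (pick s) ^ 2)
  then 0 else 2

noncomputable def step (z : ℝ) (s : St) : St where
  m := Function.update s.m (pick s) (s.m (pick s) + 1)
  t := Function.update s.t (pick s)
        (fun j => if j = s.m (pick s) + 1 then dig z s else s.t (pick s) j)

lemma dig_mem (z : ℝ) (s : St) : dig z s = 0 ∨ dig z s = 2 := by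
  unfold dig; split <;> simp

lemma step_m_pick (z : ℝ) (s : St) : (step z s).m (pick s) = s.m (pick s) + 1 := by
  simp [step]

lemma step_m_ne (z : ℝ) (s : St) {j : Fin 4} (h : j ≠ pick s) :
    (step z s).m j = s.m j := by
  simp [step, Function.update_of_ne h]

lemma step_t_ne (z : ℝ) (s : St) {j : Fin 4} (h : j ≠ pick s) :
    (step z s).t j = s.t j := by
  simp [step, Function.update_of_ne h]

lemma step_t_pick_old (z : ℝ) (s : St) {j : ℕ} (h : j ≠ s.m (pick s) + 1) :
    (step z s).t (pick s) j = s.t (pick s) j := by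
  simp [step, h]

lemma step_t_pick_new (z : ℝ) (s : St) :
    (step z s).t (pick s) (s.m (pick s) + 1) = dig z s := by
  simp [step]

lemma pre_step_ne (z : ℝ) (s : St) {j : Fin 4} (h : j ≠ pick s) :
    pre (step z s) j = pre s j := by
  unfold pre
  rw [step_m_ne z s h, step_t_ne z s h]

lemma G_step_ne (z : ℝ) (s : St) {j : Fin 4} (h : j ≠ pick s) :
    G (step z s) j = G s j := by
  unfold G; rw [step_m_ne z s h]

lemma w_step_ne (z : ℝ) (s : St) {j : Fin 4} (h : j ≠ pick s) :
    w (step z s) j = w s j := by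
  unfold w; rw [pre_step_ne z s h, G_step_ne z s h]

lemma G_step_pick (z : ℝ) (s : St) :
    G (step z s) (pick s) = G s (pick s) / 3 := by
  unfold G
  rw [step_m_pick, pow_succ]
  ring

lemma pre_step_pick (z : ℝ) (s : St) :
    pre (step z s) (pick s) = pre s (pick s) + dig z s / 3 * G s (pick s) := by
  unfold pre
  rw [step_m_pick, Finset.sum_range_succ]
  have h1 : ∀ j ∈ Finset.range (s.m (pick s)),
      (step z s).t (pick s) (j + 1) / 3 ^ (j + 1)
        = s.t (pick s) (j + 1) / 3 ^ (j + 1) := by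
    intro j hj
    rw [step_t_pick_old]
    have := Finset.mem_range.mp hj
    omega
  rw [Finset.sum_congr rfl h1, step_t_pick_new]
  unfold G
  have hrw : ((1:ℝ)/3) ^ (s.m (pick s)) = ((3:ℝ) ^ (s.m (pick s)))⁻¹ := by
    rw [one_div, inv_pow]
  rw [hrw, pow_succ]
  have h4 : (0:ℝ) < 3 ^ (s.m (pick s)) := by positivity
  field_simp


lemma G_pos (s : St) (i : Fin 4) : 0 < G s i := by unfold G; positivity

def Inv (z : ℝ) (s : St) : Prop :=
  (∀ i j, s.t i j = 0 ∨ s.t i j = 2) ∧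
  (∀ i, 0 ≤ pre s i) ∧
  0 ≤ z - ∑ j, (pre s j) ^ 2 ∧
  z - ∑ j, (pre s j) ^ 2 ≤ W s ∧
  ∀ i j, w s i ≤ 9 * w s j

lemma sum_update_aux (f g : Fin 4 → ℝ) (i : Fin 4) (h : ∀ j, j ≠ i → g j = f j) :
    ∑ j, g j = ∑ j, f j + (g i - f i) := by
  have hg : g = Function.update f i (g i) := by
    funext j
    by_cases hj : j = i
    · subst hj; simp
    · simp [Function.update_of_ne hj, h j hj]
  rw [hg, Finset.sum_update_of_mem (Finset.mem_univ i)]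
  have h2 : ∑ x ∈ Finset.univ \ {i}, f x + f i = ∑ j, f j := by
    have h3 : Finset.univ \ {i} = Finset.univ.erase i := by
      ext a; simp [Finset.mem_erase, and_comm]
    rw [h3]
    exact Finset.sum_erase_add _ _ (Finset.mem_univ i)
  rw [Function.update_self]
  linarith

lemma four_thirds_w_le (s : St) (hΩ : ∀ i j, w s i ≤ 9 * w s j) (i : Fin 4) :
    4 / 3 * w s i ≤ W s := by
  have h0 := hΩ i 0
  have h1 := hΩ i 1
  have h2 := hΩ i 2
  have h3 := hΩ i 3
  have hW : W s = w s 0 + w s 1 + w s 2 + w s 3 := by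
    unfold W; rw [Fin.sum_univ_four]
  fin_cases i <;> simp at h0 h1 h2 h3 ⊢ <;> linarith

section Alg
variable {z S Wv P g d : ℝ}

lemma alg_h0_0 (h : 0 ≤ z - S) : 0 ≤ z - (S + ((P + 0 / 3 * g) ^ 2 - P ^ 2)) := by
  ring_nf; ring_nf at h; linarith

lemma alg_h0_2 (hP : 0 ≤ P) (hg : 0 < g)
    (hQ : 8 / 3 * P * g + 4 / 3 * g ^ 2 ≤ Wv)
    (hc : Wv - (4 / 3 * P * g + 8 / 9 * g ^ 2) < z - S) :
    0 ≤ z - (S + ((P + 2 / 3 * g) ^ 2 - P ^ 2)) := by nlinarith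

lemma alg_hW_0 (hc : z - S ≤ Wv - (4 / 3 * P * g + 8 / 9 * g ^ 2)) :
    z - (S + ((P + 0 / 3 * g) ^ 2 - P ^ 2))
      ≤ Wv + ((2 * (P + 0 / 3 * g) * (g / 3) + (g / 3) ^ 2) - (2 * P * g + g ^ 2)) := by
  ring_nf; ring_nf at hc; linarith

lemma alg_hW_2 (h : z - S ≤ Wv) :
    z - (S + ((P + 2 / 3 * g) ^ 2 - P ^ 2))
      ≤ Wv + ((2 * (P + 2 / 3 * g) * (g / 3) + (g / 3) ^ 2) - (2 * P * g + g ^ 2)) := by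
  ring_nf; ring_nf at h; linarith

lemma alg_wle (hP : 0 ≤ P) (hg : 0 < g) (hd : d = 0 ∨ d = 2) :
    2 * (P + d / 3 * g) * (g / 3) + (g / 3) ^ 2 ≤ 2 * P * g + g ^ 2 := by
  rcases hd with hd | hd <;> rw [hd] <;> nlinarith

lemma alg_wge (hP : 0 ≤ P) (hg : 0 < g) (hd : d = 0 ∨ d = 2) :
    (2 * P * g + g ^ 2) / 9 ≤ 2 * (P + d / 3 * g) * (g / 3) + (g / 3) ^ 2 := by
  rcases hd with hd | hd <;> rw [hd] <;> nlinarith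

lemma alg_wnn (hP : 0 ≤ P) (hg : 0 < g) (hd : d = 0 ∨ d = 2) :
    0 ≤ 2 * (P + d / 3 * g) * (g / 3) + (g / 3) ^ 2 := by
  rcases hd with hd | hd <;> rw [hd] <;> nlinarith

lemma alg_pre_nn (hP : 0 ≤ P) (hg : 0 < g) (hd : d = 0 ∨ d = 2) :
    0 ≤ P + d / 3 * g := by
  rcases hd with hd | hd <;> rw [hd] <;> nlinarith

end Alg

lemma inv_step (z : ℝ) (s : St) (h : Inv z s) : Inv z (step z s) := by
  obtain ⟨hdig, hpre, hr0, hrW, hΩ⟩ := h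
  have hg : 0 < G s (pick s) := G_pos s (pick s)
  have hP : 0 ≤ pre s (pick s) := hpre (pick s)
  have e1 : pre (step z s) (pick s)
      = pre s (pick s) + dig z s / 3 * G s (pick s) := pre_step_pick z s
  have e2 : ∀ j, j ≠ pick s → pre (step z s) j = pre s j :=
    fun j hj => pre_step_ne z s hj
  have e3 : w (step z s) (pick s)
      = 2 * (pre s (pick s) + dig z s / 3 * G s (pick s)) * (G s (pick s) / 3)
        + (G s (pick s) / 3) ^ 2 := by
    unfold w
    rw [e1, G_step_pick]
  have ewi : w s (pick s) = 2 * pre s (pick s) * G s (pick s) + G s (pick s) ^ 2 := rfl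
  have e4 : ∑ j, (pre (step z s) j) ^ 2
      = ∑ j, (pre s j) ^ 2
        + ((pre s (pick s) + dig z s / 3 * G s (pick s)) ^ 2 - pre s (pick s) ^ 2) := by
    have hs := sum_update_aux (fun j => (pre s j) ^ 2) (fun j => (pre (step z s) j) ^ 2)
      (pick s) (fun j hj => by
        show (pre (step z s) j) ^ 2 = (pre s j) ^ 2
        rw [e2 j hj])
    rw [hs, e1]
  have e5 : W (step z s) = W s + (w (step z s) (pick s) - w s (pick s)) := by
    unfold W
    exact sum_update_aux (w s) (w (step z s)) (pick s) (fun j hj => w_step_ne z s hj)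
  have hQ : 8 / 3 * pre s (pick s) * G s (pick s) + 4 / 3 * G s (pick s) ^ 2 ≤ W s := by
    have := four_thirds_w_le s hΩ (pick s)
    rw [ewi] at this
    linarith
  have hdig' : ∀ a b, (step z s).t a b = 0 ∨ (step z s).t a b = 2 := by
    intro a b
    by_cases ha : a = pick s
    · by_cases hb : b = s.m (pick s) + 1
      · rw [ha, hb, step_t_pick_new]
        exact dig_mem z s
      · rw [ha, step_t_pick_old z s hb]
        exact hdig (pick s) b
    · rw [step_t_ne z s ha]
      exact hdig a b
  have hpre' : ∀ j, 0 ≤ pre (step z s) j := by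
    intro j
    by_cases hj : j = pick s
    · rw [hj, e1]
      exact alg_pre_nn hP hg (dig_mem z s)
    · rw [e2 j hj]; exact hpre j
  have h0' : 0 ≤ z - ∑ j, (pre (step z s) j) ^ 2 := by
    by_cases hc : z - ∑ j, (pre s j) ^ 2
        ≤ W s - (4 / 3 * pre s (pick s) * G s (pick s) + 8 / 9 * G s (pick s) ^ 2)
    · have hd : dig z s = 0 := by unfold dig; exact if_pos hc
      rw [e4, hd]
      exact alg_h0_0 hr0
    · have hd : dig z s = 2 := by unfold dig; exact if_neg hc
      push_neg at hc
      rw [e4, hd]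
      exact alg_h0_2 hP hg hQ hc
  have hW' : z - ∑ j, (pre (step z s) j) ^ 2 ≤ W (step z s) := by
    by_cases hc : z - ∑ j, (pre s j) ^ 2
        ≤ W s - (4 / 3 * pre s (pick s) * G s (pick s) + 8 / 9 * G s (pick s) ^ 2)
    · have hd : dig z s = 0 := by unfold dig; exact if_pos hc
      rw [e4, e5, e3, hd, ewi]
      exact alg_hW_0 hc
    · have hd : dig z s = 2 := by unfold dig; exact if_neg hc
      rw [e4, e5, e3, hd, ewi]
      exact alg_hW_2 hrW
  have hΩ' : ∀ a b, w (step z s) a ≤ 9 * w (step z s) b := by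
    have hwi_le : w (step z s) (pick s) ≤ w s (pick s) := by
      rw [e3, ewi]
      exact alg_wle hP hg (dig_mem z s)
    have hwi_ge : w s (pick s) / 9 ≤ w (step z s) (pick s) := by
      rw [e3, ewi]
      exact alg_wge hP hg (dig_mem z s)
    have hwnn : 0 ≤ w (step z s) (pick s) := by
      rw [e3]
      exact alg_wnn hP hg (dig_mem z s)
    intro a b
    by_cases ha : a = pick s <;> by_cases hb : b = pick s
    · rw [ha, hb]; linarith
    · rw [ha, w_step_ne z s hb]
      have := hΩ (pick s) b
      linarith
    · rw [hb, w_step_ne z s ha]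
      have h1 := pick_spec s a
      linarith
    · rw [w_step_ne z s ha, w_step_ne z s hb]
      exact hΩ a b
  exact ⟨hdig', hpre', h0', hW', hΩ'⟩

noncomputable def states (z : ℝ) : ℕ → St
  | 0 => ⟨fun _ => 0, fun _ _ => 0⟩
  | n + 1 => step z (states z n)

lemma inv_states (z : ℝ) (hz0 : 0 ≤ z) (hz4 : z ≤ 4) : ∀ n, Inv z (states z n) := by
  intro n
  induction n with
  | zero =>
    have hpre : ∀ i, pre (states z 0) i = 0 := by
      intro i; simp [states, pre]
    have hw : ∀ i, w (states z 0) i = 1 := by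
      intro i; simp [w, G, pre, states]
    refine ⟨?_, ?_, ?_, ?_, ?_⟩
    · intro i j; simp [states]
    · intro i; rw [hpre]
    · have : ∑ j, (pre (states z 0) j) ^ 2 = 0 := by
        rw [Fin.sum_univ_four, hpre, hpre, hpre, hpre]; ring
      rw [this]; linarith
    · have h1 : ∑ j, (pre (states z 0) j) ^ 2 = 0 := by
        rw [Fin.sum_univ_four, hpre, hpre, hpre, hpre]; ring
      have h2 : W (states z 0) = 4 := by
        unfold W; rw [Fin.sum_univ_four, hw, hw, hw, hw]; norm_num
      rw [h1, h2]; linarith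
    · intro i j; rw [hw, hw]; norm_num
  | succ n ih => exact inv_step z (states z n) ih

lemma w_nonneg (s : St) (hpre : ∀ i, 0 ≤ pre s i) (i : Fin 4) : 0 ≤ w s i := by
  have := G_pos s i
  have := hpre i
  unfold w
  nlinarith

lemma w_le_W (s : St) (hpre : ∀ i, 0 ≤ pre s i) (i : Fin 4) : w s i ≤ W s := by
  have h0 := w_nonneg s hpre 0
  have h1 := w_nonneg s hpre 1
  have h2 := w_nonneg s hpre 2
  have h3 := w_nonneg s hpre 3
  have hW : W s = w s 0 + w s 1 + w s 2 + w s 3 := by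
    unfold W; rw [Fin.sum_univ_four]
  fin_cases i <;> simp at h0 h1 h2 h3 ⊢ <;> linarith

lemma W_le_four_w (s : St) : W s ≤ 4 * w s (pick s) := by
  have h0 := pick_spec s 0
  have h1 := pick_spec s 1
  have h2 := pick_spec s 2
  have h3 := pick_spec s 3
  have hW : W s = w s 0 + w s 1 + w s 2 + w s 3 := by
    unfold W; rw [Fin.sum_univ_four]
  linarith

lemma alg_w_drop {P g d : ℝ} (hP : 0 ≤ P) (hg : 0 < g) (hd : d = 0 ∨ d = 2) :
    2 * (P + d / 3 * g) * (g / 3) + (g / 3) ^ 2 ≤ 5 / 9 * (2 * P * g + g ^ 2) := by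
  rcases hd with hd | hd <;> rw [hd] <;> nlinarith

lemma W_decay (z : ℝ) (s : St) (h : Inv z s) : W (step z s) ≤ 8 / 9 * W s := by
  obtain ⟨hdig, hpre, hr0, hrW, hΩ⟩ := h
  have hg : 0 < G s (pick s) := G_pos s (pick s)
  have hP : 0 ≤ pre s (pick s) := hpre (pick s)
  have e3 : w (step z s) (pick s)
      = 2 * (pre s (pick s) + dig z s / 3 * G s (pick s)) * (G s (pick s) / 3)
        + (G s (pick s) / 3) ^ 2 := by
    unfold w
    rw [pre_step_pick z s, G_step_pick]
  have e5 : W (step z s) = W s + (w (step z s) (pick s) - w s (pick s)) := by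
    unfold W
    exact sum_update_aux (w s) (w (step z s)) (pick s) (fun j hj => w_step_ne z s hj)
  have hdrop : w (step z s) (pick s) ≤ 5 / 9 * w s (pick s) := by
    rw [e3]
    have := alg_w_drop hP hg (dig_mem z s)
    calc 2 * (pre s (pick s) + dig z s / 3 * G s (pick s)) * (G s (pick s) / 3)
        + (G s (pick s) / 3) ^ 2
        ≤ 5 / 9 * (2 * pre s (pick s) * G s (pick s) + G s (pick s) ^ 2) := this
      _ = 5 / 9 * w s (pick s) := rfl
  have h4 := W_le_four_w s
  linarith

lemma W_bound (z : ℝ) (hz0 : 0 ≤ z) (hz4 : z ≤ 4) (n : ℕ) :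
    W (states z n) ≤ 4 * (8 / 9 : ℝ) ^ n := by
  induction n with
  | zero =>
    have hw : ∀ i, w (states z 0) i = 1 := by
      intro i; simp [w, G, pre, states]
    have h2 : W (states z 0) = 4 := by
      unfold W; rw [Fin.sum_univ_four, hw, hw, hw, hw]; norm_num
    rw [h2]; norm_num
  | succ n ih =>
    have h1 : W (states z (n + 1)) ≤ 8 / 9 * W (states z n) :=
      W_decay z (states z n) (inv_states z hz0 hz4 n)
    calc W (states z (n + 1)) ≤ 8 / 9 * W (states z n) := h1
      _ ≤ 8 / 9 * (4 * (8 / 9 : ℝ) ^ n) := by linarith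
      _ = 4 * (8 / 9 : ℝ) ^ (n + 1) := by ring

lemma m_mono_step (z : ℝ) (s : St) (i : Fin 4) : s.m i ≤ (step z s).m i := by
  by_cases hi : i = pick s
  · rw [hi, step_m_pick]; omega
  · rw [step_m_ne z s hi]

lemma m_mono (z : ℝ) (i : Fin 4) : Monotone fun n => (states z n).m i :=
  monotone_nat_of_le_succ fun n => m_mono_step z (states z n) i

lemma t_stable (z : ℝ) (i : Fin 4) (j : ℕ) {n n' : ℕ} (h : n ≤ n')
    (hj : j ≤ (states z n).m i) : (states z n').t i j = (states z n).t i j := by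
  induction n', h using Nat.le_induction with
  | base => rfl
  | succ n' hn ih =>
    have h2 : j ≤ (states z n').m i := le_trans hj (m_mono z i hn)
    show (step z (states z n')).t i j = _
    by_cases hi : i = pick (states z n')
    · have hne : j ≠ (states z n').m (pick (states z n')) + 1 := by
        rw [← hi]; omega
      rw [hi, step_t_pick_old _ _ hne, ← hi, ih]
    · rw [step_t_ne _ _ hi, ih]

lemma m_unbounded (z : ℝ) (hz0 : 0 ≤ z) (hz4 : z ≤ 4) (i : Fin 4) (k : ℕ) :
    ∃ n, k ≤ (states z n).m i := by
  obtain ⟨n, hn⟩ := exists_pow_lt_of_lt_one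
    (show (0:ℝ) < ((1/3:ℝ) ^ k) ^ 2 / 4 by positivity)
    (show (8/9:ℝ) < 1 by norm_num)
  refine ⟨n, ?_⟩
  have hinv := inv_states z hz0 hz4 n
  have hG : ((1/3:ℝ) ^ ((states z n).m i)) ^ 2 ≤ w (states z n) i := by
    have h1 : (0:ℝ) < (1/3:ℝ) ^ ((states z n).m i) := by positivity
    have h2 : 0 ≤ pre (states z n) i := hinv.2.1 i
    unfold w G
    nlinarith [mul_nonneg h2 h1.le]
  have hwW : w (states z n) i ≤ W (states z n) := w_le_W _ hinv.2.1 i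
  have hWb := W_bound z hz0 hz4 n
  have hlt : ((1/3:ℝ) ^ ((states z n).m i)) ^ 2 < ((1/3:ℝ) ^ k) ^ 2 := by
    have : (4:ℝ) * (8/9) ^ n < ((1/3:ℝ) ^ k) ^ 2 := by nlinarith
    linarith
  have hlt2 : (1/3:ℝ) ^ ((states z n).m i) < (1/3:ℝ) ^ k := by
    by_contra hcon
    push_neg at hcon
    have : ((1/3:ℝ) ^ k) ^ 2 ≤ ((1/3:ℝ) ^ ((states z n).m i)) ^ 2 := by
      have h0 : (0:ℝ) ≤ (1/3:ℝ) ^ k := by positivity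
      nlinarith
    linarith
  have := (pow_lt_pow_iff_right_of_lt_one₀ (show (0:ℝ) < 1/3 by norm_num)
    (show (1/3:ℝ) < 1 by norm_num)).mp hlt2
  omega

lemma one_div_pow3 (j : ℕ) : (1/3:ℝ) ^ j = 1 / 3 ^ j := by
  rw [div_pow, one_pow]

lemma summable_digits (u : ℕ → ℝ) (hu : ∀ k, u k = 0 ∨ u k = 2) :
    Summable (fun k => u k / 3 ^ (k + 1)) := by
  have hge : ∀ k, 0 ≤ u k := fun k => by rcases hu k with h | h <;> rw [h] <;> norm_num
  have hle : ∀ k, u k ≤ 2 := fun k => by rcases hu k with h | h <;> rw [h] <;> norm_num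
  have hg : Summable (fun k : ℕ => (2:ℝ) * (1/3) ^ k) :=
    (summable_geometric_of_lt_one (by norm_num) (by norm_num)).mul_left 2
  refine Summable.of_nonneg_of_le (fun k => div_nonneg (hge k) (by positivity)) (fun k => ?_) hg
  rw [one_div_pow3]
  have h3 : (0:ℝ) < 3 ^ k := by positivity
  have h4 : (0:ℝ) < 3 ^ (k+1) := by positivity
  have h5 : (3:ℝ) ^ k ≤ 3 ^ (k+1) := by
    rw [pow_succ]; nlinarith
  calc u k / 3 ^ (k+1) ≤ 2 / 3 ^ (k+1) := by
        exact div_le_div_of_nonneg_right (hle k) h4.le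
      _ ≤ 2 / 3 ^ k := by
        apply div_le_div_of_nonneg_left (by norm_num) h3 h5
      _ = 2 * (1 / 3 ^ k) := by ring

lemma tsum_geom_aux (m : ℕ) : ∑' k : ℕ, 2 * (1/3:ℝ) ^ (k + m + 1) = (1/3:ℝ) ^ m := by
  have h1 : ∀ k : ℕ, 2 * (1/3:ℝ) ^ (k + m + 1) = (2 * (1/3:ℝ) ^ (m+1)) * (1/3) ^ k := by
    intro k
    have : k + m + 1 = k + (m + 1) := by omega
    rw [this, pow_add]
    ring
  rw [tsum_congr h1, tsum_mul_left,
    tsum_geometric_of_lt_one (by norm_num) (by norm_num), pow_succ]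
  norm_num
  ring

lemma summable_geom_aux (m : ℕ) : Summable (fun k : ℕ => 2 * (1/3:ℝ) ^ (k + m + 1)) := by
  have h1 : ∀ k : ℕ, (2 * (1/3:ℝ) ^ (m+1)) * (1/3) ^ k = 2 * (1/3:ℝ) ^ (k + m + 1) := by
    intro k
    have : k + m + 1 = k + (m + 1) := by omega
    rw [this, pow_add]
    ring
  exact Summable.congr
    ((summable_geometric_of_lt_one (by norm_num) (by norm_num)).mul_left _) h1

lemma C_bounds {x : ℝ} (h : x ∈ middleThirdsCantor) : 0 ≤ x ∧ x ≤ 1 := by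
  obtain ⟨t, ht, rfl⟩ := h
  have hge : ∀ k, 0 ≤ t k := fun k => by rcases ht k with h | h <;> rw [h] <;> norm_num
  have hle : ∀ k, t k ≤ 2 := fun k => by rcases ht k with h | h <;> rw [h] <;> norm_num
  have hsum := summable_digits t ht
  constructor
  · exact tsum_nonneg (fun k => div_nonneg (hge k) (by positivity))
  · have hb : ∀ k : ℕ, t k / 3 ^ (k + 1) ≤ 2 * (1/3:ℝ) ^ (k + 0 + 1) := by
      intro k
      have : k + 0 + 1 = k + 1 := by omega
      rw [this, one_div_pow3]
      have h4 : (0:ℝ) < 3 ^ (k+1) := by positivity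
      calc t k / 3 ^ (k+1) ≤ 2 / 3 ^ (k+1) := by
            exact div_le_div_of_nonneg_right (hle k) h4.le
        _ = 2 * (1 / 3 ^ (k+1)) := by ring
    calc ∑' k : ℕ, t k / 3 ^ (k + 1)
        ≤ ∑' k : ℕ, 2 * (1/3:ℝ) ^ (k + 0 + 1) :=
          Summable.tsum_le_tsum hb hsum (summable_geom_aux 0)
      _ = (1/3:ℝ) ^ 0 := tsum_geom_aux 0
      _ = 1 := by norm_num

lemma exists_rep (z : ℝ) (hz0 : 0 ≤ z) (hz4 : z ≤ 4) :
    ∃ x : Fin 4 → ℝ, (∀ i, x i ∈ middleThirdsCantor) ∧ z = ∑ i, (x i) ^ 2 := by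
  choose N hN using m_unbounded z hz0 hz4
  set D : Fin 4 → ℕ → ℝ := fun i j => (states z (N i j)).t i j with hD
  have hstab : ∀ (i : Fin 4) (j n : ℕ), j ≤ (states z n).m i →
      (states z n).t i j = D i j := by
    intro i j n h
    have h1 := t_stable z i j (le_max_left n (N i j)) h
    have h2 := t_stable z i j (le_max_right n (N i j)) (hN i j)
    rw [← h1, h2]
  have hD01 : ∀ i j, D i j = 0 ∨ D i j = 2 :=
    fun i j => (inv_states z hz0 hz4 (N i j)).1 i j
  set f : Fin 4 → ℕ → ℝ := fun i k => D i (k + 1) / 3 ^ (k + 1) with hf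
  have hfnn : ∀ i k, 0 ≤ f i k := by
    intro i k
    rcases hD01 i (k+1) with h | h <;>
      · show 0 ≤ D i (k+1) / 3 ^ (k+1)
        rw [h]; positivity
  have hsumf : ∀ i, Summable (f i) :=
    fun i => summable_digits (fun k => D i (k + 1)) (fun k => hD01 i (k + 1))
  set X : Fin 4 → ℝ := fun i => ∑' k, f i k with hX
  have hXmem : ∀ i, X i ∈ middleThirdsCantor :=
    fun i => ⟨fun k => D i (k + 1), fun k => hD01 i (k + 1), rfl⟩
  have hpre_eq : ∀ (i : Fin 4) (n : ℕ),
      pre (states z n) i = ∑ k ∈ Finset.range ((states z n).m i), f i k := by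
    intro i n
    unfold pre
    refine Finset.sum_congr rfl (fun j hj => ?_)
    have hjm : j + 1 ≤ (states z n).m i := by
      have := Finset.mem_range.mp hj; omega
    show (states z n).t i (j+1) / 3 ^ (j+1) = D i (j + 1) / 3 ^ (j + 1)
    rw [hstab i (j+1) n hjm]
  have htail : ∀ (i : Fin 4) (n : ℕ),
      pre (states z n) i ≤ X i ∧
      X i ≤ pre (states z n) i + (1/3:ℝ) ^ ((states z n).m i) := by
    intro i n
    have hplus := Summable.sum_add_tsum_nat_add (f := f i) ((states z n).m i) (hsumf i)
    have htnn : 0 ≤ ∑' k, f i (k + (states z n).m i) :=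
      tsum_nonneg (fun k => hfnn i _)
    have htub : ∑' k, f i (k + (states z n).m i) ≤ (1/3:ℝ) ^ ((states z n).m i) := by
      have hb : ∀ k : ℕ, f i (k + (states z n).m i)
          ≤ 2 * (1/3:ℝ) ^ (k + (states z n).m i + 1) := by
        intro k
        show D i (k + (states z n).m i + 1) / 3 ^ (k + (states z n).m i + 1) ≤ _
        rw [one_div_pow3]
        have h4 : (0:ℝ) < 3 ^ (k + (states z n).m i + 1) := by positivity
        have hle : D i (k + (states z n).m i + 1) ≤ 2 := by
          rcases hD01 i (k + (states z n).m i + 1) with h | h <;> rw [h] <;> norm_num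
        calc D i (k + (states z n).m i + 1) / 3 ^ (k + (states z n).m i + 1)
            ≤ 2 / 3 ^ (k + (states z n).m i + 1) :=
              div_le_div_of_nonneg_right hle h4.le
          _ = 2 * (1 / 3 ^ (k + (states z n).m i + 1)) := by ring
      calc ∑' k, f i (k + (states z n).m i)
          ≤ ∑' k : ℕ, 2 * (1/3:ℝ) ^ (k + (states z n).m i + 1) :=
            Summable.tsum_le_tsum hb ((summable_nat_add_iff _).mpr (hsumf i))
              (summable_geom_aux _)
        _ = (1/3:ℝ) ^ ((states z n).m i) := tsum_geom_aux _
    constructor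
    · rw [hpre_eq i n]
      have : X i = ∑ k ∈ Finset.range ((states z n).m i), f i k
          + ∑' k, f i (k + (states z n).m i) := by rw [hplus]
      linarith
    · rw [hpre_eq i n]
      have : X i = ∑ k ∈ Finset.range ((states z n).m i), f i k
          + ∑' k, f i (k + (states z n).m i) := by rw [hplus]
      linarith
  have hpre0 : ∀ i, pre (states z 0) i = 0 := by
    intro i; simp [states, pre]
  have hX01 : ∀ i, 0 ≤ X i ∧ X i ≤ 1 := by
    intro i
    have h := htail i 0
    have hm0 : (states z 0).m i = 0 := rfl
    rw [hpre0 i, hm0] at h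
    norm_num at h
    exact h
  refine ⟨X, hXmem, ?_⟩
  have key : ∀ ε : ℝ, 0 < ε → |z - ∑ i, (X i) ^ 2| ≤ ε := by
    intro ε hε
    obtain ⟨k, hk⟩ := exists_pow_lt_of_lt_one
      (show (0:ℝ) < ε/16 by linarith) (show (1/3:ℝ) < 1 by norm_num)
    obtain ⟨n1, hn1⟩ := exists_pow_lt_of_lt_one
      (show (0:ℝ) < ε/8 by linarith) (show (8/9:ℝ) < 1 by norm_num)
    set n := max (max (N 0 k) (N 1 k)) (max (max (N 2 k) (N 3 k)) n1) with hn
    have hm : ∀ i, k ≤ (states z n).m i := by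
      intro i
      have hle1 : N i k ≤ n := by
        match i with
        | 0 => omega
        | 1 => omega
        | 2 => omega
        | 3 => omega
      exact le_trans (hN i k) (m_mono z i hle1)
    have hWn : W (states z n) ≤ ε / 2 := by
      have h1 := W_bound z hz0 hz4 n
      have h2 : ((8:ℝ)/9) ^ n ≤ (8/9:ℝ) ^ n1 :=
        pow_le_pow_of_le_one (by norm_num) (by norm_num) (by omega)
      nlinarith
    have hGk : ∀ i, (1/3:ℝ) ^ ((states z n).m i) ≤ (1/3:ℝ) ^ k :=
      fun i => pow_le_pow_of_le_one (by norm_num) (by norm_num) (hm i)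
    have hinv := inv_states z hz0 hz4 n
    have hr0 := hinv.2.2.1
    have hrW := hinv.2.2.2.1
    have hdiff : ∀ i, 0 ≤ X i ^ 2 - (pre (states z n) i) ^ 2 ∧
        X i ^ 2 - (pre (states z n) i) ^ 2 ≤ 2 * (1/3:ℝ) ^ k := by
      intro i
      have h1 := htail i n
      have h2 := hX01 i
      have h3 := (inv_states z hz0 hz4 n).2.1 i
      have h4 := hGk i
      constructor <;> nlinarith
    have hsum4 : ∑ i, (pre (states z n) i) ^ 2 ≤ ∑ i, (X i) ^ 2 ∧
        ∑ i, (X i) ^ 2 ≤ ∑ i, (pre (states z n) i) ^ 2 + 8 * (1/3:ℝ) ^ k := by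
      have e1 : ∑ i, (pre (states z n) i) ^ 2
          = (pre (states z n) 0)^2 + (pre (states z n) 1)^2
            + (pre (states z n) 2)^2 + (pre (states z n) 3)^2 := Fin.sum_univ_four _
      have e2 : ∑ i, (X i) ^ 2 = (X 0)^2 + (X 1)^2 + (X 2)^2 + (X 3)^2 :=
        Fin.sum_univ_four _
      have d0 := hdiff 0
      have d1 := hdiff 1
      have d2 := hdiff 2
      have d3 := hdiff 3
      rw [e1, e2]
      constructor <;> linarith
    have hk2 : 8 * (1/3:ℝ) ^ k ≤ ε / 2 := by nlinarith
    rw [abs_le]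
    constructor <;> nlinarith [hsum4.1, hsum4.2, hr0, hrW, hWn, hk2]
  have : z = ∑ i, (X i) ^ 2 := by
    apply eq_of_forall_dist_le
    intro ε hε
    rw [Real.dist_eq]
    exact key ε hε
  exact this

theorem main_aux :
    {x : ℝ | ∃ x₁ ∈ middleThirdsCantor, ∃ x₂ ∈ middleThirdsCantor,
        ∃ x₃ ∈ middleThirdsCantor, ∃ x₄ ∈ middleThirdsCantor,
          x = x₁ ^ 2 + x₂ ^ 2 + x₃ ^ 2 + x₄ ^ 2} = Set.Icc (0 : ℝ) 4 := by
  ext x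
  simp only [Set.mem_setOf_eq, Set.mem_Icc]
  constructor
  · rintro ⟨x1, h1, x2, h2, x3, h3, x4, h4, rfl⟩
    obtain ⟨a1, b1⟩ := C_bounds h1
    obtain ⟨a2, b2⟩ := C_bounds h2
    obtain ⟨a3, b3⟩ := C_bounds h3
    obtain ⟨a4, b4⟩ := C_bounds h4
    constructor <;> nlinarith
  · rintro ⟨h0, h4⟩
    obtain ⟨X, hmem, heq⟩ := exists_rep x h0 h4
    refine ⟨X 0, hmem 0, X 1, hmem 1, X 2, hmem 2, X 3, hmem 3, ?_⟩
    rw [heq, Fin.sum_univ_four]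

end CantorFourSq

theorem four_squares_of_cantor_eq_Icc :
    {x : ℝ | ∃ x₁ ∈ middleThirdsCantor, ∃ x₂ ∈ middleThirdsCantor,
        ∃ x₃ ∈ middleThirdsCantor, ∃ x₄ ∈ middleThirdsCantor,
          x = x₁ ^ 2 + x₂ ^ 2 + x₃ ^ 2 + x₄ ^ 2} = Set.Icc (0 : ℝ) 4 :=
  CantorFourSq.main_aux
end

section
/- For every integer m ≥ 1, the set of sums of 2^m many m-th powers of elements of the middle-thirds Cantor set is the full interval [0, 2^m]; that is, {x_1^m + x_2^m + … + x_{2^m}^m : x_1, …, x_{2^m} ∈ 𝒞} = [0, 2^m]. -/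
noncomputable section
namespace CP
open Finset

def pw (k : ℕ) : ℝ := (3:ℝ)⁻¹ ^ k

def c3 : ℕ → ℕ → ℝ
  | 0, _ => 0
  | (k+1), i => if i < 2^k then c3 k i / 3 else (2 + c3 k (i - 2^k)) / 3

def lam (k i : ℕ) : ℝ := c3 k (i+1) - (c3 k i + pw k)

lemma pw_pos (k : ℕ) : 0 < pw k := by unfold pw; positivity

lemma pw_succ (k : ℕ) : pw (k+1) = pw k / 3 := by
  simp [pw, pow_succ]; ring

lemma pw_zero : pw 0 = 1 := by simp [pw]

lemma c3_succ_lower (k i : ℕ) (h : i < 2^k) : c3 (k+1) i = c3 k i / 3 := by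
  simp [c3, if_pos h]

lemma c3_succ_upper (k i : ℕ) (h : 2^k ≤ i) : c3 (k+1) i = (2 + c3 k (i - 2^k)) / 3 := by
  simp [c3, if_neg (not_lt.mpr h)]

lemma c3_nonneg (k i : ℕ) : 0 ≤ c3 k i := by
  induction k generalizing i with
  | zero => simp [c3]
  | succ k ih =>
    by_cases h : i < 2^k
    · rw [c3_succ_lower k i h]; linarith [ih i]
    · rw [c3_succ_upper k i (not_lt.mp h)]; linarith [ih (i - 2^k)]

lemma c3_zero (k : ℕ) : c3 k 0 = 0 := by
  induction k with
  | zero => simp [c3]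
  | succ k ih => rw [c3_succ_lower k 0 (by positivity)]; simp [ih]

lemma c3_add_pw_le_one (k i : ℕ) (h : i < 2^k) : c3 k i + pw k ≤ 1 := by
  induction k generalizing i with
  | zero => simp [c3, pw]
  | succ k ih =>
    rw [pw_succ]
    by_cases h' : i < 2^k
    · rw [c3_succ_lower k i h']
      have := ih i h'
      linarith
    · have h2 : 2^k ≤ i := not_lt.mp h'
      rw [c3_succ_upper k i h2]
      have hlt : i - 2^k < 2^k := by
        have : 2^(k+1) = 2^k + 2^k := by ring
        omega
      have := ih (i - 2^k) hlt
      linarith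

lemma c3_last (k : ℕ) : c3 k (2^k - 1) = 1 - pw k := by
  induction k with
  | zero => simp [c3, pw]
  | succ k ih =>
    have h2 : 2^k ≤ 2^(k+1) - 1 := by
      have : 2^(k+1) = 2^k + 2^k := by ring
      have : 1 ≤ 2^k := Nat.one_le_two_pow
      omega
    rw [c3_succ_upper k _ h2]
    have he : 2^(k+1) - 1 - 2^k = 2^k - 1 := by
      have : 2^(k+1) = 2^k + 2^k := by ring
      omega
    rw [he, ih, pw_succ]
    ring

lemma lam_succ_lower (k i : ℕ) (h : i + 1 < 2^k) : lam (k+1) i = lam k i / 3 := by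
  unfold lam
  rw [c3_succ_lower k i (by omega), c3_succ_lower k (i+1) h, pw_succ]
  ring

lemma lam_succ_mid (k : ℕ) : lam (k+1) (2^k - 1) = 1/3 := by
  unfold lam
  have h1 : 1 ≤ 2^k := Nat.one_le_two_pow
  have he : 2^k - 1 + 1 = 2^k := by omega
  rw [he, c3_succ_upper k (2^k) le_rfl, c3_succ_lower k (2^k-1) (by omega), c3_last,
    Nat.sub_self, c3_zero, pw_succ]
  ring

lemma lam_succ_upper (k t : ℕ) : lam (k+1) (2^k + t) = lam k t / 3 := by
  unfold lam
  have h1 : 2^k ≤ 2^k + t := by omega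
  have h2 : 2^k ≤ 2^k + t + 1 := by omega
  rw [c3_succ_upper k _ h1, c3_succ_upper k _ h2, pw_succ]
  have e1 : 2^k + t - 2^k = t := by omega
  have e2 : 2^k + t + 1 - 2^k = t + 1 := by omega
  rw [e1, e2]
  ring

lemma lam_pos (k i : ℕ) (h : i + 1 < 2^k) : 0 < lam k i := by
  induction k generalizing i with
  | zero => omega
  | succ k ih =>
    rcases lt_trichotomy (i+1) (2^k) with h1 | h1 | h1
    · rw [lam_succ_lower k i h1]; linarith [ih i h1]
    · have : i = 2^k - 1 := by omega
      rw [this, lam_succ_mid]; norm_num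
    · have h2 : 2^k ≤ i := by omega
      obtain ⟨t, rfl⟩ : ∃ t, i = 2^k + t := ⟨i - 2^k, by omega⟩
      rw [lam_succ_upper]
      have ht : t + 1 < 2^k := by
        have : 2^(k+1) = 2^k + 2^k := by ring
        omega
      linarith [ih t ht]

lemma lam_le (k i : ℕ) (h : i + 1 < 2^k) : lam k i ≤ c3 k i + pw k := by
  induction k generalizing i with
  | zero => omega
  | succ k ih =>
    rcases lt_trichotomy (i+1) (2^k) with h1 | h1 | h1
    · rw [lam_succ_lower k i h1, c3_succ_lower k i (by omega), pw_succ]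
      have := ih i h1
      linarith
    · have hi : i = 2^k - 1 := by omega
      rw [hi, lam_succ_mid, c3_succ_lower k (2^k-1) (by have:1≤2^k := Nat.one_le_two_pow; omega),
        c3_last, pw_succ]
      linarith [pw_pos k]
    · obtain ⟨t, rfl⟩ : ∃ t, i = 2^k + t := ⟨i - 2^k, by omega⟩
      rw [lam_succ_upper, c3_succ_upper k _ (by omega), pw_succ]
      have e1 : 2^k + t - 2^k = t := by omega
      rw [e1]
      have ht : t + 1 < 2^k := by
        have : 2^(k+1) = 2^k + 2^k := by ring
        omega
      have := ih t ht
      linarith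

lemma c3_lam_le_one (k i : ℕ) (h : i + 1 < 2^k) : c3 k (i+1) + lam k i ≤ 1 := by
  induction k generalizing i with
  | zero => omega
  | succ k ih =>
    rcases lt_trichotomy (i+1) (2^k) with h1 | h1 | h1
    · rw [lam_succ_lower k i h1, c3_succ_lower k (i+1) h1]
      have := ih i h1
      linarith
    · have hi : i = 2^k - 1 := by omega
      have h1' : 1 ≤ 2^k := Nat.one_le_two_pow
      rw [hi, lam_succ_mid]
      have he : 2^k - 1 + 1 = 2^k := by omega
      rw [he, c3_succ_upper k (2^k) le_rfl, Nat.sub_self, c3_zero]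
      norm_num
    · obtain ⟨t, rfl⟩ : ∃ t, i = 2^k + t := ⟨i - 2^k, by omega⟩
      rw [lam_succ_upper, c3_succ_upper k _ (by omega)]
      have e2 : 2^k + t + 1 - 2^k = t + 1 := by omega
      rw [e2]
      have ht : t + 1 < 2^k := by
        have : 2^(k+1) = 2^k + 2^k := by ring
        omega
      have := ih t ht
      linarith

lemma dicho (k i i' : ℕ) (h : i + 1 < 2^k) (h' : i' < i) :
    c3 k (i'+1) ≤ c3 k i + pw k - lam k i ∨ c3 k (i'+1) + lam k i' ≤ c3 k i + pw k := by
  induction k generalizing i i' with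
  | zero => omega
  | succ k ih =>
    have hpow : (2:ℕ)^(k+1) = 2^k + 2^k := by ring
    have h1' : 1 ≤ (2:ℕ)^k := Nat.one_le_two_pow
    rcases lt_trichotomy (i+1) (2^k) with h1 | h1 | h1
    · -- G lower; G' lower too
      have hi' : i' + 1 < 2^k := by omega
      rw [lam_succ_lower k i h1, lam_succ_lower k i' hi',
        c3_succ_lower k i (by omega), c3_succ_lower k (i'+1) hi', pw_succ]
      rcases ih i i' h1 h' with hc | hc
      · left; linarith
      · right; linarith
    · -- G is the middle gap
      have hi : i = 2^k - 1 := by omega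
      right
      have hi' : i' + 1 < 2^k := by omega
      rw [hi, lam_succ_lower k i' hi', c3_succ_lower k (i'+1) hi',
        c3_succ_lower k (2^k-1) (by omega), c3_last, pw_succ]
      have := c3_lam_le_one k i' hi'
      linarith
    · -- G upper
      obtain ⟨t, rfl⟩ : ∃ t, i = 2^k + t := ⟨i - 2^k, by omega⟩
      have ht : t + 1 < 2^k := by omega
      have hG : c3 (k+1) (2^k+t) + pw (k+1) - lam (k+1) (2^k+t)
          = (2 + (c3 k t + pw k - lam k t)) / 3 := by
        rw [lam_succ_upper, c3_succ_upper k _ (by omega), pw_succ]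
        have e1 : 2^k + t - 2^k = t := by omega
        rw [e1]; ring
      rcases lt_trichotomy (i'+1) (2^k) with h2 | h2 | h2
      · -- G' strictly lower
        left
        rw [hG, c3_succ_lower k (i'+1) h2]
        have hle := c3_add_pw_le_one k (i'+1) h2
        have hpw := pw_pos k
        have hll := lam_le k t ht
        have hc : c3 k (i'+1) ≤ 1 := by linarith
        linarith
      · -- G' is the middle gap
        have hi' : i' = 2^k - 1 := by omega
        left
        rw [hG, hi']
        have he : 2^k - 1 + 1 = 2^k := by omega
        rw [he, c3_succ_upper k (2^k) le_rfl, Nat.sub_self, c3_zero]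
        have hll := lam_le k t ht
        linarith
      · -- G' upper too
        obtain ⟨t', rfl⟩ : ∃ t', i' = 2^k + t' := ⟨i' - 2^k, by omega⟩
        have ht' : t' < t := by omega
        have e2 : 2^k + t' + 1 = 2^k + (t'+1) := by omega
        rcases ih t t' ht ht' with hc | hc
        · left
          rw [hG, e2, c3_succ_upper k _ (by omega)]
          have e3 : 2^k + (t'+1) - 2^k = t' + 1 := by omega
          rw [e3]
          linarith
        · right
          rw [e2, c3_succ_upper k _ (by omega), lam_succ_upper k t',
            c3_succ_upper k _ (by omega), pw_succ]
          have e3 : 2^k + (t'+1) - 2^k = t' + 1 := by omega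
          have e4 : 2^k + t - 2^k = t := by omega
          rw [e3, e4]
          linarith

lemma sum_lower (m : ℕ) (a l : ℝ) :
    (a+l)^m - a^m = ∑ j ∈ Finset.range m, a^j * l^(m-j) * (Nat.choose m j) := by
  rw [add_pow, Finset.sum_range_succ]
  simp

lemma sum_upper (m : ℕ) (a l : ℝ) :
    (a+2*l)^m - (a+l)^m
      = ∑ j ∈ Finset.range m, a^j * (l^(m-j) * ((2:ℝ)^(m-j) - 1)) * (Nat.choose m j) := by
  rw [add_pow, add_pow, ← Finset.sum_sub_distrib, Finset.sum_range_succ]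
  simp only [Nat.sub_self, pow_zero, mul_one, Nat.choose_self, Nat.cast_one, sub_self, add_zero]
  apply Finset.sum_congr rfl
  intro j hj
  rw [mul_pow]
  ring

lemma pow_ineq1 (m : ℕ) (a l : ℝ) (ha : 0 ≤ a) (hl : 0 ≤ l) :
    (a + 2*l)^m - (a + l)^m ≤ ((2:ℝ)^m - 1) * ((a + l)^m - a^m) := by
  rw [sum_upper, sum_lower, Finset.mul_sum]
  apply Finset.sum_le_sum
  intro j hj
  have h1 : ((2:ℝ)^(m-j) - 1) ≤ (2:ℝ)^m - 1 := by
    have : (2:ℝ)^(m-j) ≤ 2^m := by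
      apply pow_le_pow_right₀ (by norm_num) (Nat.sub_le m j)
    linarith
  have h2 : (0:ℝ) ≤ a^j * l^(m-j) * (Nat.choose m j) := by positivity
  have h3 : (0:ℝ) ≤ (2:ℝ)^(m-j) - 1 := by
    have : (1:ℝ) ≤ 2^(m-j) := one_le_pow₀ (by norm_num)
    linarith
  calc a^j * (l^(m-j) * ((2:ℝ)^(m-j) - 1)) * (Nat.choose m j)
      = (a^j * l^(m-j) * (Nat.choose m j)) * ((2:ℝ)^(m-j) - 1) := by ring
    _ ≤ (a^j * l^(m-j) * (Nat.choose m j)) * ((2:ℝ)^m - 1) := by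
        apply mul_le_mul_of_nonneg_left h1 h2
    _ = ((2:ℝ)^m - 1) * (a^j * l^(m-j) * (Nat.choose m j)) := by ring

lemma pow_ineq2 (m : ℕ) (a b l : ℝ) (ha : 0 ≤ a) (hab : a ≤ b) (hl : 0 ≤ l) :
    (a + l)^m - a^m ≤ (b + l)^m - b^m := by
  rw [sum_lower, sum_lower]
  apply Finset.sum_le_sum
  intro j hj
  have h1 : a^j ≤ b^j := pow_le_pow_left₀ ha hab j
  have h2 : (0:ℝ) ≤ l^(m-j) * (Nat.choose m j) := by positivity
  calc a^j * l^(m-j) * (Nat.choose m j) = a^j * (l^(m-j) * (Nat.choose m j)) := by ring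
    _ ≤ b^j * (l^(m-j) * (Nat.choose m j)) := mul_le_mul_of_nonneg_right h1 h2
    _ = b^j * l^(m-j) * (Nat.choose m j) := by ring

lemma pow_lip (m : ℕ) (a b : ℝ) (ha : 0 ≤ a) (hab : a ≤ b) (hb : b ≤ 1) :
    b^m - a^m ≤ m * (b - a) := by
  induction m with
  | zero => simp
  | succ m ih =>
    have h1 : b^m ≤ 1 := pow_le_one₀ (le_trans ha hab) hb
    have h2 : a^m ≤ b^m := pow_le_pow_left₀ ha hab m
    have h3 : 0 ≤ a^m := pow_nonneg ha m
    have e : b^(m+1) - a^(m+1) = b*(b^m - a^m) + a^m*(b-a) := by ring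
    rw [e]
    push_cast
    nlinarith

-- monotonicity
lemma c3_lt_succ (k j : ℕ) (h : j + 1 < 2^k) : c3 k j < c3 k (j+1) := by
  have h1 := lam_pos k j h
  have h2 := pw_pos k
  unfold lam at h1
  linarith

lemma c3_mono (k : ℕ) {i j : ℕ} (hij : i ≤ j) (hj : j < 2^k) : c3 k i ≤ c3 k j := by
  obtain ⟨d, rfl⟩ : ∃ d, j = i + d := ⟨j - i, by omega⟩
  clear hij
  induction d with
  | zero => simp
  | succ d ih =>
    have h1 : i + d < 2^k := by omega
    have h2 := c3_lt_succ k (i+d) (by omega)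
    have h3 := ih h1
    have : i + (d+1) = (i + d) + 1 := by omega
    rw [this]
    linarith

/-- the f-size of gap `i` at level `k` -/
def gapf (m k i : ℕ) : ℝ := (c3 k (i+1))^m - (c3 k i + pw k)^m

section main
variable (m k : ℕ)

lemma gapf_nonneg (i : ℕ) (h : i + 1 < 2^k) : 0 ≤ gapf m k i := by
  unfold gapf
  have h1 := lam_pos k i h
  have h2 : (0:ℝ) ≤ c3 k i + pw k := by
    have := c3_nonneg k i; have := pw_pos k; linarith
  have h3 : c3 k i + pw k ≤ c3 k (i+1) := by unfold lam at h1; linarith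
  have := pow_le_pow_left₀ h2 h3 m
  linarith

lemma gapf_le_one (i : ℕ) (h : i + 1 < 2^k) : gapf m k i ≤ 1 := by
  unfold gapf
  have h1 : c3 k (i+1) + pw k ≤ 1 := c3_add_pw_le_one k (i+1) h
  have h2 : (0:ℝ) ≤ c3 k (i+1) := c3_nonneg k (i+1)
  have h3 : c3 k (i+1) ≤ 1 := by have := pw_pos k; linarith
  have h4 : (c3 k (i+1))^m ≤ 1 := pow_le_one₀ h2 h3
  have h5 : (0:ℝ) ≤ (c3 k i + pw k)^m := by
    have := c3_nonneg k i; have := pw_pos k; positivity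
  linarith

lemma two_pow_sub_one_ge (hm : 1 ≤ m) : (1:ℝ) ≤ (2:ℝ)^m - 1 := by
  have : (2:ℝ)^1 ≤ (2:ℝ)^m := pow_le_pow_right₀ (by norm_num) hm
  norm_num at this ⊢
  linarith

/-- Bridge lemma : a run delimited by gaps of f-size ≥ M (or the extreme ends)
has f-width at least M/(2^m-1). -/
lemma bridge (hm : 1 ≤ m) (a b : ℕ) (hab : a ≤ b) (hb : b < 2^k) (M : ℝ)
    (hM0 : 0 ≤ M) (hM1 : M ≤ 1)
    (hA : a = 0 ∨ M ≤ gapf m k (a-1))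
    (hB : b = 2^k - 1 ∨ M ≤ gapf m k b) :
    M ≤ ((2:ℝ)^m - 1) * ((c3 k b + pw k)^m - (c3 k a)^m) := by
  have h2m := two_pow_sub_one_ge m hm
  have hca0 : (0:ℝ) ≤ c3 k a := c3_nonneg k a
  have hcb0 : (0:ℝ) ≤ c3 k b := c3_nonneg k b
  have hpw := pw_pos k
  have hmono : c3 k a ≤ c3 k b := c3_mono k hab hb
  -- the subcase where a > 0 and C3 k a + lam k (a-1) ≤ c3 k b + pw k
  have subB : ∀ (ha : 0 < a), M ≤ gapf m k (a-1) →
      c3 k a + lam k (a-1) ≤ c3 k b + pw k →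
      M ≤ ((2:ℝ)^m - 1) * ((c3 k b + pw k)^m - (c3 k a)^m) := by
    intro ha hMa hup
    have hva : a - 1 + 1 = a := by omega
    have hva2 : (a-1) + 1 < 2^k := by omega
    have hl' := lam_pos k (a-1) hva2
    have hle' := lam_le k (a-1) hva2
    have hw0 : (0:ℝ) ≤ c3 k (a-1) + pw k := by
      have := c3_nonneg k (a-1); linarith
    -- gapf (a-1) = (c3 k a)^m - (c3 k a - lam')^m
    have hgap : gapf m k (a-1) = (c3 k a)^m - (c3 k a - lam k (a-1))^m := by
      unfold gapf lam
      rw [hva]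
      ring_nf
    have hIQ : (c3 k a)^m - (c3 k a - lam k (a-1))^m
        ≤ (c3 k a + lam k (a-1))^m - (c3 k a)^m := by
      have := pow_ineq2 m (c3 k a - lam k (a-1)) (c3 k a) (lam k (a-1))
        (by unfold lam at *; rw [hva] at *; linarith) (by linarith) (le_of_lt hl')
      calc (c3 k a)^m - (c3 k a - lam k (a-1))^m
          = (c3 k a - lam k (a-1) + lam k (a-1))^m - (c3 k a - lam k (a-1))^m := by ring_nf
        _ ≤ (c3 k a + lam k (a-1))^m - (c3 k a)^m := this
    have hmono2 : (c3 k a + lam k (a-1))^m ≤ (c3 k b + pw k)^m := by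
      apply pow_le_pow_left₀ (by linarith) hup
    have hwidth : M ≤ (c3 k b + pw k)^m - (c3 k a)^m := by
      rw [hgap] at hMa
      linarith
    have hw2 : (0:ℝ) ≤ (c3 k b + pw k)^m - (c3 k a)^m := le_trans hM0 hwidth
    nlinarith
  by_cases hbend : b = 2^k - 1
  · -- b is the last cell, u = 1
    subst hbend
    have hlast : c3 k (2^k - 1) + pw k = 1 := by rw [c3_last]; ring
    by_cases ha : 0 < a
    · rcases hA with hAend | hAgap
      · omega
      · apply subB ha hAgap
        have hva2 : (a-1) + 1 < 2^k := by omega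
        have := c3_lam_le_one k (a-1) hva2
        have hva : a - 1 + 1 = a := by omega
        rw [hva] at this
        linarith
    · have : a = 0 := by omega
      subst this
      rw [c3_zero, hlast]
      have h0m : (0:ℝ)^m = 0 := by apply zero_pow; omega
      rw [h0m, one_pow]
      linarith
  · -- b is followed by a gap with f-size ≥ M
    have hb1 : b + 1 < 2^k := by omega
    have hBgap : M ≤ gapf m k b := by
      rcases hB with h | h
      · omega
      · exact h
    have hl := lam_pos k b hb1
    have hle := lam_le k b hb1
    have hgapb : gapf m k b = (c3 k b + pw k + lam k b)^m - (c3 k b + pw k)^m := by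
      unfold gapf lam
      ring_nf
    have hI1 : (c3 k b + pw k + lam k b)^m - (c3 k b + pw k)^m
        ≤ ((2:ℝ)^m - 1) * ((c3 k b + pw k)^m - (c3 k b + pw k - lam k b)^m) := by
      have := pow_ineq1 m (c3 k b + pw k - lam k b) (lam k b) (by linarith) (le_of_lt hl)
      calc (c3 k b + pw k + lam k b)^m - (c3 k b + pw k)^m
          = (c3 k b + pw k - lam k b + 2*(lam k b))^m
            - (c3 k b + pw k - lam k b + lam k b)^m := by ring_nf
        _ ≤ ((2:ℝ)^m - 1) * ((c3 k b + pw k - lam k b + lam k b)^m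
            - (c3 k b + pw k - lam k b)^m) := this
        _ = ((2:ℝ)^m - 1) * ((c3 k b + pw k)^m - (c3 k b + pw k - lam k b)^m) := by ring_nf
    -- in subcase A we conclude like this:
    have subA : c3 k a ≤ c3 k b + pw k - lam k b →
        M ≤ ((2:ℝ)^m - 1) * ((c3 k b + pw k)^m - (c3 k a)^m) := by
      intro hAA
      have hmono3 : (c3 k a)^m ≤ (c3 k b + pw k - lam k b)^m :=
        pow_le_pow_left₀ hca0 hAA m
      have : ((2:ℝ)^m - 1) * ((c3 k b + pw k)^m - (c3 k b + pw k - lam k b)^m)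
          ≤ ((2:ℝ)^m - 1) * ((c3 k b + pw k)^m - (c3 k a)^m) := by
        apply mul_le_mul_of_nonneg_left (by linarith) (by linarith)
      rw [hgapb] at hBgap
      linarith
    by_cases ha : 0 < a
    · rcases hA with hAend | hAgap
      · omega
      · have hd := dicho k b (a-1) hb1 (by omega)
        have hva : a - 1 + 1 = a := by omega
        rw [hva] at hd
        rcases hd with hAA | hAB
        · exact subA hAA
        · exact subB ha hAgap hAB
    · have : a = 0 := by omega
      subst this
      apply subA
      rw [c3_zero]
      linarith
end main

/-- Main recursion: split runs at the globally largest gap. -/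
lemma rec_main (m k : ℕ) (hm : 1 ≤ m) : ∀ (meas : ℕ) (a b : Fin (2^m) → ℕ),
    (∀ j, a j ≤ b j) → (∀ j, b j < 2^k) →
    (∑ j, (b j - a j)) ≤ meas →
    (∀ (j j' : Fin (2^m)) (i : ℕ), a j' ≤ i → i < b j' →
      ((a j = 0 ∨ gapf m k i ≤ gapf m k (a j - 1)) ∧
       (b j = 2^k - 1 ∨ gapf m k i ≤ gapf m k (b j)))) →
    ∀ y : ℝ, (∑ j, (c3 k (a j))^m) ≤ y → y ≤ ∑ j, (c3 k (b j) + pw k)^m →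
    ∃ e : Fin (2^m) → ℕ, (∀ j, a j ≤ e j ∧ e j ≤ b j) ∧
      (∑ j, (c3 k (e j))^m) ≤ y ∧ y ≤ ∑ j, (c3 k (e j) + pw k)^m := by
  classical
  intro meas
  induction meas with
  | zero =>
    intro a b hab hbk hmeas hINV y hy1 hy2
    refine ⟨a, fun j => ⟨le_rfl, hab j⟩, hy1, ?_⟩
    have hba : ∀ j, b j = a j := by
      intro j
      have h1 : b j - a j = 0 := by
        by_contra hne
        have h2 : 0 < b j - a j := Nat.pos_of_ne_zero hne
        have h3 : 0 < ∑ j, (b j - a j) :=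
          Finset.sum_pos' (fun _ _ => Nat.zero_le _) ⟨j, Finset.mem_univ j, h2⟩
        omega
      have := hab j
      omega
    calc y ≤ ∑ j, (c3 k (b j) + pw k)^m := hy2
      _ = ∑ j, (c3 k (a j) + pw k)^m := by
          apply Finset.sum_congr rfl; intro j _; rw [hba j]
  | succ meas ih =>
    intro a b hab hbk hmeas hINV y hy1 hy2
    by_cases hall : ∀ j, a j = b j
    · refine ⟨a, fun j => ⟨le_rfl, hab j⟩, hy1, ?_⟩
      calc y ≤ ∑ j, (c3 k (b j) + pw k)^m := hy2
        _ = ∑ j, (c3 k (a j) + pw k)^m := by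
            apply Finset.sum_congr rfl; intro j _; rw [hall j]
    · push_neg at hall
      obtain ⟨j₀, hj₀⟩ := hall
      have hj₀' : a j₀ < b j₀ := lt_of_le_of_ne (hab j₀) hj₀
      -- the finset of "internal" gap indices
      set I : Finset ℕ := (Finset.range (2^k)).filter
        (fun i => ∃ j, a j ≤ i ∧ i < b j) with hI
      have hIne : I.Nonempty := by
        refine ⟨a j₀, ?_⟩
        rw [hI, Finset.mem_filter, Finset.mem_range]
        exact ⟨lt_trans hj₀' (hbk j₀), j₀, le_rfl, hj₀'⟩
      obtain ⟨istar, histar, hmax⟩ := I.exists_max_image (gapf m k) hIne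
      rw [hI, Finset.mem_filter] at histar
      obtain ⟨histar1, jstar, hjs1, hjs2⟩ := histar
      have histark : istar + 1 < 2^k := by
        have := hbk jstar; omega
      have hMem : ∀ i : ℕ, (∃ j, a j ≤ i ∧ i < b j) → gapf m k i ≤ gapf m k istar := by
        intro i hex
        apply hmax
        rw [hI, Finset.mem_filter, Finset.mem_range]
        obtain ⟨j, h1, h2⟩ := hex
        exact ⟨lt_trans h2 (hbk j), j, h1, h2⟩
      -- covering estimate
      have hM0 : 0 ≤ gapf m k istar := gapf_nonneg m k istar histark
      have hM1 : gapf m k istar ≤ 1 := gapf_le_one m k istar histark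
      have hcard : (Finset.univ \ {jstar} : Finset (Fin (2^m))).card = 2^m - 1 := by
        rw [Finset.card_sdiff_of_subset (Finset.subset_univ _), Finset.card_singleton]
        simp [Fintype.card_fin]
      have hcov : gapf m k istar
          ≤ ∑ j ∈ Finset.univ \ {jstar},
              ((c3 k (b j) + pw k)^m - (c3 k (a j))^m) := by
        have hone : (1:ℝ) ≤ (2:ℝ)^m - 1 := two_pow_sub_one_ge m hm
        have heach : ∀ j ∈ Finset.univ \ {jstar},
            gapf m k istar ≤ ((2:ℝ)^m - 1) * ((c3 k (b j) + pw k)^m - (c3 k (a j))^m) := by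
          intro j _
          have hIV := hINV j jstar istar hjs1 hjs2
          exact bridge m k hm (a j) (b j) (hab j) (hbk j) (gapf m k istar) hM0 hM1
            hIV.1 hIV.2
        have hsum : ((2:ℝ)^m - 1) * gapf m k istar
            ≤ ((2:ℝ)^m - 1) * ∑ j ∈ Finset.univ \ {jstar},
                ((c3 k (b j) + pw k)^m - (c3 k (a j))^m) := by
          have e1 : ∑ _j ∈ (Finset.univ \ {jstar} : Finset (Fin (2^m))), gapf m k istar
              = (((Finset.univ \ {jstar} : Finset (Fin (2^m))).card : ℝ)) * gapf m k istar := by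
            rw [Finset.sum_const, nsmul_eq_mul]
          have e2 : (((Finset.univ \ {jstar} : Finset (Fin (2^m))).card : ℝ)) = (2:ℝ)^m - 1 := by
            rw [hcard]
            have h1 : (1:ℕ) ≤ 2^m := Nat.one_le_two_pow
            push_cast [Nat.cast_sub h1]
            ring
          have e3 := Finset.sum_le_sum heach
          rw [e1, e2, ← Finset.mul_sum] at e3
          exact e3
        have hpos : (0:ℝ) < (2:ℝ)^m - 1 := by linarith
        exact le_of_mul_le_mul_left hsum hpos
      -- sum computations for updated states
      have hsumF : ∀ (g : Fin (2^m) → ℕ) (v : ℕ) (F : ℕ → ℝ),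
          ∑ j, F (Function.update g jstar v j)
            = F v + (∑ j, F (g j)) - F (g jstar) := by
        intro g v F
        have : (fun j => F (Function.update g jstar v j))
            = Function.update (fun j => F (g j)) jstar (F v) := by
          funext j
          by_cases hj : j = jstar
          · subst hj; simp
          · simp [Function.update_of_ne hj]
        rw [this, Finset.sum_update_of_mem (Finset.mem_univ jstar),
          Finset.sum_sdiff_eq_sub (Finset.subset_univ _), Finset.sum_singleton]
        ring
      have hrest : ∑ j ∈ Finset.univ \ {jstar},
            ((c3 k (b j) + pw k)^m - (c3 k (a j))^m)
          = (∑ j, (c3 k (b j) + pw k)^m) - (c3 k (b jstar) + pw k)^m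
            - ((∑ j, (c3 k (a j))^m) - (c3 k (a jstar))^m) := by
        have A : ∑ j ∈ Finset.univ \ {jstar}, (c3 k (b j) + pw k)^m
            = (∑ j, (c3 k (b j) + pw k)^m) - (c3 k (b jstar) + pw k)^m := by
          rw [Finset.sum_sdiff_eq_sub (Finset.subset_univ _), Finset.sum_singleton]
        have B : ∑ j ∈ Finset.univ \ {jstar}, (c3 k (a j))^m
            = (∑ j, (c3 k (a j))^m) - (c3 k (a jstar))^m := by
          rw [Finset.sum_sdiff_eq_sub (Finset.subset_univ _), Finset.sum_singleton]
        rw [Finset.sum_sub_distrib, A, B]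
      set Ltop : ℝ := (c3 k istar + pw k)^m + (∑ j, (c3 k (b j) + pw k)^m)
          - (c3 k (b jstar) + pw k)^m with hLtop
      set Rbot : ℝ := (c3 k (istar+1))^m + (∑ j, (c3 k (a j))^m)
          - (c3 k (a jstar))^m with hRbot
      have hLR : Rbot ≤ Ltop := by
        have : gapf m k istar = (c3 k (istar+1))^m - (c3 k istar + pw k)^m := rfl
        rw [hLtop, hRbot]
        rw [hrest] at hcov
        rw [this] at hcov
        linarith
      by_cases hyL : y ≤ Ltop
      · -- recurse with b := update b jstar istar
        set bL := Function.update b jstar istar with hbL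
        have h1 : ∀ j, a j ≤ bL j := by
          intro j
          by_cases hj : j = jstar
          · subst hj; simp [hbL]; exact hjs1
          · simp [hbL, Function.update_of_ne hj]; exact hab j
        have h2 : ∀ j, bL j < 2^k := by
          intro j
          by_cases hj : j = jstar
          · subst hj; simp [hbL]; omega
          · simp [hbL, Function.update_of_ne hj]; exact hbk j
        have h3 : (∑ j, (bL j - a j)) ≤ meas := by
          have he : (fun j => bL j - a j)
              = Function.update (fun j => b j - a j) jstar (istar - a jstar) := by
            funext j
            by_cases hj : j = jstar
            · subst hj; simp [hbL]
            · simp [hbL, Function.update_of_ne hj]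
          rw [he, Finset.sum_update_of_mem (Finset.mem_univ jstar)]
          have hold : (b jstar - a jstar) + ∑ j ∈ Finset.univ \ {jstar}, (b j - a j)
              ≤ meas + 1 := by
            rw [← Finset.sum_update_of_mem (Finset.mem_univ jstar)]
            calc ∑ j, Function.update (fun j => b j - a j) jstar (b jstar - a jstar) j
                = ∑ j, (b j - a j) := by
                  apply Finset.sum_congr rfl
                  intro j _
                  by_cases hj : j = jstar
                  · subst hj; simp
                  · simp [Function.update_of_ne hj]
              _ ≤ meas + 1 := hmeas
          omega
        have h4 : ∀ (j j' : Fin (2^m)) (i : ℕ), a j' ≤ i → i < bL j' →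
            ((a j = 0 ∨ gapf m k i ≤ gapf m k (a j - 1)) ∧
             (bL j = 2^k - 1 ∨ gapf m k i ≤ gapf m k (bL j))) := by
          intro j j' i hi1 hi2
          have hi2' : i < b j' := by
            by_cases hj : j' = jstar
            · subst hj; simp [hbL] at hi2; omega
            · simp [hbL, Function.update_of_ne hj] at hi2; exact hi2
          have hold := hINV j j' i hi1 hi2'
          constructor
          · exact hold.1
          · by_cases hj : j = jstar
            · subst hj
              right
              simp [hbL]
              exact hMem i ⟨j', hi1, hi2'⟩
            · simp [hbL, Function.update_of_ne hj]
              exact hold.2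
        have h5 : y ≤ ∑ j, (c3 k (bL j) + pw k)^m := by
          rw [hbL, hsumF b istar (fun n => (c3 k n + pw k)^m)]
          exact hyL
        obtain ⟨e, he1, he2, he3⟩ := ih a bL h1 h2 h3 h4 y hy1 h5
        refine ⟨e, fun j => ⟨(he1 j).1, ?_⟩, he2, he3⟩
        have := (he1 j).2
        by_cases hj : j = jstar
        · subst hj; simp [hbL] at this; omega
        · simp [hbL, Function.update_of_ne hj] at this; exact this
      · -- recurse with a := update a jstar (istar+1)
        push_neg at hyL
        set aR := Function.update a jstar (istar+1) with haR
        have h1 : ∀ j, aR j ≤ b j := by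
          intro j
          by_cases hj : j = jstar
          · subst hj; simp [haR]; omega
          · simp [haR, Function.update_of_ne hj]; exact hab j
        have h3 : (∑ j, (b j - aR j)) ≤ meas := by
          have he : (fun j => b j - aR j)
              = Function.update (fun j => b j - a j) jstar (b jstar - (istar+1)) := by
            funext j
            by_cases hj : j = jstar
            · subst hj; simp [haR]
            · simp [haR, Function.update_of_ne hj]
          rw [he, Finset.sum_update_of_mem (Finset.mem_univ jstar)]
          have hold : (b jstar - a jstar) + ∑ j ∈ Finset.univ \ {jstar}, (b j - a j)
              ≤ meas + 1 := by
            rw [← Finset.sum_update_of_mem (Finset.mem_univ jstar)]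
            calc ∑ j, Function.update (fun j => b j - a j) jstar (b jstar - a jstar) j
                = ∑ j, (b j - a j) := by
                  apply Finset.sum_congr rfl
                  intro j _
                  by_cases hj : j = jstar
                  · subst hj; simp
                  · simp [Function.update_of_ne hj]
              _ ≤ meas + 1 := hmeas
          omega
        have h4 : ∀ (j j' : Fin (2^m)) (i : ℕ), aR j' ≤ i → i < b j' →
            ((aR j = 0 ∨ gapf m k i ≤ gapf m k (aR j - 1)) ∧
             (b j = 2^k - 1 ∨ gapf m k i ≤ gapf m k (b j))) := by
          intro j j' i hi1 hi2
          have hi1' : a j' ≤ i := by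
            by_cases hj : j' = jstar
            · subst hj; simp [haR] at hi1; omega
            · simp [haR, Function.update_of_ne hj] at hi1; exact hi1
          have hold := hINV j j' i hi1' hi2
          constructor
          · by_cases hj : j = jstar
            · subst hj
              right
              simp [haR]
              exact hMem i ⟨j', hi1', hi2⟩
            · simp [haR, Function.update_of_ne hj]
              exact hold.1
          · exact hold.2
        have h5 : (∑ j, (c3 k (aR j))^m) ≤ y := by
          rw [haR, hsumF a (istar+1) (fun n => (c3 k n)^m)]
          have : Rbot ≤ y := le_trans hLR (le_of_lt hyL)
          rw [hRbot] at this
          linarith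
        obtain ⟨e, he1, he2, he3⟩ := ih aR b h1 hbk h3 h4 y h5 hy2
        refine ⟨e, fun j => ⟨?_, (he1 j).2⟩, he2, he3⟩
        have := (he1 j).1
        by_cases hj : j = jstar
        · subst hj; simp [haR] at this; omega
        · simp [haR, Function.update_of_ne hj] at this; exact this

/-- level-k approximation claim -/
lemma approx (m k : ℕ) (hm : 1 ≤ m) (y : ℝ) (hy0 : 0 ≤ y) (hy1 : y ≤ 2^m) :
    ∃ e : Fin (2^m) → ℕ, (∀ j, e j < 2^k) ∧
      (∑ j, (c3 k (e j))^m) ≤ y ∧ y ≤ ∑ j, (c3 k (e j) + pw k)^m := by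
  have h2k : 1 ≤ 2^k := Nat.one_le_two_pow
  have hlow : (∑ _j : Fin (2^m), (c3 k 0)^m) ≤ y := by
    have e1 : (c3 k 0 : ℝ)^m = 0 := by
      rw [c3_zero]; exact zero_pow (by omega)
    rw [e1]
    simpa using hy0
  have hhigh : y ≤ ∑ _j : Fin (2^m), (c3 k (2^k - 1) + pw k)^m := by
    have e1 : ((c3 k (2^k - 1) + pw k : ℝ))^m = 1 := by
      rw [c3_last]; norm_num
    rw [e1, Finset.sum_const, nsmul_eq_mul]
    simpa using hy1
  obtain ⟨e, he1, he2, he3⟩ := rec_main m k hm (∑ _j : Fin (2^m), (2^k - 1 - 0))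
    (fun _ => 0) (fun _ => 2^k - 1)
    (fun j => Nat.zero_le _) (fun j => by show 2^k - 1 < 2^k; omega) le_rfl
    (fun j j' i hi1 hi2 => ⟨Or.inl rfl, Or.inl rfl⟩) y hlow hhigh
  refine ⟨e, fun j => ?_, he2, he3⟩
  have := (he1 j).2
  omega

-- ################ Cantor set lemmas ################

lemma cantor_summable (t : ℕ → ℝ) (ht : ∀ i, t i = 0 ∨ t i = 2) :
    Summable (fun i => t i / 3 ^ (i+1)) := by
  have hg : Summable (fun i : ℕ => (2/3:ℝ) * (1/3)^i) :=
    ((summable_geometric_of_lt_one (r := (1/3:ℝ)) (by norm_num) (by norm_num)).mul_left _)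
  have he : ∀ i : ℕ, (2/3 : ℝ) * (1/3)^i = 2 / 3^(i+1) := by
    intro i
    rw [pow_succ, div_pow]
    norm_num
    ring
  apply Summable.of_nonneg_of_le _ _ hg
  · intro i
    rcases ht i with h | h <;> rw [h] <;> positivity
  · intro i
    rw [he i]
    rcases ht i with h | h
    · rw [h, zero_div]
      positivity
    · rw [h]

lemma cantor_summable2 : Summable (fun i : ℕ => (2:ℝ) / 3 ^ (i+1)) :=
  cantor_summable (fun _ => 2) (fun _ => Or.inr rfl)

lemma cantor_two_thirds_sum : ∑' i : ℕ, (2:ℝ)/3^(i+1) = 1 := by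
  have h := tsum_geometric_of_lt_one (by norm_num : (0:ℝ) ≤ 1/3) (by norm_num : (1/3:ℝ) < 1)
  have e1 : ∀ i : ℕ, (2:ℝ)/3^(i+1) = (2/3) * (1/3)^i := by
    intro i
    rw [pow_succ, div_pow]
    norm_num
    ring
  calc ∑' i : ℕ, (2:ℝ)/3^(i+1) = ∑' i : ℕ, (2/3) * (1/3:ℝ)^i := tsum_congr e1
    _ = (2/3) * ∑' i : ℕ, (1/3:ℝ)^i := tsum_mul_left
    _ = 1 := by rw [h]; norm_num

lemma cantor_mem_Icc {x : ℝ} (hx : x ∈ middleThirdsCantor) : 0 ≤ x ∧ x ≤ 1 := by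
  obtain ⟨t, ht, rfl⟩ := hx
  constructor
  · apply tsum_nonneg
    intro i
    rcases ht i with h | h <;> rw [h] <;> positivity
  · have h1 : ∑' i : ℕ, t i / 3^(i+1) ≤ ∑' i : ℕ, (2:ℝ)/3^(i+1) := by
      apply Summable.tsum_le_tsum _ (cantor_summable t ht) cantor_summable2
      intro i
      rcases ht i with h | h
      · rw [h, zero_div]
        positivity
      · rw [h]
    rw [cantor_two_thirds_sum] at h1
    exact h1

lemma cantor_zero : (0:ℝ) ∈ middleThirdsCantor :=
  ⟨fun _ => 0, fun _ => Or.inl rfl, by simp⟩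

lemma cantor_shift {x : ℝ} (d : ℝ) (hd : d = 0 ∨ d = 2) (hx : x ∈ middleThirdsCantor) :
    (d + x)/3 ∈ middleThirdsCantor := by
  obtain ⟨t, ht, rfl⟩ := hx
  refine ⟨fun n => if n = 0 then d else t (n-1), fun i => ?_, ?_⟩
  · by_cases h : i = 0
    · simpa [h] using hd
    · simpa [h] using ht (i-1)
  · have hs : Summable (fun i => (if i = 0 then d else t (i-1)) / 3 ^ (i+1)) := by
      apply cantor_summable
      intro i
      by_cases h : i = 0
      · simpa [h] using hd
      · simpa [h] using ht (i-1)
    rw [Summable.tsum_eq_zero_add hs]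
    have e0 : (if 0 = 0 then d else t (0-1)) / 3^(0+1) = d / 3 := by norm_num
    have e1 : ∀ i : ℕ, (if i + 1 = 0 then d else t (i+1-1)) / 3^(i+1+1)
        = (1/3) * (t i / 3^(i+1)) := by
      intro i
      simp only [Nat.add_sub_cancel, if_neg (Nat.succ_ne_zero i)]
      rw [pow_succ]
      ring
    rw [e0, tsum_congr e1, tsum_mul_left]
    ring

lemma cantor_c3 (k i : ℕ) : c3 k i ∈ middleThirdsCantor := by
  induction k generalizing i with
  | zero => simpa [c3] using cantor_zero
  | succ k ih =>
    by_cases h : i < 2^k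
    · rw [c3_succ_lower k i h]
      have := cantor_shift 0 (Or.inl rfl) (ih i)
      simpa using this
    · rw [c3_succ_upper k i (not_lt.mp h)]
      exact cantor_shift 2 (Or.inr rfl) (ih (i - 2^k))

lemma cantor_isCompact : IsCompact middleThirdsCantor := by
  have hK : IsCompact (Set.univ.pi (fun _ : ℕ => ({0, 2} : Set ℝ))) := by
    apply isCompact_univ_pi
    intro i
    exact (Set.toFinite _).isCompact
  have himg : middleThirdsCantor
      = (fun t : ℕ → ℝ => ∑' i : ℕ, t i / 3^(i+1)) '' (Set.univ.pi (fun _ => ({0,2} : Set ℝ))) := by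
    ext x
    constructor
    · rintro ⟨t, ht, rfl⟩
      exact ⟨t, fun i _ => ht i, rfl⟩
    · rintro ⟨t, ht, rfl⟩
      exact ⟨t, fun i => ht i (Set.mem_univ i), rfl⟩
  rw [himg]
  apply hK.image_of_continuousOn
  rw [continuousOn_iff_continuous_restrict]
  apply continuous_tsum (u := fun i => (2:ℝ)/3^(i+1))
  · intro i
    exact ((continuous_apply i).comp continuous_subtype_val).div_const _
  · exact cantor_summable2
  · rintro i ⟨t, ht⟩
    have h2 : t i = 0 ∨ t i = 2 := ht i (Set.mem_univ i)
    have h3 : |t i| ≤ 2 := by rcases h2 with h | h <;> rw [h] <;> norm_num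
    show ‖t i / 3^(i+1)‖ ≤ 2/3^(i+1)
    rw [Real.norm_eq_abs, abs_div, abs_of_pos (by positivity : (0:ℝ) < (3:ℝ)^(i+1))]
    gcongr

end CP
end

theorem sums_of_two_pow_m_mth_powers_eq_Icc (m : ℕ) (hm : 1 ≤ m) :
    {x : ℝ | ∃ f : Fin (2 ^ m) → ℝ,
        (∀ j, f j ∈ middleThirdsCantor) ∧ x = ∑ j, f j ^ m} =
      Set.Icc (0 : ℝ) (2 ^ m) := by
  ext y
  simp only [Set.mem_setOf_eq, Set.mem_Icc]
  constructor
  · rintro ⟨f, hf, rfl⟩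
    constructor
    · apply Finset.sum_nonneg
      intro j _
      have h1 := (CP.cantor_mem_Icc (hf j)).1
      positivity
    · have h2 : ∀ j, f j ^ m ≤ 1 := fun j =>
        pow_le_one₀ (CP.cantor_mem_Icc (hf j)).1 (CP.cantor_mem_Icc (hf j)).2
      calc ∑ j, f j ^ m ≤ ∑ _j : Fin (2^m), (1:ℝ) :=
            Finset.sum_le_sum (fun j _ => h2 j)
        _ = 2^m := by
            rw [Finset.sum_const, nsmul_eq_mul, Finset.card_univ, Fintype.card_fin]
            push_cast
            ring
  · rintro ⟨hy0, hy1⟩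
    have happrox := fun k : ℕ => CP.approx m k hm y hy0 hy1
    choose E hE1 hE2 hE3 using happrox
    set X : ℕ → (Fin (2^m) → ℝ) := fun k j => CP.c3 k (E k j) with hX
    have hXmem : ∀ k, X k ∈ Set.univ.pi (fun _ : Fin (2^m) => middleThirdsCantor) := by
      intro k j _
      exact CP.cantor_c3 k (E k j)
    have hcomp : IsCompact (Set.univ.pi (fun _ : Fin (2^m) => middleThirdsCantor)) :=
      isCompact_univ_pi (fun _ => CP.cantor_isCompact)
    obtain ⟨x, hx, φ, hφ, hconv⟩ := hcomp.tendsto_subseq hXmem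
    have hxj : ∀ j, x j ∈ middleThirdsCantor := fun j => hx j (Set.mem_univ j)
    refine ⟨x, hxj, ?_⟩
    have hsumconv : Filter.Tendsto (fun l => ∑ j, (X (φ l) j)^m)
        Filter.atTop (nhds (∑ j, (x j)^m)) := by
      apply tendsto_finset_sum
      intro j _
      exact (tendsto_pi_nhds.1 hconv j).pow m
    have hlow : ∀ l, ∑ j, (X (φ l) j)^m ≤ y := fun l => hE2 (φ l)
    have hupp : ∀ l, y ≤ (∑ j, (X (φ l) j)^m) + (2^m) * ((m:ℝ) * CP.pw (φ l)) := by
      intro l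
      have h1 := hE3 (φ l)
      have h2 : ∀ j : Fin (2^m), (CP.c3 (φ l) (E (φ l) j) + CP.pw (φ l))^m
          ≤ (CP.c3 (φ l) (E (φ l) j))^m + (m:ℝ) * CP.pw (φ l) := by
        intro j
        have hc0 : (0:ℝ) ≤ CP.c3 (φ l) (E (φ l) j) := CP.c3_nonneg _ _
        have hc1 : CP.c3 (φ l) (E (φ l) j) + CP.pw (φ l) ≤ 1 :=
          CP.c3_add_pw_le_one _ _ (hE1 (φ l) j)
        have hpwp := CP.pw_pos (φ l)
        have hlip := CP.pow_lip m (CP.c3 (φ l) (E (φ l) j))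
          (CP.c3 (φ l) (E (φ l) j) + CP.pw (φ l)) hc0 (by linarith) hc1
        have he : (CP.c3 (φ l) (E (φ l) j) + CP.pw (φ l))
            - CP.c3 (φ l) (E (φ l) j) = CP.pw (φ l) := by ring
        rw [he] at hlip
        linarith
      calc y ≤ ∑ j, (CP.c3 (φ l) (E (φ l) j) + CP.pw (φ l))^m := h1
        _ ≤ ∑ j, ((CP.c3 (φ l) (E (φ l) j))^m + (m:ℝ) * CP.pw (φ l)) :=
            Finset.sum_le_sum (fun j _ => h2 j)
        _ = (∑ j, (X (φ l) j)^m) + (2^m) * ((m:ℝ) * CP.pw (φ l)) := by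
            rw [Finset.sum_add_distrib, Finset.sum_const, nsmul_eq_mul,
              Finset.card_univ, Fintype.card_fin]
            push_cast
            ring
    have hpwt : Filter.Tendsto (fun l => CP.pw (φ l)) Filter.atTop (nhds 0) := by
      have h1 : Filter.Tendsto (fun k : ℕ => CP.pw k) Filter.atTop (nhds 0) := by
        unfold CP.pw
        apply tendsto_pow_atTop_nhds_zero_of_lt_one <;> norm_num
      exact h1.comp hφ.tendsto_atTop
    have hL1 : (∑ j, (x j)^m) ≤ y :=
      le_of_tendsto hsumconv (Filter.Eventually.of_forall hlow)
    have hL2 : y ≤ ∑ j, (x j)^m := by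
      have ht2 : Filter.Tendsto
          (fun l => (∑ j, (X (φ l) j)^m) + (2^m) * ((m:ℝ) * CP.pw (φ l)))
          Filter.atTop (nhds ((∑ j, (x j)^m) + (2^m) * ((m:ℝ) * 0))) :=
        hsumconv.add (((hpwt.const_mul (m:ℝ)).const_mul ((2:ℝ)^m)))
      have := ge_of_tendsto ht2 (Filter.Eventually.of_forall hupp)
      simpa using this
    exact le_antisymm hL2 hL1
end

section
/- The set of sums of two squares of elements of the middle-thirds Cantor set misses the open interval (2/9, 4/9); that is, {x_1^2 + x_2^2 : x_1, x_2 ∈ 𝒞} ∩ (2/9, 4/9) = ∅. -/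
lemma aux_term_le (t : ℕ → ℝ) (ht : ∀ i, t i = 0 ∨ t i = 2) (k i : ℕ) :
    t i / 3 ^ (i + k) ≤ (2 / 3 ^ k : ℝ) * (1/3) ^ i := by
  rcases ht i with h | h <;> rw [h]
  · simp
  · rw [div_le_iff₀ (by positivity), pow_add, div_pow, one_pow]
    field_simp
    have hne : (3:ℝ) ^ k * 3 ^ i ≠ 0 := by positivity
    exact le_refl _

lemma aux_summable (t : ℕ → ℝ) (ht : ∀ i, t i = 0 ∨ t i = 2) (k : ℕ) :
    Summable (fun i : ℕ => t i / 3 ^ (i + k)) := by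
  refine Summable.of_nonneg_of_le (fun i => ?_) (aux_term_le t ht k)
    ((summable_geometric_of_lt_one (by norm_num) (by norm_num)).mul_left _)
  rcases ht i with h | h <;> rw [h] <;> positivity

lemma aux_nonneg (t : ℕ → ℝ) (ht : ∀ i, t i = 0 ∨ t i = 2) (k : ℕ) :
    0 ≤ ∑' i : ℕ, t i / 3 ^ (i + k) := by
  apply tsum_nonneg
  intro i
  rcases ht i with h | h <;> rw [h] <;> positivity

lemma aux_le (t : ℕ → ℝ) (ht : ∀ i, t i = 0 ∨ t i = 2) (k : ℕ) :
    ∑' i : ℕ, t i / 3 ^ (i + k) ≤ 3 / 3 ^ k := by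
  have hb : ∑' i : ℕ, (2 / 3 ^ k : ℝ) * (1/3) ^ i = 3 / 3 ^ k := by
    rw [tsum_mul_left, tsum_geometric_of_lt_one (by norm_num) (by norm_num)]
    field_simp
    ring
  calc ∑' i : ℕ, t i / 3 ^ (i + k) ≤ ∑' i : ℕ, (2 / 3 ^ k : ℝ) * (1/3) ^ i :=
        Summable.tsum_le_tsum (aux_term_le t ht k) (aux_summable t ht k)
          ((summable_geometric_of_lt_one (by norm_num) (by norm_num)).mul_left _)
    _ = 3 / 3 ^ k := hb

lemma cantor_cases {x : ℝ} (hx : x ∈ middleThirdsCantor) :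
    (0 ≤ x ∧ x ≤ 1/3) ∨ (2/3 ≤ x ∧ x ≤ 1) := by
  obtain ⟨t, ht, rfl⟩ := hx
  have hs := aux_summable t ht 1
  have hsplit : ∑' i : ℕ, t i / 3 ^ (i + 1)
      = t 0 / 3 + ∑' i : ℕ, t (i + 1) / 3 ^ (i + 2) := by
    rw [Summable.tsum_eq_zero_add hs]
    norm_num
  have ht' : ∀ i, t (i + 1) = 0 ∨ t (i + 1) = 2 := fun i => ht (i + 1)
  have h0 := aux_nonneg (fun i => t (i + 1)) ht' 2
  have h1 := aux_le (fun i => t (i + 1)) ht' 2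
  norm_num at h1
  rcases ht 0 with h | h
  · left
    refine ⟨aux_nonneg t ht 1, ?_⟩
    rw [hsplit, h]; linarith
  · right
    constructor
    · rw [hsplit, h]; linarith
    · rw [hsplit, h]; linarith

theorem two_squares_of_cantor_misses_Ioo :
    {x : ℝ | ∃ x₁ ∈ middleThirdsCantor, ∃ x₂ ∈ middleThirdsCantor,
        x = x₁ ^ 2 + x₂ ^ 2} ∩ Set.Ioo (2 / 9 : ℝ) (4 / 9 : ℝ) = ∅ := by
  rw [Set.eq_empty_iff_forall_notMem]
  rintro x ⟨⟨x₁, h₁, x₂, h₂, rfl⟩, hl, hr⟩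
  have sq : ∀ y : ℝ, y ∈ middleThirdsCantor → y ^ 2 ≤ 1/9 ∨ 4/9 ≤ y ^ 2 := by
    intro y hy
    rcases cantor_cases hy with ⟨h0, h1⟩ | ⟨h0, h1⟩
    · left; nlinarith
    · right; nlinarith
  have n1 : 0 ≤ x₁ ^ 2 := sq_nonneg _
  have n2 : 0 ≤ x₂ ^ 2 := sq_nonneg _
  rcases sq x₁ h₁ with a | a <;> rcases sq x₂ h₂ with b | b  <;> linarith
end

section
/- The set of sums of three squares of elements of the middle-thirds Cantor set misses the open interval (3/9, 4/9); that is, {x_1^2 + x_2^2 + x_3^2 : x_1, x_2, x_3 ∈ 𝒞} ∩ (3/9, 4/9) = ∅. -/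
lemma cantor_bounds {x : ℝ} (hx : x ∈ middleThirdsCantor) :
    0 ≤ x ∧ (x ≤ 1 / 3 ∨ 2 / 3 ≤ x) := by
  obtain ⟨t, ht, rfl⟩ := hx
  have hnn : ∀ i, (0:ℝ) ≤ t i := fun i => by rcases ht i with h | h <;> rw [h] <;> norm_num
  have hle : ∀ i, t i ≤ 2 := fun i => by rcases ht i with h | h <;> rw [h] <;> norm_num
  have hgeo : Summable (fun i : ℕ => (2:ℝ) / 3 ^ (i + 1)) := by
    have : (fun i : ℕ => (2:ℝ) / 3 ^ (i + 1)) = fun i : ℕ => (2/3) * (1/3)^i := by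
      funext i; rw [pow_succ, one_div, inv_pow]; field_simp
    rw [this]
    exact (summable_geometric_of_lt_one (by norm_num) (by norm_num)).mul_left _
  have hS : Summable (fun i : ℕ => t i / 3 ^ (i + 1)) :=
    Summable.of_nonneg_of_le (fun i => div_nonneg (hnn i) (by positivity))
      (fun i => by gcongr; exact hle i) hgeo
  have hgeo2 : Summable (fun i : ℕ => (2:ℝ) / 3 ^ (i + 1 + 1)) := by
    have : (fun i : ℕ => (2:ℝ) / 3 ^ (i + 1 + 1)) = fun i : ℕ => (2/9) * (1/3)^i := by
      funext i; rw [pow_succ, pow_succ, one_div, inv_pow]; field_simp; ring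
    rw [this]
    exact (summable_geometric_of_lt_one (by norm_num) (by norm_num)).mul_left _
  have htail : Summable (fun i : ℕ => t (i + 1) / 3 ^ (i + 1 + 1)) :=
    Summable.of_nonneg_of_le (fun i => div_nonneg (hnn _) (by positivity))
      (fun i => by gcongr; exact hle _) hgeo2
  have hgeo2sum : ∑' i : ℕ, (2:ℝ) / 3 ^ (i + 1 + 1) = 1 / 3 := by
    have h1 : (fun i : ℕ => (2:ℝ) / 3 ^ (i + 1 + 1)) = fun i : ℕ => (2/9) * (1/3)^i := by
      funext i; rw [pow_succ, pow_succ, one_div, inv_pow]; field_simp; ring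
    rw [h1, tsum_mul_left, tsum_geometric_of_lt_one (by norm_num) (by norm_num)]
    norm_num
  have htail_nonneg : (0:ℝ) ≤ ∑' i : ℕ, t (i + 1) / 3 ^ (i + 1 + 1) :=
    tsum_nonneg fun i => div_nonneg (hnn _) (by positivity)
  have htail_le : ∑' i : ℕ, t (i + 1) / 3 ^ (i + 1 + 1) ≤ 1 / 3 := by
    rw [← hgeo2sum]
    exact Summable.tsum_le_tsum (fun i => by gcongr; exact hle _)
      htail hgeo2
  have hsplit : ∑' i : ℕ, t i / 3 ^ (i + 1) =
      t 0 / 3 ^ 1 + ∑' i : ℕ, t (i + 1) / 3 ^ (i + 1 + 1) := Summable.tsum_eq_zero_add hS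
  constructor
  · exact tsum_nonneg fun i => div_nonneg (hnn i) (by positivity)
  · rcases ht 0 with h0 | h0
    · left; rw [hsplit, h0]; norm_num; linarith
    · right; rw [hsplit, h0]; norm_num; linarith

theorem three_squares_of_cantor_misses_Ioo :
    {x : ℝ | ∃ x₁ ∈ middleThirdsCantor, ∃ x₂ ∈ middleThirdsCantor,
        ∃ x₃ ∈ middleThirdsCantor, x = x₁ ^ 2 + x₂ ^ 2 + x₃ ^ 2} ∩
      Set.Ioo (3 / 9 : ℝ) (4 / 9 : ℝ) = ∅ := by
  ext x
  simp only [Set.mem_inter_iff, Set.mem_setOf_eq, Set.mem_Ioo, Set.mem_empty_iff_false,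
    iff_false]
  rintro ⟨⟨x₁, h₁, x₂, h₂, x₃, h₃, rfl⟩, hlo, hhi⟩
  obtain ⟨h1n, h1⟩ := cantor_bounds h₁
  obtain ⟨h2n, h2⟩ := cantor_bounds h₂
  obtain ⟨h3n, h3⟩ := cantor_bounds h₃
  rcases h1 with h1 | h1
  · rcases h2 with h2 | h2
    · rcases h3 with h3 | h3
      · nlinarith
      · nlinarith
    · nlinarith
  · nlinarith
end

section
/- For every integer k ≥ 3, writing a = (3^k − 1)/3^k, the closed interval [a^3, a] is contained in the fourfold product set 𝒞 · 𝒞 · 𝒞 · 𝒞 = {x_1·x_2·x_3·x_4 : x_1, x_2, x_3, x_4 ∈ 𝒞}. -/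
open scoped Classical

namespace MTCaux

/-! ### Core overlap inequalities -/

lemma I1 (x1 x2 x3 : ℝ) (h1 : 27 ≤ x1) (h2 : 27 ≤ x2) (h3 : 27 ≤ x3)
    (b21 : x2 ≤ 2*x1 - 26) (b31 : x3 ≤ 2*x1 - 26) (b12 : x1 ≤ 2*x2 - 26) :
    (3*x1 - 1) * ((3*x2 - 1) * (3*x3 - 1)) ≤ (3*x1 - 2) * ((3*x2) * (3*x3)) := by
  nlinarith [mul_nonneg (by linarith : (0:ℝ) ≤ 2*(3*x1) - 78 - 3*x2) (by linarith : (0:ℝ) ≤ 3*x3),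
    mul_nonneg (by linarith : (0:ℝ) ≤ 2*(3*x1) - 78 - 3*x3) (by linarith : (0:ℝ) ≤ 3*x2)]

lemma I2 (x1 x2 x3 : ℝ) (h1 : 27 ≤ x1) (h2 : 27 ≤ x2) (h3 : 27 ≤ x3)
    (b12 : x1 ≤ 2*x2 - 26) (b32 : x3 ≤ 2*x2 - 26) (b13 : x1 ≤ 2*x3 - 26) :
    (3*x1 - 3) * ((3*x2 - 1) * (3*x3 - 1)) ≤ (3*x1 - 2) * ((3*x2 - 2) * (3*x3)) := by
  nlinarith [sq_nonneg (3*x1 - 3*x3),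
    mul_nonneg (by linarith : (0:ℝ) ≤ 4*(3*x2) - (3*x1) - (3*x3) - 156)
      (by linarith : (0:ℝ) ≤ (3*x1) + (3*x3) - 3)]

lemma I3 (x1 x2 x3 : ℝ) (h1 : 27 ≤ x1) (h2 : 27 ≤ x2) (h3 : 27 ≤ x3)
    (b13 : x1 ≤ 2*x3 - 26) (b23 : x2 ≤ 2*x3 - 26) (b12 : x1 ≤ 2*x2 - 26) :
    (3*x1 - 3) * ((3*x2 - 3) * (3*x3 - 1)) ≤ (3*x1 - 2) * ((3*x2 - 2) * (3*x3 - 2)) := by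
  nlinarith [sq_nonneg (3*x1 - 3*x2),
    mul_nonneg (by linarith : (0:ℝ) ≤ 4*(3*x3) - (3*x1) - (3*x2) - 156)
      (by linarith : (0:ℝ) ≤ (3*x1) + (3*x2) - 5)]

/-! ### Digit selection and the invariant -/

/-- digit selection -/
noncomputable def sel (y x1 x2 x3 : ℝ) : ℝ × ℝ × ℝ :=
  if (3*x1 - 1) * ((3*x2 - 1) * (3*x3 - 1)) ≤ y * ((3*x1) * ((3*x2) * (3*x3))) then (0, 0, 0)
  else if (3*x1 - 3) * ((3*x2 - 1) * (3*x3 - 1)) ≤ y * ((3*x1) * ((3*x2) * (3*x3))) then (2, 0, 0)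
  else if (3*x1 - 3) * ((3*x2 - 3) * (3*x3 - 1)) ≤ y * ((3*x1) * ((3*x2) * (3*x3))) then (2, 2, 0)
  else (2, 2, 2)

lemma sel_mem (y x1 x2 x3 : ℝ) :
    ((sel y x1 x2 x3).1 = 0 ∨ (sel y x1 x2 x3).1 = 2) ∧
    ((sel y x1 x2 x3).2.1 = 0 ∨ (sel y x1 x2 x3).2.1 = 2) ∧
    ((sel y x1 x2 x3).2.2 = 0 ∨ (sel y x1 x2 x3).2.2 = 2) := by
  unfold sel; split_ifs <;> norm_num

/-- The invariant. -/
structure Good (y x1 x2 x3 : ℝ) : Prop where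
  hx1 : (27:ℝ) ≤ x1
  hx2 : (27:ℝ) ≤ x2
  hx3 : (27:ℝ) ≤ x3
  b12 : x1 ≤ 2*x2 - 26
  b13 : x1 ≤ 2*x3 - 26
  b21 : x2 ≤ 2*x1 - 26
  b23 : x2 ≤ 2*x3 - 26
  b31 : x3 ≤ 2*x1 - 26
  b32 : x3 ≤ 2*x2 - 26
  low : (x1-1)*((x2-1)*(x3-1)) ≤ y * (x1*(x2*x3))
  up : y ≤ 1

lemma sel_spec (y x1 x2 x3 : ℝ) (g : Good y x1 x2 x3) :
    (3*x1 - (sel y x1 x2 x3).1 - 1) * ((3*x2 - (sel y x1 x2 x3).2.1 - 1) *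
        (3*x3 - (sel y x1 x2 x3).2.2 - 1))
        ≤ y * ((3*x1) * ((3*x2) * (3*x3)))
    ∧ y * ((3*x1) * ((3*x2) * (3*x3)))
        ≤ (3*x1 - (sel y x1 x2 x3).1) * ((3*x2 - (sel y x1 x2 x3).2.1) *
            (3*x3 - (sel y x1 x2 x3).2.2)) := by
  obtain ⟨h1, h2, h3, b12, b13, b21, b23, b31, b32, hyl, hyu⟩ := g
  have hP : (0:ℝ) < (3*x1) * ((3*x2) * (3*x3)) := by
    apply mul_pos (by linarith) (mul_pos (by linarith) (by linarith))
  unfold sel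
  split_ifs with H1 H2 H3 <;> dsimp only <;> constructor
  · linarith
  · nlinarith [mul_nonneg (by linarith : (0:ℝ) ≤ 1 - y) hP.le]
  · linarith
  · have := I1 x1 x2 x3 h1 h2 h3 b21 b31 b12
    push_neg at H1
    nlinarith
  · linarith
  · have := I2 x1 x2 x3 h1 h2 h3 b12 b32 b13
    push_neg at H2
    nlinarith
  · nlinarith [hyl]
  · have := I3 x1 x2 x3 h1 h2 h3 b13 b23 b12
    push_neg at H3
    nlinarith

/-! ### The refinement dynamics -/

/-- one refinement step on states -/
noncomputable def step (s : ℝ × ℝ × ℝ × ℝ) : ℝ × ℝ × ℝ × ℝ :=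
  (s.1 * ((3*s.2.1) * ((3*s.2.2.1) * (3*s.2.2.2))) /
     ((3*s.2.1 - (sel s.1 s.2.1 s.2.2.1 s.2.2.2).1) *
      ((3*s.2.2.1 - (sel s.1 s.2.1 s.2.2.1 s.2.2.2).2.1) *
       (3*s.2.2.2 - (sel s.1 s.2.1 s.2.2.1 s.2.2.2).2.2))),
   3*s.2.1 - (sel s.1 s.2.1 s.2.2.1 s.2.2.2).1,
   3*s.2.2.1 - (sel s.1 s.2.1 s.2.2.1 s.2.2.2).2.1,
   3*s.2.2.2 - (sel s.1 s.2.1 s.2.2.1 s.2.2.2).2.2)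

lemma good_step (s : ℝ × ℝ × ℝ × ℝ) (g : Good s.1 s.2.1 s.2.2.1 s.2.2.2) :
    Good (step s).1 (step s).2.1 (step s).2.2.1 (step s).2.2.2 ∧
    (step s).1 * ((step s).2.1 * ((step s).2.2.1 * (step s).2.2.2)) =
      27 * (s.1 * (s.2.1 * (s.2.2.1 * s.2.2.2))) := by
  obtain ⟨y, x1, x2, x3⟩ := s
  dsimp only at g ⊢
  obtain ⟨hm1, hm2, hm3⟩ := sel_mem y x1 x2 x3
  set u1 := (sel y x1 x2 x3).1 with hu1
  set u2 := (sel y x1 x2 x3).2.1 with hu2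
  set u3 := (sel y x1 x2 x3).2.2 with hu3
  have hu1b : 0 ≤ u1 ∧ u1 ≤ 2 := by rcases hm1 with h | h <;> rw [h] <;> norm_num
  have hu2b : 0 ≤ u2 ∧ u2 ≤ 2 := by rcases hm2 with h | h <;> rw [h] <;> norm_num
  have hu3b : 0 ≤ u3 ∧ u3 ≤ 2 := by rcases hm3 with h | h <;> rw [h] <;> norm_num
  obtain ⟨hL, hU⟩ := sel_spec y x1 x2 x3 g
  have g1 : (27:ℝ) ≤ 3*x1 - u1 := by have := g.hx1; linarith [hu1b.2]
  have g2 : (27:ℝ) ≤ 3*x2 - u2 := by have := g.hx2; linarith [hu2b.2]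
  have g3 : (27:ℝ) ≤ 3*x3 - u3 := by have := g.hx3; linarith [hu3b.2]
  have hD : (0:ℝ) < (3*x1 - u1) * ((3*x2 - u2) * (3*x3 - u3)) := by
    apply mul_pos (by linarith) (mul_pos (by linarith) (by linarith))
  unfold step
  dsimp only
  rw [← hu1, ← hu2, ← hu3]
  refine ⟨⟨g1, g2, g3, ?_, ?_, ?_, ?_, ?_, ?_, ?_, ?_⟩, ?_⟩
  · have := g.b12; linarith [hu1b.2, hu2b.1]
  · have := g.b13; linarith [hu1b.2, hu3b.1]
  · have := g.b21; linarith [hu2b.2, hu1b.1]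
  · have := g.b23; linarith [hu2b.2, hu3b.1]
  · have := g.b31; linarith [hu3b.2, hu1b.1]
  · have := g.b32; linarith [hu3b.2, hu2b.1]
  · rw [div_mul_cancel₀ _ (ne_of_gt hD)]
    exact hL
  · rw [div_le_one hD]
    exact hU
  · rw [div_mul_cancel₀ _ (ne_of_gt hD)]
    ring

noncomputable def st (y0 : ℝ) (k : ℕ) : ℕ → ℝ × ℝ × ℝ × ℝ
  | 0 => (y0, 3^k, 3^k, 3^k)
  | n+1 => step (st y0 k n)

noncomputable def yy (y0 : ℝ) (k : ℕ) (n : ℕ) : ℝ := (st y0 k n).1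
noncomputable def px1 (y0 : ℝ) (k : ℕ) (n : ℕ) : ℝ := (st y0 k n).2.1
noncomputable def px2 (y0 : ℝ) (k : ℕ) (n : ℕ) : ℝ := (st y0 k n).2.2.1
noncomputable def px3 (y0 : ℝ) (k : ℕ) (n : ℕ) : ℝ := (st y0 k n).2.2.2
noncomputable def uu1 (y0 : ℝ) (k : ℕ) (n : ℕ) : ℝ :=
  (sel (yy y0 k n) (px1 y0 k n) (px2 y0 k n) (px3 y0 k n)).1
noncomputable def uu2 (y0 : ℝ) (k : ℕ) (n : ℕ) : ℝ :=
  (sel (yy y0 k n) (px1 y0 k n) (px2 y0 k n) (px3 y0 k n)).2.1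
noncomputable def uu3 (y0 : ℝ) (k : ℕ) (n : ℕ) : ℝ :=
  (sel (yy y0 k n) (px1 y0 k n) (px2 y0 k n) (px3 y0 k n)).2.2

lemma px1_succ (y0 : ℝ) (k n : ℕ) : px1 y0 k (n+1) = 3 * px1 y0 k n - uu1 y0 k n := rfl
lemma px2_succ (y0 : ℝ) (k n : ℕ) : px2 y0 k (n+1) = 3 * px2 y0 k n - uu2 y0 k n := rfl
lemma px3_succ (y0 : ℝ) (k n : ℕ) : px3 y0 k (n+1) = 3 * px3 y0 k n - uu3 y0 k n := rfl

lemma uu1_mem (y0 : ℝ) (k : ℕ) (n : ℕ) : uu1 y0 k n = 0 ∨ uu1 y0 k n = 2 :=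
  (sel_mem _ _ _ _).1
lemma uu2_mem (y0 : ℝ) (k : ℕ) (n : ℕ) : uu2 y0 k n = 0 ∨ uu2 y0 k n = 2 :=
  (sel_mem _ _ _ _).2.1
lemma uu3_mem (y0 : ℝ) (k : ℕ) (n : ℕ) : uu3 y0 k n = 0 ∨ uu3 y0 k n = 2 :=
  (sel_mem _ _ _ _).2.2

section

variable (y0 : ℝ) (k : ℕ) (g0 : Good y0 (3^k) (3^k) (3^k))
include g0

lemma good_all : ∀ n, Good (yy y0 k n) (px1 y0 k n) (px2 y0 k n) (px3 y0 k n) := by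
  intro n
  induction n with
  | zero => exact g0
  | succ n ih => exact (good_step (st y0 k n) ih).1

noncomputable def HH (n : ℕ) : ℝ := yy y0 k n * (px1 y0 k n * (px2 y0 k n * px3 y0 k n))

lemma HH_succ (n : ℕ) : HH y0 k (n+1) = 27 * HH y0 k n :=
  (good_step (st y0 k n) (good_all y0 k g0 n)).2

lemma HH_pow (n : ℕ) : HH y0 k n = 27^n * HH y0 k 0 := by
  induction n with
  | zero => simp
  | succ n ih => rw [HH_succ y0 k g0 n, ih, pow_succ]; ring

end

/-! ### Tail sums -/

noncomputable def tail (u : ℕ → ℝ) (n : ℕ) : ℝ := ∑' m, u (n + m) / 3 ^ (m + 1)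

lemma two_div_pow_eq (m : ℕ) : (2:ℝ) / 3 ^ (m+1) = (2/3) * (1/3)^m := by
  rw [pow_succ, one_div, inv_pow]; field_simp

lemma summable_aux : Summable (fun m : ℕ => (2:ℝ) / 3 ^ (m+1)) := by
  have : Summable (fun m : ℕ => ((2:ℝ)/3) * (1/3)^m) :=
    (summable_geometric_of_lt_one (by norm_num) (by norm_num)).mul_left _
  exact this.congr (fun m => (two_div_pow_eq m).symm)

lemma tsum_two_div : ∑' m : ℕ, (2:ℝ) / 3 ^ (m+1) = 1 := by
  rw [tsum_congr two_div_pow_eq, tsum_mul_left,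
    tsum_geometric_of_lt_one (by norm_num) (by norm_num)]
  norm_num

section
variable {u : ℕ → ℝ} (hu : ∀ i, u i = 0 ∨ u i = 2)
include hu

lemma ubounds (i : ℕ) : 0 ≤ u i ∧ u i ≤ 2 := by
  rcases hu i with h | h <;> rw [h] <;> norm_num

lemma summable_tail (n : ℕ) : Summable (fun m : ℕ => u (n + m) / 3 ^ (m+1)) := by
  apply Summable.of_nonneg_of_le (fun m => by
      have := (ubounds hu (n+m)).1; positivity)
    (fun m => ?_) summable_aux
  gcongr
  exact (ubounds hu (n+m)).2

lemma tail_nonneg (n : ℕ) : 0 ≤ tail u n :=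
  tsum_nonneg (fun m => by have := (ubounds hu (n+m)).1; positivity)

lemma tail_le_one (n : ℕ) : tail u n ≤ 1 := by
  have h := Summable.tsum_le_tsum (f := fun m : ℕ => u (n + m) / 3 ^ (m+1))
    (g := fun m : ℕ => (2:ℝ) / 3 ^ (m+1)) (fun m => by
      show u (n + m) / 3 ^ (m+1) ≤ (2:ℝ) / 3 ^ (m+1)
      gcongr
      exact (ubounds hu (n+m)).2) (summable_tail hu n) summable_aux
  calc tail u n ≤ ∑' m : ℕ, (2:ℝ) / 3 ^ (m+1) := h
    _ = 1 := tsum_two_div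

lemma tail_shift (n : ℕ) : 3 * tail u n = u n + tail u (n + 1) := by
  have h := Summable.tsum_eq_zero_add (summable_tail hu n)
  have h2 : ∀ m : ℕ, u (n + (m + 1)) / 3 ^ (m + 1 + 1)
      = (1/3) * (u ((n+1) + m) / 3 ^ (m+1)) := by
    intro m
    rw [show n + (m+1) = (n+1) + m by omega, pow_succ]
    ring
  rw [tsum_congr h2, tsum_mul_left] at h
  unfold tail
  rw [h]
  norm_num
  ring

end

lemma geom_fin (k : ℕ) : ∑ i ∈ Finset.range k, (2:ℝ)/3^(i+1) = 1 - (1/3)^k := by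
  induction k with
  | zero => simp
  | succ n ih =>
    rw [Finset.sum_range_succ, ih, pow_succ, pow_succ]
    have : ((1:ℝ)/3)^n = 1/3^n := by rw [one_div, inv_pow, one_div]
    rw [this]
    have h3 : ((3:ℝ))^n ≠ 0 := by positivity
    field_simp
    ring

lemma one_sub_mem (u : ℕ → ℝ) (hu : ∀ i, u i = 0 ∨ u i = 2) (k : ℕ) :
    1 - (tail u 0) / 3^k ∈ middleThirdsCantor := by
  have hσ : tail u 0 = ∑' m, u m / 3^(m+1) := tsum_congr (fun m => by rw [zero_add])
  have hsu : Summable (fun m : ℕ => u m / 3^(m+1)) :=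
    (summable_tail hu 0).congr (fun m => by rw [zero_add])
  set t : ℕ → ℝ := fun i => if i < k then 2 else 2 - u (i-k) with ht
  have htmem : ∀ i, t i = 0 ∨ t i = 2 := by
    intro i
    by_cases h : i < k
    · right; simp [ht, h]
    · rcases hu (i-k) with h' | h'
      · right; simp [ht, h, h']
      · left; simp [ht, h, h']
  have htb : ∀ i, 0 ≤ t i ∧ t i ≤ 2 := ubounds htmem
  refine ⟨t, htmem, ?_⟩
  have hts : Summable (fun i : ℕ => t i / 3^(i+1)) :=
    (summable_tail htmem 0).congr (fun m => by rw [zero_add])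
  rw [← Summable.sum_add_tsum_nat_add k hts]
  have hfin : ∑ i ∈ Finset.range k, t i / 3^(i+1) = 1 - (1/3)^k := by
    rw [Finset.sum_congr rfl (fun i hi => by
      rw [show t i = 2 by simp [ht, Finset.mem_range.mp hi]])]
    exact geom_fin k
  have htail : ∀ i : ℕ, t (i+k) / 3^((i+k)+1) = (1/3^k) * ((2 - u i)/3^(i+1)) := by
    intro i
    have h1 : ¬ (i + k < k) := by omega
    have h2 : i + k - k = i := by omega
    rw [show t (i+k) = 2 - u i by simp [ht, h1, h2]]
    rw [show (i+k)+1 = k + (i+1) by omega, pow_add]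
    ring
  rw [tsum_congr htail, tsum_mul_left]
  have hsub : ∑' i : ℕ, ((2:ℝ) - u i)/3^(i+1) = 1 - ∑' m : ℕ, u m/3^(m+1) := by
    rw [tsum_congr (fun i => by
      show ((2:ℝ) - u i)/3^(i+1) = 2/3^(i+1) - u i/3^(i+1)
      ring)]
    rw [Summable.tsum_sub summable_aux hsu, tsum_two_div]
  rw [hsub, hfin, ← hσ]
  have hp : ((1:ℝ)/3)^k = 1/3^k := by rw [one_div, inv_pow, one_div]
  rw [hp]
  have h3 : ((3:ℝ))^k ≠ 0 := by positivity
  field_simp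
  ring

section

variable (y0 : ℝ) (k : ℕ)

noncomputable def GG (n : ℕ) : ℝ :=
  (px1 y0 k n - tail (uu1 y0 k) n) *
    ((px2 y0 k n - tail (uu2 y0 k) n) * (px3 y0 k n - tail (uu3 y0 k) n))

lemma GG_succ (n : ℕ) : GG y0 k (n+1) = 27 * GG y0 k n := by
  have e1 : px1 y0 k (n+1) - tail (uu1 y0 k) (n+1)
      = 3 * (px1 y0 k n - tail (uu1 y0 k) n) := by
    rw [px1_succ]; have := tail_shift (uu1_mem y0 k) n; linarith
  have e2 : px2 y0 k (n+1) - tail (uu2 y0 k) (n+1)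
      = 3 * (px2 y0 k n - tail (uu2 y0 k) n) := by
    rw [px2_succ]; have := tail_shift (uu2_mem y0 k) n; linarith
  have e3 : px3 y0 k (n+1) - tail (uu3 y0 k) (n+1)
      = 3 * (px3 y0 k n - tail (uu3 y0 k) n) := by
    rw [px3_succ]; have := tail_shift (uu3_mem y0 k) n; linarith
  unfold GG
  rw [e1, e2, e3]
  ring

lemma GG_pow (n : ℕ) : GG y0 k n = 27^n * GG y0 k 0 := by
  induction n with
  | zero => simp
  | succ n ih => rw [GG_succ y0 k n, ih, pow_succ]; ring

lemma px1_le (n : ℕ) : px1 y0 k n ≤ 3^(k+n) := by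
  induction n with
  | zero => simp [px1, st]
  | succ n ih =>
    rw [px1_succ, show k + (n+1) = (k+n) + 1 by omega, pow_succ]
    have := (ubounds (uu1_mem y0 k) n).1
    linarith

lemma px2_le (n : ℕ) : px2 y0 k n ≤ 3^(k+n) := by
  induction n with
  | zero => simp [px2, st]
  | succ n ih =>
    rw [px2_succ, show k + (n+1) = (k+n) + 1 by omega, pow_succ]
    have := (ubounds (uu2_mem y0 k) n).1
    linarith

lemma px3_le (n : ℕ) : px3 y0 k n ≤ 3^(k+n) := by
  induction n with
  | zero => simp [px3, st]
  | succ n ih =>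
    rw [px3_succ, show k + (n+1) = (k+n) + 1 by omega, pow_succ]
    have := (ubounds (uu3_mem y0 k) n).1
    linarith

variable (g0 : Good y0 (3^k) (3^k) (3^k))
include g0

lemma HG_bound (n : ℕ) : |HH y0 k n - GG y0 k n| ≤ 3 * ((3:ℝ)^(k+n))^2 := by
  obtain ⟨h1, h2, h3, _, _, _, _, _, _, hyl, hyu⟩ := good_all y0 k g0 n
  set a1 := px1 y0 k n
  set a2 := px2 y0 k n
  set a3 := px3 y0 k n
  set s1 := tail (uu1 y0 k) n
  set s2 := tail (uu2 y0 k) n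
  set s3 := tail (uu3 y0 k) n
  have hs1 : 0 ≤ s1 ∧ s1 ≤ 1 := ⟨tail_nonneg (uu1_mem y0 k) n, tail_le_one (uu1_mem y0 k) n⟩
  have hs2 : 0 ≤ s2 ∧ s2 ≤ 1 := ⟨tail_nonneg (uu2_mem y0 k) n, tail_le_one (uu2_mem y0 k) n⟩
  have hs3 : 0 ≤ s3 ∧ s3 ≤ 1 := ⟨tail_nonneg (uu3_mem y0 k) n, tail_le_one (uu3_mem y0 k) n⟩
  set M : ℝ := 3^(k+n) with hM
  have hM1 : a1 ≤ M := px1_le y0 k n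
  have hM2 : a2 ≤ M := px2_le y0 k n
  have hM3 : a3 ≤ M := px3_le y0 k n
  have hP : (0:ℝ) < a1 * (a2 * a3) := by
    apply mul_pos (by linarith) (mul_pos (by linarith) (by linarith))
  have hHle : HH y0 k n ≤ a1 * (a2 * a3) := by
    have : HH y0 k n = yy y0 k n * (a1 * (a2 * a3)) := rfl
    rw [this]
    nlinarith [mul_nonneg (by linarith : (0:ℝ) ≤ 1 - yy y0 k n) hP.le]
  have hHge : (a1-1)*((a2-1)*(a3-1)) ≤ HH y0 k n := hyl
  have hGle : GG y0 k n ≤ a1 * (a2 * a3) := by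
    have : GG y0 k n = (a1 - s1) * ((a2 - s2) * (a3 - s3)) := rfl
    rw [this]
    apply mul_le_mul (by linarith)
      (mul_le_mul (by linarith) (by linarith) (by linarith) (by linarith))
      (mul_nonneg (by linarith) (by linarith)) (by linarith)
  have hGge : (a1-1)*((a2-1)*(a3-1)) ≤ GG y0 k n := by
    have : GG y0 k n = (a1 - s1) * ((a2 - s2) * (a3 - s3)) := rfl
    rw [this]
    apply mul_le_mul (by linarith)
      (mul_le_mul (by linarith) (by linarith) (by linarith) (by linarith))
      (mul_nonneg (by linarith) (by linarith)) (by linarith)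
  have e12 : a1 * a2 ≤ M * M :=
    mul_le_mul hM1 hM2 (by linarith) (by linarith)
  have e13 : a1 * a3 ≤ M * M :=
    mul_le_mul hM1 hM3 (by linarith) (by linarith)
  have e23 : a2 * a3 ≤ M * M :=
    mul_le_mul hM2 hM3 (by linarith) (by linarith)
  have hdiff : a1 * (a2 * a3) - (a1-1)*((a2-1)*(a3-1)) ≤ 3 * M^2 := by
    nlinarith [e12, e13, e23]
  rw [abs_le]
  constructor
  · linarith [hdiff, hGle, hHge]
  · linarith [hdiff, hHle, hGge]

lemma HG_eq : HH y0 k 0 = GG y0 k 0 := by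
  have key : ∀ n : ℕ, |HH y0 k 0 - GG y0 k 0| ≤ 3 * 9^k * (1/3)^n := by
    intro n
    have h27 : (0:ℝ) < 27^n := by positivity
    refine le_of_mul_le_mul_right ?_ h27
    have h1 : |HH y0 k 0 - GG y0 k 0| * 27^n = |HH y0 k n - GG y0 k n| := by
      rw [HH_pow y0 k g0 n, GG_pow y0 k n, ← mul_sub, abs_mul]
      rw [abs_of_pos (by positivity : (0:ℝ) < (27:ℝ)^n)]
      ring
    rw [h1]
    calc |HH y0 k n - GG y0 k n| ≤ 3 * ((3:ℝ)^(k+n))^2 := HG_bound y0 k g0 n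
      _ = 3 * 9^k * 9^n := by
          rw [← pow_mul, show (k+n)*2 = 2*k + 2*n by ring, pow_add, pow_mul, pow_mul]
          norm_num
          ring
      _ = 3 * 9^k * (1/3)^n * 27^n := by
          rw [mul_assoc (3 * (9:ℝ)^k), ← mul_pow]
          norm_num
  have hc : |HH y0 k 0 - GG y0 k 0| = 0 := by
    by_contra hne
    have hc0 : 0 < |HH y0 k 0 - GG y0 k 0| :=
      lt_of_le_of_ne (abs_nonneg _) (Ne.symm hne)
    have hD : (0:ℝ) < 3 * 9^k := by positivity
    obtain ⟨n, hn⟩ := exists_pow_lt_of_lt_one (div_pos hc0 hD) (by norm_num : (1:ℝ)/3 < 1)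
    rw [lt_div_iff₀ hD] at hn
    have := key n
    linarith
  have := abs_eq_zero.mp hc
  linarith

end
end MTCaux

open MTCaux in
theorem Icc_subset_fourfold_cantor_product_general (k : ℕ) (hk : 3 ≤ k) :
    Set.Icc ((((3 : ℝ) ^ k - 1) / 3 ^ k) ^ 3) (((3 : ℝ) ^ k - 1) / 3 ^ k) ⊆
      {x : ℝ | ∃ x₁ ∈ middleThirdsCantor, ∃ x₂ ∈ middleThirdsCantor,
        ∃ x₃ ∈ middleThirdsCantor, ∃ x₄ ∈ middleThirdsCantor,
          x = x₁ * x₂ * x₃ * x₄} := by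
  intro x hx
  obtain ⟨hxl, hxu⟩ := hx
  have hp : (0:ℝ) < 3^k := by positivity
  have h27 : (27:ℝ) ≤ 3^k := by
    calc (27:ℝ) = 3^3 := by norm_num
      _ ≤ 3^k := pow_le_pow_right₀ (by norm_num) hk
  -- initial invariant
  have g0 : Good x ((3:ℝ)^k) ((3:ℝ)^k) ((3:ℝ)^k) := by
    refine ⟨h27, h27, h27, by linarith, by linarith, by linarith, by linarith,
      by linarith, by linarith, ?_, ?_⟩
    · rw [div_pow, div_le_iff₀ (by positivity : (0:ℝ) < ((3:ℝ)^k)^3)] at hxl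
      nlinarith [hxl]
    · calc x ≤ ((3:ℝ)^k - 1)/3^k := hxu
        _ ≤ 1 := by rw [div_le_one hp]; linarith
  -- digit sequences
  have hu1 := uu1_mem x k
  have hu2 := uu2_mem x k
  have hu3 := uu3_mem x k
  set σ1 := tail (uu1 x k) 0 with hσ1
  set σ2 := tail (uu2 x k) 0 with hσ2
  set σ3 := tail (uu3 x k) 0 with hσ3
  have hHG := HG_eq x k g0
  have hH0 : HH x k 0 = x * ((3:ℝ)^k * ((3:ℝ)^k * (3:ℝ)^k)) := rfl
  have hG0 : GG x k 0 = ((3:ℝ)^k - σ1) * (((3:ℝ)^k - σ2) * ((3:ℝ)^k - σ3)) := rfl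
  refine ⟨1 - σ1/3^k, one_sub_mem _ hu1 k, 1 - σ2/3^k, one_sub_mem _ hu2 k,
    1 - σ3/3^k, one_sub_mem _ hu3 k, 1, ?_, ?_⟩
  · -- 1 ∈ middleThirdsCantor
    have h0 : (fun _ : ℕ => (0:ℝ)) = (fun _ : ℕ => (0:ℝ)) := rfl
    have := one_sub_mem (fun _ => 0) (fun _ => Or.inl rfl) 0
    have ht0 : tail (fun _ : ℕ => (0:ℝ)) 0 = 0 := by
      unfold tail; simp
    rw [ht0] at this
    simpa using this
  · -- the product identity
    rw [hH0, hG0] at hHG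
    have h3 : ((3:ℝ))^k ≠ 0 := ne_of_gt hp
    field_simp
    linear_combination hHG
end
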